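/- arXiv:1212.6756 — 8 statements merged into one kernel-verified Lean document; each statement's English description precedes it below -/
import Mathlib

section
/- For any hypergraph H, the separation dimension of H equals the boxicity of the line graph of H, i.e., π(H) = boxicity(L(H)). -/
open Finset in
lemma exists_sorted_equiv {V : Type*} [Fintype V] (m : V → ℝ) :
    ∃ σ : V ≃ Fin (Fintype.card V), ∀ u w : V, m u < m w → σ u < σ w := by
  classical
  let e₀ := Fintype.equivFin V
  let key : V → ℝ ×ₗ Fin (Fintype.card V) := fun v => toLex (m v, e₀ v)
  have hinj : Function.Injective key := by
    intro a b h
    have h2 := congrArg (fun p => (ofLex p).2) h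
    exact e₀.injective h2
  letI : LinearOrder V := LinearOrder.lift' key hinj
  have hle : ∀ a b : V, a ≤ b ↔ key a ≤ key b := fun a b => Iff.rfl
  have hlt : ∀ a b : V, a < b ↔ key a < key b := by
    intro a b
    rw [lt_iff_le_not_ge, lt_iff_le_not_ge, hle, hle]
  let σ := (monoEquivOfFin V rfl).symm
  refine ⟨σ.toEquiv, fun u w h => ?_⟩
  have : u < w := (hlt u w).2 (Prod.Lex.left _ _ h)
  exact σ.lt_iff_lt.2 this


/-- A permutation `σ` separates two finsets `A`, `B`: all of `A` comes before
all of `B`, or vice versa. -/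
def SepF {V : Type*} {n : ℕ} (σ : V ≃ Fin n) (A B : Finset V) : Prop :=
  (∀ a ∈ A, ∀ b ∈ B, σ a < σ b) ∨ (∀ a ∈ A, ∀ b ∈ B, σ b < σ a)

/-- The separation dimension of a hypergraph with edge family `E`: the minimum
size of a family of permutations of the vertex set separating every pair of
disjoint edges. -/
noncomputable def sepDimH {V : Type*} [Fintype V] (E : Finset (Finset V)) : ℕ :=
  sInf {k : ℕ | ∃ F : Fin k → (V ≃ Fin (Fintype.card V)),
    ∀ e ∈ E, ∀ f ∈ E, e ≠ f → Disjoint e f → ∃ i, SepF (F i) e f}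

/-- `l`, `r` give an axis-parallel `k`-box representation of `G`. -/
def IsBoxRep {W : Type*} (G : SimpleGraph W) (k : ℕ)
    (l r : W → Fin k → ℝ) : Prop :=
  (∀ v i, l v i ≤ r v i) ∧
  ∀ u v : W, u ≠ v →
    (G.Adj u v ↔ ∀ i, max (l u i) (l v i) ≤ min (r u i) (r v i))

/-- The boxicity of a graph: the least `k` admitting a `k`-box representation. -/
noncomputable def boxicity {W : Type*} (G : SimpleGraph W) : ℕ :=
  sInf {k : ℕ | ∃ l r : W → Fin k → ℝ, IsBoxRep G k l r}

/-- For any hypergraph `H`, the separation dimension of `H` equals the boxicity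
of the line graph of `H` (whose vertices are the edges of `H`, two of them
adjacent iff they intersect). -/
theorem stmt1 {V : Type*} [Fintype V] [DecidableEq V] (E : Finset (Finset V))
    (L : SimpleGraph {e : Finset V // e ∈ E})
    (hL : ∀ e f : {e : Finset V // e ∈ E},
      L.Adj e f ↔ e ≠ f ∧ ¬ Disjoint e.1 f.1) :
    sepDimH E = boxicity L := by

  classical
  unfold sepDimH boxicity
  congr 1
  ext k
  simp only [Set.mem_setOf_eq]
  constructor
  · rintro ⟨F, hF⟩
    set g : Fin k → V → ℝ := fun i v => ((F i v : ℕ) : ℝ) with hg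
    refine ⟨fun e i => if h : e.1.Nonempty then e.1.inf' h (g i) else -1,
            fun e i => if h : e.1.Nonempty then e.1.sup' h (g i) else -1, ?_, ?_⟩
    · intro e i
      by_cases h : e.1.Nonempty
      · simp only [dif_pos h]
        obtain ⟨v, hv⟩ := h
        exact le_trans (Finset.inf'_le _ hv) (Finset.le_sup' _ hv)
      · simp [dif_neg h]
    · intro e f hef
      rw [hL]
      have hne1 : e.1 ≠ f.1 := fun h => hef (Subtype.ext h)
      constructor
      · rintro ⟨-, hnd⟩ i
        obtain ⟨v, hve, hvf⟩ := Finset.not_disjoint_iff.1 hnd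
        have he : e.1.Nonempty := ⟨v, hve⟩
        have hf : f.1.Nonempty := ⟨v, hvf⟩
        simp only [dif_pos he, dif_pos hf]
        exact le_trans (max_le (Finset.inf'_le _ hve) (Finset.inf'_le _ hvf))
          (le_min (Finset.le_sup' _ hve) (Finset.le_sup' _ hvf))
      · intro hbox
        refine ⟨hef, ?_⟩
        intro hd
        obtain ⟨i, hi⟩ := hF e.1 e.2 f.1 f.2 hne1 hd
        have hb := hbox i
        by_cases he : e.1.Nonempty
        · by_cases hf : f.1.Nonempty
          · simp only [dif_pos he, dif_pos hf] at hb
            rcases hi with h1 | h1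
            · have hlt : e.1.sup' he (g i) < f.1.inf' hf (g i) := by
                rw [Finset.sup'_lt_iff]
                intro a ha
                rw [Finset.lt_inf'_iff]
                intro b hb'
                simp only [hg]
                exact_mod_cast Fin.lt_iff_val_lt_val.1 (h1 a ha b hb')
              exact absurd hb (not_le.2 ((min_le_left _ _).trans_lt
                (hlt.trans_le (le_max_right _ _))))
            · have hlt : f.1.sup' hf (g i) < e.1.inf' he (g i) := by
                rw [Finset.sup'_lt_iff]
                intro b hb'
                rw [Finset.lt_inf'_iff]
                intro a ha
                simp only [hg]
                exact_mod_cast Fin.lt_iff_val_lt_val.1 (h1 a ha b hb')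
              exact absurd hb (not_le.2 ((min_le_right _ _).trans_lt
                (hlt.trans_le (le_max_left _ _))))
          · simp only [dif_pos he, dif_neg hf] at hb
            have h0 : (0 : ℝ) ≤ e.1.inf' he (g i) :=
              Finset.le_inf' _ _ (fun v _ => by positivity)
            have := le_trans (le_max_left _ _) (hb.trans (min_le_right _ _))
            linarith
        · have hf : f.1.Nonempty := by
            rcases Finset.eq_empty_or_nonempty f.1 with h | h
            · exact absurd (h.trans (Finset.not_nonempty_iff_eq_empty.1 he).symm).symm hne1
            · exact h
          simp only [dif_neg he, dif_pos hf] at hb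
          have h0 : (0 : ℝ) ≤ f.1.inf' hf (g i) :=
            Finset.le_inf' _ _ (fun v _ => by positivity)
          have := le_trans (le_max_right _ _) (hb.trans (min_le_left _ _))
          linarith
  · rintro ⟨l, r, hlr, hadj⟩
    have key : ∀ i : Fin k, ∃ σ : V ≃ Fin (Fintype.card V),
        ∀ (e f : {e : Finset V // e ∈ E}), r e i < l f i →
          ∀ u ∈ e.1, ∀ w ∈ f.1, σ u < σ w := by
      intro i
      let m : V → ℝ := fun v =>
        if h : (E.attach.filter (fun g => v ∈ g.1)).Nonempty
        then (E.attach.filter (fun g => v ∈ g.1)).sup' h (fun g => l g i) else 0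
      obtain ⟨σ, hσ⟩ := exists_sorted_equiv m
      refine ⟨σ, fun e f hrl u hu w hw => ?_⟩
      apply hσ
      have hTu : (E.attach.filter (fun g => u ∈ g.1)).Nonempty :=
        ⟨e, Finset.mem_filter.2 ⟨Finset.mem_attach _ _, hu⟩⟩
      have hTw : (E.attach.filter (fun g => w ∈ g.1)).Nonempty :=
        ⟨f, Finset.mem_filter.2 ⟨Finset.mem_attach _ _, hw⟩⟩
      have h1 : m u ≤ r e i := by
        show dite _ _ _ ≤ _
        rw [dif_pos hTu]
        apply Finset.sup'_le
        intro g hg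
        have hug : u ∈ g.1 := (Finset.mem_filter.1 hg).2
        by_cases hge : g = e
        · subst hge; exact hlr g i
        · have hadj' : L.Adj g e := (hL g e).2 ⟨hge, Finset.not_disjoint_iff.2 ⟨u, hug, hu⟩⟩
          have := ((hadj g e hge).1 hadj') i
          exact le_trans (le_trans (le_max_left _ _) this) (min_le_right _ _)
      have h2 : l f i ≤ m w := by
        show _ ≤ dite _ _ _
        rw [dif_pos hTw]
        exact Finset.le_sup' (fun g => l g i) (Finset.mem_filter.2 ⟨Finset.mem_attach _ _, hw⟩)
      linarith
    choose σ hσ using key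
    refine ⟨σ, ?_⟩
    intro e he f hf hne hd
    have hsubne : (⟨e, he⟩ : {e : Finset V // e ∈ E}) ≠ ⟨f, hf⟩ :=
      fun h => hne (congrArg Subtype.val h)
    have hnadj : ¬ L.Adj ⟨e, he⟩ ⟨f, hf⟩ := fun h => ((hL _ _).1 h).2 hd
    have hx : ¬ ∀ i, max (l ⟨e,he⟩ i) (l ⟨f,hf⟩ i) ≤ min (r ⟨e,he⟩ i) (r ⟨f,hf⟩ i) :=
      fun h => hnadj ((hadj _ _ hsubne).2 h)
    push_neg at hx
    obtain ⟨i, hi⟩ := hx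
    refine ⟨i, ?_⟩
    rcases lt_or_ge (r ⟨e,he⟩ i) (l ⟨f,hf⟩ i) with h | h
    · exact Or.inl (fun a ha b hb => hσ i ⟨e,he⟩ ⟨f,hf⟩ h a ha b hb)
    · have h' : r ⟨f,hf⟩ i < l ⟨e,he⟩ i := by
        have h1 := hlr ⟨e,he⟩ i
        have h2 := hlr ⟨f,hf⟩ i
        by_contra hc
        push_neg at hc
        exact absurd (max_le (le_min h1 hc) (le_min h h2)) (not_le.2 hi)
      exact Or.inr (fun a ha b hb => hσ i ⟨f,hf⟩ ⟨e,he⟩ h' b hb a ha)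
end

section
/- For any rank-r hypergraph H on n vertices, π(H) ≤ (e·ln 2/(π√2)) · 4^r · √r · log₂ n. -/
/-- canonical "push s below t" map -/
def gAux {N : ℕ} (s t : Finset (Fin N)) : Fin N → Fin N := fun y =>
  if y ∈ s then (((s ∪ t).sort (·≤·)).take s.card).getD ((s.sort (·≤·)).idxOf y) y
  else if y ∈ t then (((s ∪ t).sort (·≤·)).drop s.card).getD ((t.sort (·≤·)).idxOf y) y
  else y

namespace gAux
open Finset List
variable {N : ℕ} {s t : Finset (Fin N)} {y y₁ y₂ : Fin N}

lemma take_len : (((s ∪ t).sort (·≤·)).take s.card).length = s.card := by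
  rw [List.length_take, Finset.length_sort, min_eq_left (card_le_card subset_union_left)]

lemma drop_len (hd : Disjoint s t) :
    (((s ∪ t).sort (·≤·)).drop s.card).length = t.card := by
  rw [List.length_drop, Finset.length_sort, card_union_of_disjoint hd]; omega

lemma mem_s (hy : y ∈ s) :
    gAux s t y ∈ ((s ∪ t).sort (·≤·)).take s.card := by
  have hidx : (s.sort (·≤·)).idxOf y < (((s ∪ t).sort (·≤·)).take s.card).length := by
    rw [take_len]
    simpa using List.idxOf_lt_length_iff.2 ((Finset.mem_sort (α := Fin N) (·≤·)).2 hy)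
  rw [gAux, if_pos hy, List.getD_eq_getElem _ _ hidx]
  exact List.getElem_mem _

lemma mem_t (hd : Disjoint s t) (hy : y ∈ t) :
    gAux s t y ∈ ((s ∪ t).sort (·≤·)).drop s.card := by
  have hys : y ∉ s := fun h => (Finset.disjoint_left.1 hd) h hy
  have hidx : (t.sort (·≤·)).idxOf y < (((s ∪ t).sort (·≤·)).drop s.card).length := by
    rw [drop_len hd]
    simpa using List.idxOf_lt_length_iff.2 ((Finset.mem_sort (α := Fin N) (·≤·)).2 hy)
  rw [gAux, if_neg hys, if_pos hy, List.getD_eq_getElem _ _ hidx]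
  exact List.getElem_mem _

lemma apply_id (h1 : y ∉ s) (h2 : y ∉ t) : gAux s t y = y := by
  rw [gAux, if_neg h1, if_neg h2]

lemma take_lt_drop {α β : Fin N}
    (hα : α ∈ ((s ∪ t).sort (·≤·)).take s.card)
    (hβ : β ∈ ((s ∪ t).sort (·≤·)).drop s.card) : α < β := by
  obtain ⟨i, hi, hiα⟩ := List.getElem_of_mem hα
  obtain ⟨j, hj, hjβ⟩ := List.getElem_of_mem hβ
  rw [List.getElem_take] at hiα
  rw [List.getElem_drop] at hjβ
  rw [take_len] at hi
  have hlenP : ((s ∪ t).sort (·≤·)).length = (s ∪ t).card := Finset.length_sort _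
  have hsc : s.card ≤ (s ∪ t).card := Finset.card_le_card Finset.subset_union_left
  have hj' : j < (s ∪ t).card - s.card := by
    simpa [List.length_drop, hlenP] using hj
  have hs := (Finset.sortedLT_sort (s ∪ t)).pairwise
  rw [List.pairwise_iff_getElem] at hs
  have := hs i (s.card + j) (by omega) (by omega) (by omega)
  rw [hiα, hjβ] at this
  exact this

lemma mem_union_of_take (hα : α ∈ ((s ∪ t).sort (·≤·)).take s.card) : α ∈ s ∪ t :=
  (Finset.mem_sort (α := Fin N) (·≤·)).1 (List.mem_of_mem_take hα)

lemma mem_union_of_drop (hα : α ∈ ((s ∪ t).sort (·≤·)).drop s.card) : α ∈ s ∪ t :=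
  (Finset.mem_sort (α := Fin N) (·≤·)).1 (List.mem_of_mem_drop hα)

lemma injective (hd : Disjoint s t) : Function.Injective (gAux s t) := by
  intro y₁ y₂ hg
  by_cases h1s : y₁ ∈ s <;> by_cases h2s : y₂ ∈ s
  · -- both in s
    have hidx1 : (s.sort (·≤·)).idxOf y₁ < (((s ∪ t).sort (·≤·)).take s.card).length := by
      rw [take_len]; simpa using List.idxOf_lt_length_iff.2 ((Finset.mem_sort (α := Fin N) (·≤·)).2 h1s)
    have hidx2 : (s.sort (·≤·)).idxOf y₂ < (((s ∪ t).sort (·≤·)).take s.card).length := by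
      rw [take_len]; simpa using List.idxOf_lt_length_iff.2 ((Finset.mem_sort (α := Fin N) (·≤·)).2 h2s)
    rw [gAux, gAux, if_pos h1s, if_pos h2s, List.getD_eq_getElem _ _ hidx1,
      List.getD_eq_getElem _ _ hidx2] at hg
    have hnd : (((s ∪ t).sort (·≤·)).take s.card).Nodup :=
      (List.take_sublist _ _).nodup (Finset.sort_nodup _ _)
    have := (List.Nodup.getElem_inj_iff hnd).1 hg
    have := List.idxOf_inj ((Finset.mem_sort (α := Fin N) (·≤·)).2 h1s)
      |>.1 this
    exact this
  · by_cases h2t : y₂ ∈ t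
    · exact absurd hg (ne_of_lt (take_lt_drop (mem_s h1s) (mem_t hd h2t)))
    · exfalso
      rw [apply_id h2s h2t] at hg
      have : y₂ ∈ s ∪ t := mem_union_of_take (by rw [← hg]; exact mem_s h1s)
      simp only [Finset.mem_union] at this
      tauto
  · by_cases h1t : y₁ ∈ t
    · exact absurd hg (ne_of_gt (take_lt_drop (mem_s h2s) (mem_t hd h1t)))
    · exfalso
      rw [apply_id h1s h1t] at hg
      have : y₁ ∈ s ∪ t := mem_union_of_take (by rw [hg]; exact mem_s h2s)
      simp only [Finset.mem_union] at this
      tauto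
  · by_cases h1t : y₁ ∈ t <;> by_cases h2t : y₂ ∈ t
    · -- both in t
      have hidx1 : (t.sort (·≤·)).idxOf y₁ < (((s ∪ t).sort (·≤·)).drop s.card).length := by
        rw [drop_len hd]
        simpa using List.idxOf_lt_length_iff.2 ((Finset.mem_sort (α := Fin N) (·≤·)).2 h1t)
      have hidx2 : (t.sort (·≤·)).idxOf y₂ < (((s ∪ t).sort (·≤·)).drop s.card).length := by
        rw [drop_len hd]
        simpa using List.idxOf_lt_length_iff.2 ((Finset.mem_sort (α := Fin N) (·≤·)).2 h2t)
      rw [gAux, gAux, if_neg h1s, if_neg h2s, if_pos h1t, if_pos h2t,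
        List.getD_eq_getElem _ _ hidx1, List.getD_eq_getElem _ _ hidx2] at hg
      have hnd : (((s ∪ t).sort (·≤·)).drop s.card).Nodup :=
        (List.drop_sublist _ _).nodup (Finset.sort_nodup _ _)
      have := (List.Nodup.getElem_inj_iff hnd).1 hg
      exact (List.idxOf_inj ((Finset.mem_sort (α := Fin N) (·≤·)).2 h1t)).1 this
    · exfalso
      rw [apply_id h2s h2t] at hg
      have : y₂ ∈ s ∪ t := mem_union_of_drop (by rw [← hg]; exact mem_t hd h1t)
      simp only [Finset.mem_union] at this
      tauto
    · exfalso
      rw [apply_id h1s h1t] at hg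
      have : y₁ ∈ s ∪ t := mem_union_of_drop (by rw [hg]; exact mem_t hd h2t)
      simp only [Finset.mem_union] at this
      tauto
    · rw [apply_id h1s h1t, apply_id h2s h2t] at hg
      exact hg

/-- the key ordering property -/
lemma lt_of_mem (hd : Disjoint s t) (h1 : y₁ ∈ s) (h2 : y₂ ∈ t) :
    gAux s t y₁ < gAux s t y₂ :=
  take_lt_drop (mem_s h1) (mem_t hd h2)

/-- image of the union is the union -/
lemma image_union (hd : Disjoint s t) :
    (s ∪ t).image (gAux s t) = s ∪ t := by
  apply Finset.eq_of_subset_of_card_le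
  · intro α hα
    simp only [Finset.mem_image] at hα
    obtain ⟨y, hy, rfl⟩ := hα
    rcases Finset.mem_union.1 hy with h | h
    · exact mem_union_of_take (mem_s h)
    · exact mem_union_of_drop (mem_t hd h)
  · rw [Finset.card_image_of_injective _ (injective hd)]

end gAux

open Finset in
lemma card_good {V : Type*} [Fintype V] [DecidableEq V] (e f : Finset V)
    (hd : Disjoint e f)
    [DecidablePred (fun σ : V ≃ Fin (Fintype.card V) =>
       ∀ x ∈ e, ∀ y ∈ f, σ x < σ y)] :
    Fintype.card (V ≃ Fin (Fintype.card V)) ≤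
      ((e.card + f.card).choose e.card) *
        (Finset.univ.filter (fun σ : V ≃ Fin (Fintype.card V) =>
          ∀ x ∈ e, ∀ y ∈ f, σ x < σ y)).card := by
  letI : DecidableEq (V ≃ Fin (Fintype.card V)) := Classical.decEq _
  have hdi : ∀ σ : V ≃ Fin (Fintype.card V), Disjoint (e.image σ) (f.image σ) := fun σ =>
    (Finset.disjoint_image σ.injective).2 hd
  set Φ : (V ≃ Fin (Fintype.card V)) → (V ≃ Fin (Fintype.card V)) := fun σ =>
    σ.trans (Equiv.ofBijective _ ((Finite.injective_iff_bijective).1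
      (gAux.injective (hdi σ)))) with hΦ
  have hΦ_apply : ∀ (σ : V ≃ Fin (Fintype.card V)) (x : V),
      Φ σ x = gAux (e.image σ) (f.image σ) (σ x) := fun σ x => rfl
  -- image of e ∪ f is preserved
  have hP : ∀ σ : V ≃ Fin (Fintype.card V), (e ∪ f).image (Φ σ) = (e ∪ f).image σ := by
    intro σ
    have : (e ∪ f).image (Φ σ) = ((e ∪ f).image σ).image
        (gAux (e.image σ) (f.image σ)) := by
      rw [Finset.image_image]; rfl
    rw [this, Finset.image_union, gAux.image_union (hdi σ), ← Finset.image_union]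
  -- every Φ σ is good
  have hgood : ∀ σ : V ≃ Fin (Fintype.card V), Φ σ ∈ Finset.univ.filter
      (fun σ : V ≃ Fin (Fintype.card V) => ∀ x ∈ e, ∀ y ∈ f, σ x < σ y) := by
    intro σ
    rw [Finset.mem_filter]
    refine ⟨Finset.mem_univ _, fun x hx y hy => ?_⟩
    rw [hΦ_apply, hΦ_apply]
    exact gAux.lt_of_mem (hdi σ) (Finset.mem_image_of_mem σ hx)
      (Finset.mem_image_of_mem σ hy)
  -- fibers of Φ have size at most choose
  have hfiber : ∀ σ' ∈ Finset.univ.image Φ,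
      (Finset.univ.filter (fun σ => Φ σ = σ')).card ≤
        (e.card + f.card).choose e.card := by
    intro σ' _
    have hcP : ((e ∪ f).image σ').card = e.card + f.card := by
      rw [Finset.card_image_of_injective _ σ'.injective,
        Finset.card_union_of_disjoint hd]
    calc (Finset.univ.filter (fun σ => Φ σ = σ')).card
        ≤ (((e ∪ f).image σ').powersetCard e.card).card := by
          refine Finset.card_le_card_of_injOn (fun σ => e.image σ) ?_ ?_
          · -- maps to
            intro σ hσ
            rw [Finset.mem_coe, Finset.mem_filter] at hσ
            rw [Finset.mem_coe, Finset.mem_powersetCard]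
            constructor
            · rw [← hσ.2, hP σ]
              exact Finset.image_subset_image Finset.subset_union_left
            · exact Finset.card_image_of_injective _ σ.injective
          · -- inj on
            intro σ₁ h₁ σ₂ h₂ himg
            simp only at himg
            rw [Finset.mem_coe, Finset.mem_filter] at h₁ h₂
            have hP12 : (e ∪ f).image σ₁ = (e ∪ f).image σ₂ := by
              rw [← hP σ₁, ← hP σ₂, h₁.2, h₂.2]
            have htf : f.image σ₁ = f.image σ₂ := by
              have key : ∀ σ : V ≃ Fin (Fintype.card V), f.image σ = ((e ∪ f).image σ) \ e.image σ := by
                intro σ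
                rw [Finset.image_union]
                exact (Finset.union_sdiff_cancel_left (hdi σ)).symm
              rw [key σ₁, key σ₂, hP12, himg]
            have hgeq : ∀ x : V, gAux (e.image σ₁) (f.image σ₁) (σ₁ x)
                = gAux (e.image σ₁) (f.image σ₁) (σ₂ x) := by
              intro x
              conv_rhs => rw [himg, htf]
              rw [← hΦ_apply, ← hΦ_apply, h₁.2, h₂.2]
            apply Equiv.ext
            intro x
            exact gAux.injective (hdi σ₁) (hgeq x)
      _ = (e.card + f.card).choose e.card := by
          rw [Finset.card_powersetCard, hcP]
  calc Fintype.card (V ≃ Fin (Fintype.card V)) = (Finset.univ : Finset (V ≃ Fin (Fintype.card V))).card :=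
        (Finset.card_univ).symm
    _ ≤ (e.card + f.card).choose e.card * (Finset.univ.image Φ).card :=
        Finset.card_le_mul_card_image _ _ hfiber
    _ ≤ _ := by
        apply Nat.mul_le_mul_left
        apply Finset.card_le_card
        intro σ' hσ'
        rw [Finset.mem_image] at hσ'
        obtain ⟨σ, _, rfl⟩ := hσ'
        have h := Finset.mem_filter.1 (hgood σ)
        exact Finset.mem_filter.2 ⟨h.1, h.2⟩

open Finset in
lemma edges_card_le {V : Type*} [Fintype V] [DecidableEq V] {E : Finset (Finset V)} {r : ℕ}
    (hne : ∀ e ∈ E, e.Nonempty) (hrank : ∀ e ∈ E, e.card ≤ r) :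
    E.card ≤ Fintype.card V ^ r := by
  rcases E.eq_empty_or_nonempty with rfl | ⟨e₀, he₀⟩
  · simp
  obtain ⟨x₀, -⟩ := hne e₀ he₀
  set ψ : Finset V → (Fin r → V) :=
    fun e i => e.toList.getD ((i : ℕ) % e.toList.length) x₀ with hψ
  have hrec : ∀ e ∈ E, (List.ofFn (ψ e)).toFinset = e := by
    intro e heE
    have hlen : e.toList.length = e.card := Finset.length_toList _
    have hpos : 0 < e.toList.length := by
      rw [hlen, Finset.card_pos]; exact hne e heE
    ext x
    simp only [List.mem_toFinset, List.mem_ofFn]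
    constructor
    · rintro ⟨i, rfl⟩
      have hi : (i : ℕ) % e.toList.length < e.toList.length := Nat.mod_lt _ hpos
      rw [hψ]
      simp only []
      rw [List.getD_eq_getElem _ _ hi]
      exact Finset.mem_toList.1 (List.getElem_mem _)
    · intro hx
      have hx' : x ∈ e.toList := Finset.mem_toList.2 hx
      obtain ⟨i, hi, hix⟩ := List.getElem_of_mem hx'
      have hir : i < r := lt_of_lt_of_le (hlen ▸ hi) (hrank e heE)
      refine ⟨⟨i, hir⟩, ?_⟩
      rw [hψ]
      simp only []
      rw [Nat.mod_eq_of_lt hi, List.getD_eq_getElem _ _ hi, hix]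
  calc E.card ≤ (Finset.univ : Finset (Fin r → V)).card := by
        refine Finset.card_le_card_of_injOn ψ (fun _ _ => Finset.mem_univ _) ?_
        intro e₁ h₁ e₂ h₂ hψeq
        rw [← hrec e₁ h₁, ← hrec e₂ h₂, hψeq]
    _ = Fintype.card V ^ r := by
        rw [Finset.card_univ, Fintype.card_fun, Fintype.card_fin]

open Finset in
lemma exists_good_family {V : Type*} [Fintype V] [DecidableEq V]
    (E : Finset (Finset V)) (r k : ℕ)
    (hne : ∀ e ∈ E, e.Nonempty) (hrank : ∀ e ∈ E, e.card ≤ r)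
    (hlt : ((Fintype.card V : ℝ) ^ r) ^ 2 / 2 *
      (1 - 2 / (Nat.centralBinom r : ℝ)) ^ k < 1)
    (hCB : (2 : ℝ) ≤ (Nat.centralBinom r : ℝ)) :
    ∃ F : Fin k → (V ≃ Fin (Fintype.card V)),
      ∀ e ∈ E, ∀ f ∈ E, e ≠ f → Disjoint e f → ∃ i, SepF (F i) e f := by
  classical
  set n := Fintype.card V
  set N := Fintype.card (V ≃ Fin n) with hNdef
  have hN : 0 < N := Fintype.card_pos_iff.2 ⟨Fintype.equivFin V⟩
  set φ : Finset V ≃ Fin (Fintype.card (Finset V)) := Fintype.equivFin (Finset V)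
  set PS : Finset (Finset V × Finset V) :=
    (E ×ˢ E).filter (fun p => φ p.1 < φ p.2 ∧ Disjoint p.1 p.2) with hPS
  set Bad : Finset V × Finset V → Finset (Fin k → (V ≃ Fin n)) :=
    fun p => Finset.univ.filter (fun F => ∀ i, ¬ SepF (F i) p.1 p.2) with hBad
  -- bad count for a single pair
  have hsep : ∀ p ∈ PS, ((Finset.univ.filter
      (fun σ : V ≃ Fin n => ¬ SepF σ p.1 p.2)).card : ℝ) ≤
        N * (1 - 2 / (Nat.centralBinom r : ℝ)) := by
    rintro ⟨e, f⟩ hp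
    rw [hPS, Finset.mem_filter, Finset.mem_product] at hp
    obtain ⟨⟨heE, hfE⟩, -, hdis⟩ := hp
    have hC : (e.card + f.card).choose e.card ≤ Nat.centralBinom r := by
      calc (e.card + f.card).choose e.card ≤ (2 * r).choose e.card :=
            Nat.choose_le_choose _ (by
              have := hrank e heE; have := hrank f hfE; omega)
        _ ≤ Nat.centralBinom r := Nat.choose_le_centralBinom _ _
    have hCpos : 0 < (e.card + f.card).choose e.card :=
      Nat.choose_pos (Nat.le_add_right _ _)
    -- good in both directions
    have h1 := card_good e f hdis
    have h2 := card_good f e hdis.symm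
    have hsymm : (f.card + e.card).choose f.card = (e.card + f.card).choose e.card := by
      rw [add_comm]
      rw [← Nat.choose_symm (Nat.le_add_right e.card f.card)]
      congr 1
      omega
    rw [hsymm] at h2
    set G1 := Finset.univ.filter (fun σ : V ≃ Fin n => ∀ x ∈ e, ∀ y ∈ f, σ x < σ y)
    set G2 := Finset.univ.filter (fun σ : V ≃ Fin n => ∀ x ∈ f, ∀ y ∈ e, σ x < σ y)
    obtain ⟨x, hx⟩ := hne e heE
    obtain ⟨y, hy⟩ := hne f hfE
    have hdisG : Disjoint G1 G2 := by
      rw [Finset.disjoint_left]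
      intro σ h1' h2'
      rw [Finset.mem_filter] at h1' h2'
      exact absurd (h1'.2 x hx y hy) (not_lt.2 (h2'.2 y hy x hx).le)
    have hsub : G1 ∪ G2 ⊆ Finset.univ.filter (fun σ : V ≃ Fin n => SepF σ e f) := by
      intro σ hσ
      rw [Finset.mem_union] at hσ
      rw [Finset.mem_filter]
      refine ⟨Finset.mem_univ _, ?_⟩
      rcases hσ with h | h
      · exact Or.inl (Finset.mem_filter.1 h).2
      · exact Or.inr (fun a ha b hb => (Finset.mem_filter.1 h).2 b hb a ha)
    have hcount : 2 * N ≤ (e.card + f.card).choose e.card *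
        (Finset.univ.filter (fun σ : V ≃ Fin n => SepF σ e f)).card := by
      have := Finset.card_union_of_disjoint hdisG
      have hle := Finset.card_le_card hsub
      calc 2 * N = N + N := by ring
        _ ≤ (e.card + f.card).choose e.card * G1.card +
            (e.card + f.card).choose e.card * G2.card := Nat.add_le_add h1 h2
        _ = (e.card + f.card).choose e.card * (G1 ∪ G2).card := by
            rw [this]; ring
        _ ≤ _ := Nat.mul_le_mul_left _ hle
    -- transfer to reals
    have hcountR : 2 * (N : ℝ) / (Nat.centralBinom r : ℝ) ≤
        ((Finset.univ.filter (fun σ : V ≃ Fin n => SepF σ e f)).card : ℝ) := by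
      rw [div_le_iff₀ (by positivity)]
      calc 2 * (N : ℝ) ≤ ((e.card + f.card).choose e.card : ℝ) *
            ((Finset.univ.filter (fun σ : V ≃ Fin n => SepF σ e f)).card : ℝ) := by
            exact_mod_cast hcount
        _ ≤ _ := by
            rw [mul_comm ((Finset.univ.filter (fun σ : V ≃ Fin n => SepF σ e f)).card : ℝ)]
            gcongr
    have hsplit : (Finset.univ.filter (fun σ : V ≃ Fin n => SepF σ e f)).card +
        (Finset.univ.filter (fun σ : V ≃ Fin n => ¬ SepF σ e f)).card = N := by
      rw [hNdef, ← Finset.card_univ]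
      exact Finset.card_filter_add_card_filter_not _
    have : ((Finset.univ.filter (fun σ : V ≃ Fin n => ¬ SepF σ e f)).card : ℝ)
        = N - (Finset.univ.filter (fun σ : V ≃ Fin n => SepF σ e f)).card := by
      have := hsplit
      push_cast [← this]
      ring
    rw [this]
    have : (N : ℝ) * (1 - 2 / (Nat.centralBinom r : ℝ))
        = N - 2 * N / (Nat.centralBinom r : ℝ) := by ring
    rw [this]
    linarith
  -- cardinality of Bad p
  have hBadcard : ∀ p : Finset V × Finset V, (Bad p).card =
      (Finset.univ.filter (fun σ : V ≃ Fin n => ¬ SepF σ p.1 p.2)).card ^ k := by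
    intro p
    have hBeq : Bad p = Fintype.piFinset (fun _ : Fin k =>
        Finset.univ.filter (fun σ : V ≃ Fin n => ¬ SepF σ p.1 p.2)) := by
      ext F
      simp [hBad, Fintype.mem_piFinset]
    rw [hBeq, Fintype.card_piFinset]
    simp
  -- PS card bound
  have hPScard : 2 * PS.card ≤ E.card * E.card := by
    have hsub1 : PS ⊆ E ×ˢ E := Finset.filter_subset _ _
    set PS2 := PS.image Prod.swap with hPS2
    have hcard2 : PS2.card = PS.card :=
      Finset.card_image_of_injective _ Prod.swap_injective
    have hsub2 : PS2 ⊆ E ×ˢ E := by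
      intro p hp
      rw [hPS2, Finset.mem_image] at hp
      obtain ⟨q, hq, rfl⟩ := hp
      have := hsub1 hq
      rw [Finset.mem_product] at this ⊢
      exact ⟨this.2, this.1⟩
    have hdisj12 : Disjoint PS PS2 := by
      rw [Finset.disjoint_left]
      intro p hp hp2
      rw [hPS, Finset.mem_filter] at hp
      rw [hPS2, Finset.mem_image] at hp2
      obtain ⟨q, hq, hqp⟩ := hp2
      rw [hPS, Finset.mem_filter] at hq
      have h1 := hp.2.1
      have h2 := hq.2.1
      rw [← hqp] at h1
      simp at h1
      exact absurd h2 (not_lt.2 h1.le)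
    calc 2 * PS.card = PS.card + PS2.card := by rw [hcard2]; ring
      _ = (PS ∪ PS2).card := (Finset.card_union_of_disjoint hdisj12).symm
      _ ≤ (E ×ˢ E).card := Finset.card_le_card (Finset.union_subset hsub1 hsub2)
      _ = E.card * E.card := Finset.card_product _ _
  have hPSR : (PS.card : ℝ) ≤ ((n : ℝ) ^ r) ^ 2 / 2 := by
    have hE : (E.card : ℝ) ≤ (n : ℝ) ^ r := by
      exact_mod_cast edges_card_le hne hrank
    have h2 : (2 : ℝ) * PS.card ≤ (E.card : ℝ) * E.card := by exact_mod_cast hPScard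
    have hEnn : (0:ℝ) ≤ (E.card : ℝ) := by positivity
    nlinarith
  -- main union bound
  have hq0 : (0:ℝ) ≤ 1 - 2 / (Nat.centralBinom r : ℝ) := by
    have : 2 / (Nat.centralBinom r : ℝ) ≤ 1 := by
      rw [div_le_one (by positivity)]
      exact hCB
    linarith
  have hcount : ((PS.biUnion Bad).card : ℝ) < (N : ℝ) ^ k := by
    calc ((PS.biUnion Bad).card : ℝ) ≤ ∑ p ∈ PS, ((Bad p).card : ℝ) := by
          exact_mod_cast Finset.card_biUnion_le
      _ ≤ ∑ p ∈ PS, ((N : ℝ) * (1 - 2 / (Nat.centralBinom r : ℝ))) ^ k := by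
          apply Finset.sum_le_sum
          intro p hp
          rw [hBadcard p]
          push_cast
          apply pow_le_pow_left₀ (by positivity) (hsep p hp)
      _ = PS.card * ((N : ℝ) * (1 - 2 / (Nat.centralBinom r : ℝ))) ^ k := by
          rw [Finset.sum_const, nsmul_eq_mul]
      _ ≤ (((n : ℝ) ^ r) ^ 2 / 2) * ((N : ℝ) * (1 - 2 / (Nat.centralBinom r : ℝ))) ^ k := by
          apply mul_le_mul_of_nonneg_right hPSR (by positivity)
      _ = (((n : ℝ) ^ r) ^ 2 / 2 * (1 - 2 / (Nat.centralBinom r : ℝ)) ^ k) * (N : ℝ) ^ k := by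
          rw [mul_pow]; ring
      _ < 1 * (N : ℝ) ^ k := by
          apply mul_lt_mul_of_pos_right hlt (by positivity)
      _ = (N : ℝ) ^ k := one_mul _
  have hcountN : (PS.biUnion Bad).card <
      (Finset.univ : Finset (Fin k → (V ≃ Fin n))).card := by
    have hcard : (Finset.univ : Finset (Fin k → (V ≃ Fin n))).card = N ^ k := by
      rw [Finset.card_univ, Fintype.card_fun, Fintype.card_fin]
    rw [hcard]
    exact_mod_cast hcount
  obtain ⟨F, hF⟩ : ∃ F : Fin k → (V ≃ Fin n), F ∉ PS.biUnion Bad := by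
    by_contra h
    push_neg at h
    exact absurd (Finset.card_le_card (fun F _ => h F)) (not_le.2 hcountN)
  refine ⟨F, fun e heE f hfE hneq hdisj => ?_⟩
  have hφ : φ e ≠ φ f := fun h => hneq (φ.injective h)
  have hgetF : ∀ p ∈ PS, ∃ i, SepF (F i) p.1 p.2 := by
    intro p hp
    have hnb : F ∉ Bad p := fun hb => hF (Finset.mem_biUnion.2 ⟨p, hp, hb⟩)
    rw [hBad] at hnb
    simp only [Finset.mem_filter, Finset.mem_univ, true_and, not_forall, not_not] at hnb
    exact hnb
  rcases lt_or_gt_of_ne hφ with h | h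
  · have hp : (e, f) ∈ PS := by
      rw [hPS, Finset.mem_filter, Finset.mem_product]
      exact ⟨⟨heE, hfE⟩, h, hdisj⟩
    exact hgetF _ hp
  · have hp : (f, e) ∈ PS := by
      rw [hPS, Finset.mem_filter, Finset.mem_product]
      exact ⟨⟨hfE, heE⟩, h, hdisj.symm⟩
    obtain ⟨i, hi⟩ := hgetF _ hp
    refine ⟨i, ?_⟩
    rcases hi with hi | hi
    · exact Or.inr (fun a ha b hb => hi b hb a ha)
    · exact Or.inl (fun a ha b hb => hi b hb a ha)


open Real in
lemma stirling_low (m : ℕ) (hm : 1 ≤ m) : Real.sqrt π ≤ Stirling.stirlingSeq m := by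
  obtain ⟨j, rfl⟩ := Nat.exists_eq_add_of_le hm
  have hten : Filter.Tendsto (Stirling.stirlingSeq ∘ Nat.succ) Filter.atTop
      (nhds (Real.sqrt π)) := by
    apply Stirling.tendsto_stirlingSeq_sqrt_pi.comp
    exact Filter.tendsto_add_atTop_nat 1
  have := Stirling.stirlingSeq'_antitone.le_of_tendsto hten j
  simpa [Nat.succ_eq_add_one, Nat.add_comm] using this

open Real in
lemma stirling_high (m : ℕ) (hm : 1 ≤ m) :
    Stirling.stirlingSeq m ≤ Real.exp 1 / Real.sqrt 2 := by
  obtain ⟨j, rfl⟩ := Nat.exists_eq_add_of_le hm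
  have := Stirling.stirlingSeq'_antitone (Nat.zero_le j)
  simp only [Function.comp] at this
  calc Stirling.stirlingSeq (1 + j) = Stirling.stirlingSeq (j + 1) := by rw [Nat.add_comm]
    _ ≤ Stirling.stirlingSeq (0 + 1) := this
    _ = Real.exp 1 / Real.sqrt 2 := by simpa using Stirling.stirlingSeq_one

open Real in
lemma centralBinom_le_real (r : ℕ) (hr : 1 ≤ r) :
    (Nat.centralBinom r : ℝ) ≤
      Real.exp 1 / (Real.sqrt 2 * π) * (4 ^ r / Real.sqrt r) := by
  have hπ := Real.pi_pos
  set R := (r : ℝ) with hR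
  have hRpos : (0:ℝ) < R := by rw [hR]; exact_mod_cast Nat.lt_of_lt_of_le Nat.zero_lt_one hr
  have he := Real.exp_pos 1
  -- lower bound on r!
  have hlow := stirling_low r hr
  have hhigh := stirling_high (2 * r) (by omega)
  have hden1 : (0:ℝ) < Real.sqrt (2 * R) * (R / Real.exp 1) ^ r := by positivity
  have hden2 : (0:ℝ) < Real.sqrt (2 * (2*R)) * ((2*R) / Real.exp 1) ^ (2*r) := by positivity
  rw [Stirling.stirlingSeq] at hlow hhigh
  have hc1 : ((2 * r : ℕ) : ℝ) = 2 * R := by push_cast; ring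
  rw [hc1] at hhigh
  have h2 : Real.sqrt π * (Real.sqrt (2 * R) * (R / Real.exp 1) ^ r) ≤ (Nat.factorial r : ℝ) :=
    (le_div_iff₀ hden1).1 hlow
  have h1 : ((Nat.factorial (2*r) : ℕ) : ℝ) ≤
      (Real.exp 1 / Real.sqrt 2) * (Real.sqrt (2 * (2*R)) * ((2*R) / Real.exp 1) ^ (2*r)) :=
    (div_le_iff₀ hden2).1 hhigh
  have hCB : (Nat.centralBinom r : ℝ) = (Nat.factorial (2*r) : ℕ) / ((Nat.factorial r : ℝ) * (Nat.factorial r : ℝ)) := by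
    rw [eq_div_iff (by positivity)]
    have := Nat.choose_mul_factorial_mul_factorial (Nat.le_mul_of_pos_left r (by norm_num) : r ≤ 2 * r)
    rw [show 2 * r - r = r by omega] at this
    rw [Nat.centralBinom]
    exact_mod_cast congrArg (Nat.cast (R := ℝ)) (by rw [← this]; ring)
  -- the key algebraic identity
  have hs4 : Real.sqrt (2 * (2*R)) = 2 * Real.sqrt R := by
    rw [show 2*(2*R) = 2^2 * R by ring, Real.sqrt_mul (by positivity), Real.sqrt_sq (by norm_num)]
  have hsπ : Real.sqrt π * Real.sqrt π = π := Real.mul_self_sqrt hπ.le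
  have hs2R : Real.sqrt (2*R) * Real.sqrt (2*R) = 2*R := Real.mul_self_sqrt (by positivity)
  have hsqR : Real.sqrt R * Real.sqrt R = R := Real.mul_self_sqrt hRpos.le
  have hpow : ((2*R) / Real.exp 1) ^ (2*r) = 4 ^ r * ((R / Real.exp 1) ^ r) ^ 2 := by
    rw [show (2*R) / Real.exp 1 = 2 * (R / Real.exp 1) by ring, mul_pow, ← pow_mul,
      mul_comm r 2, pow_mul]
    norm_num
  have hsqRpos : (0:ℝ) < Real.sqrt R := Real.sqrt_pos.2 hRpos
  have key : (Real.exp 1 / Real.sqrt 2) * (Real.sqrt (2 * (2*R)) * ((2*R) / Real.exp 1) ^ (2*r))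
      = (Real.exp 1 / (Real.sqrt 2 * π) * (4 ^ r / Real.sqrt R)) *
        ((Real.sqrt π * (Real.sqrt (2*R) * (R / Real.exp 1) ^ r)) *
         (Real.sqrt π * (Real.sqrt (2*R) * (R / Real.exp 1) ^ r))) := by
    rw [hs4, hpow]
    have hsq2pos : (0:ℝ) < Real.sqrt 2 := by positivity
    set Q := (R / Real.exp 1) ^ r with hQ
    rw [show (Real.sqrt π * (Real.sqrt (2*R) * Q)) * (Real.sqrt π * (Real.sqrt (2*R) * Q))
        = (Real.sqrt π * Real.sqrt π) * ((Real.sqrt (2*R) * Real.sqrt (2*R)) * (Q * Q))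
      from by ring, hsπ, hs2R]
    set S := Real.sqrt R with hS
    rw [← hsqR]
    field_simp
  rw [hCB, div_le_iff₀ (by positivity)]
  calc ((Nat.factorial (2*r) : ℕ) : ℝ) ≤ _ := h1
    _ = _ := key
    _ ≤ (Real.exp 1 / (Real.sqrt 2 * π) * (4 ^ r / Real.sqrt R)) * ((Nat.factorial r : ℝ) * (Nat.factorial r : ℝ)) := by
        apply mul_le_mul_of_nonneg_left _ (by positivity)
        have hB : (0:ℝ) ≤ Real.sqrt π * (Real.sqrt (2*R) * (R / Real.exp 1) ^ r) := by positivity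
        exact mul_le_mul h2 h2 hB (by positivity)

lemma nat_pow_aux : ∀ m : ℕ, 2 ≤ m → 128 * m ≤ 16 ^ m := by
  intro m hm
  induction m with
  | zero => omega
  | succ j ih =>
    rcases Nat.lt_or_ge j 2 with hj | hj
    · interval_cases j
      · omega
      · norm_num
    · have := ih hj
      have h16 : 16 ^ j ≥ 128 * j := this
      calc 128 * (j + 1) ≤ 16 * (128 * j) := by nlinarith
        _ ≤ 16 * 16 ^ j := by omega
        _ = 16 ^ (j + 1) := by rw [pow_succ]; ring

set_option maxHeartbeats 1000000 in
/-- For any rank-`r` hypergraph (with nonempty edges) on `n` vertices,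
`π(H) ≤ (e·ln 2/(π·√2)) · 4^r · √r · log₂ n`. -/
theorem stmt5 {V : Type*} [Fintype V] [DecidableEq V] (r : ℕ)
    (E : Finset (Finset V)) (hne : ∀ e ∈ E, e.Nonempty)
    (hrank : ∀ e ∈ E, e.card ≤ r) :
    (sepDimH E : ℝ) ≤
      (Real.exp 1 * Real.log 2 / (Real.pi * Real.sqrt 2)) *
        4 ^ r * Real.sqrt r * Real.logb 2 (Fintype.card V) := by
  classical
  have hπ := Real.pi_pos
  have hsq2 : (0:ℝ) < Real.sqrt 2 := by positivity
  have hexp := Real.exp_pos 1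
  have hlog2 : (0:ℝ) < Real.log 2 := Real.log_pos (by norm_num)
  set n := Fintype.card V with hn
  -- the constant is nonnegative
  have hC : (0:ℝ) ≤ Real.exp 1 * Real.log 2 / (Real.pi * Real.sqrt 2) := by positivity
  by_cases hn1 : n ≤ 1
  · -- at most one vertex: no two distinct edges
    have h0 : (0:ℕ) ∈ {k : ℕ | ∃ F : Fin k → (V ≃ Fin (Fintype.card V)),
        ∀ e ∈ E, ∀ f ∈ E, e ≠ f → Disjoint e f → ∃ i, SepF (F i) e f} := by
      refine ⟨Fin.elim0, fun e heE f hfE hneq _ => absurd ?_ hneq⟩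
      have hsub : ∀ x y : V, x = y := fun x y =>
        Fintype.card_le_one_iff.1 hn1 x y
      obtain ⟨y, hy⟩ := hne f hfE
      ext z
      constructor
      · intro _; rwa [hsub z y]
      · intro _
        obtain ⟨x, hx⟩ := hne e heE
        rwa [hsub z x]
    have hsd : sepDimH E = 0 := Nat.le_zero.1 (Nat.sInf_le h0)
    rw [hsd]
    interval_cases n
    · rw [show ((0:ℕ):ℝ) = 0 by norm_num, Real.logb_zero]
      norm_num
    · rw [show ((1:ℕ):ℝ) = 1 by norm_num, Real.logb_one]
      norm_num
  push_neg at hn1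
  have hn0 : (0:ℝ) < n := by exact_mod_cast Nat.lt_of_lt_of_le Nat.zero_lt_one hn1.le
  have hlogn : (0:ℝ) < Real.log n := Real.log_pos (by exact_mod_cast hn1)
  have hlogbn : (1:ℝ) ≤ Real.logb 2 n := by
    calc (1:ℝ) = Real.logb 2 2 := (Real.logb_self_eq_one (by norm_num)).symm
      _ ≤ Real.logb 2 n := Real.logb_le_logb_of_le (by norm_num) (by norm_num)
          (by exact_mod_cast hn1)
  rcases Nat.lt_or_ge r 2 with hr2 | hr2
  · -- r = 0 or r = 1
    interval_cases r
    · -- r = 0 : E is empty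
      have h0 : (0:ℕ) ∈ {k : ℕ | ∃ F : Fin k → (V ≃ Fin (Fintype.card V)),
          ∀ e ∈ E, ∀ f ∈ E, e ≠ f → Disjoint e f → ∃ i, SepF (F i) e f} := by
        refine ⟨Fin.elim0, fun e heE => absurd (Finset.card_pos.2 (hne e heE)) ?_⟩
        have := hrank e heE
        omega
      have hsd : sepDimH E = 0 := Nat.le_zero.1 (Nat.sInf_le h0)
      rw [hsd]
      have : Real.sqrt 0 = 0 := Real.sqrt_zero
      push_cast
      rw [Real.sqrt_zero]
      ring_nf
      positivity
    · -- r = 1 : one permutation suffices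
      have h1 : (1:ℕ) ∈ {k : ℕ | ∃ F : Fin k → (V ≃ Fin (Fintype.card V)),
          ∀ e ∈ E, ∀ f ∈ E, e ≠ f → Disjoint e f → ∃ i, SepF (F i) e f} := by
        refine ⟨fun _ => Fintype.equivFin V, fun e heE f hfE hneq hdisj => ?_⟩
        obtain ⟨x, hx⟩ := hne e heE
        obtain ⟨y, hy⟩ := hne f hfE
        set σ := Fintype.equivFin V
        have hxy : σ x ≠ σ y := fun h =>
          Finset.disjoint_left.1 hdisj hx (σ.injective h ▸ hy)
        have he1 : ∀ a ∈ e, a = x := fun a ha =>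
          Finset.card_le_one.1 (hrank e heE) a ha x hx
        have hf1 : ∀ b ∈ f, b = y := fun b hb =>
          Finset.card_le_one.1 (hrank f hfE) b hb y hy
        refine ⟨0, ?_⟩
        rcases lt_or_gt_of_ne hxy with h | h
        · exact Or.inl fun a ha b hb => by rw [he1 a ha, hf1 b hb]; exact h
        · exact Or.inr fun a ha b hb => by rw [he1 a ha, hf1 b hb]; exact h
      have hsd : sepDimH E ≤ 1 := Nat.sInf_le h1
      have hsd' : (sepDimH E : ℝ) ≤ 1 := by exact_mod_cast hsd
      refine hsd'.trans ?_
      rw [pow_one, Nat.cast_one, Real.sqrt_one, mul_one]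
      have hpi315 := Real.pi_lt_d2
      have hexp27 := Real.exp_one_gt_d9
      have hlog2' := Real.log_two_gt_d9
      have hsqrt2_15 : Real.sqrt 2 < 1.5 := by
        nlinarith [Real.sq_sqrt (show (0:ℝ) ≤ 2 by norm_num), Real.sqrt_nonneg 2]
      have hconst : (1:ℝ) ≤ Real.exp 1 * Real.log 2 / (Real.pi * Real.sqrt 2) * 4 := by
        rw [div_mul_eq_mul_div, le_div_iff₀ (by positivity)]
        nlinarith
      calc (1:ℝ) ≤ Real.exp 1 * Real.log 2 / (Real.pi * Real.sqrt 2) * 4 := hconst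
        _ = Real.exp 1 * Real.log 2 / (Real.pi * Real.sqrt 2) * 4 * 1 := (mul_one _).symm
        _ ≤ Real.exp 1 * Real.log 2 / (Real.pi * Real.sqrt 2) * 4 * Real.logb 2 n := by
            apply mul_le_mul_of_nonneg_left hlogbn (by positivity)
  -- main case : r ≥ 2
  have hr1 : 1 ≤ r := by omega
  have hRpos : (0:ℝ) < (r:ℝ) := by exact_mod_cast Nat.lt_of_lt_of_le Nat.zero_lt_one hr1
  have hsqr : (0:ℝ) < Real.sqrt r := Real.sqrt_pos.2 hRpos
  have hsqrr : Real.sqrt r * Real.sqrt r = (r:ℝ) := Real.mul_self_sqrt hRpos.le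
  have h4r : (0:ℝ) < 4 ^ r := by positivity
  set q : ℝ := 2 * Real.sqrt 2 * Real.pi / Real.exp 1 * (Real.sqrt r / 4 ^ r) with hq
  have hqpos : 0 < q := by rw [hq]; positivity
  have hCBpos : (0:ℝ) < Nat.centralBinom r := by exact_mod_cast Nat.centralBinom_pos r
  have hCB2 : (2:ℝ) ≤ Nat.centralBinom r := by
    exact_mod_cast Nat.two_le_centralBinom r (by omega)
  have hq_le : q ≤ 2 / (Nat.centralBinom r : ℝ) := by
    rw [le_div_iff₀ hCBpos]
    have h2q : Real.exp 1 / (Real.sqrt 2 * Real.pi) * (4 ^ r / Real.sqrt r) = 2 / q := by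
      rw [hq]; field_simp
    calc q * (Nat.centralBinom r : ℝ)
        ≤ q * (Real.exp 1 / (Real.sqrt 2 * Real.pi) * (4 ^ r / Real.sqrt r)) :=
          mul_le_mul_of_nonneg_left (centralBinom_le_real r hr1) hqpos.le
      _ = q * (2 / q) := by rw [h2q]
      _ = 2 := by field_simp
  have hq_log2 : q ≤ Real.log 2 := by
    have h128 : 128 * r ≤ 16 ^ r := nat_pow_aux r hr2
    have h256 : (256:ℝ) * r ≤ 2 * 16 ^ r := by
      have : (128:ℝ) * r ≤ 16 ^ r := by exact_mod_cast h128
      linarith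
    have hsqle : Real.sqrt (256 * r) ≤ Real.sqrt (2 * 16 ^ r) := Real.sqrt_le_sqrt h256
    have h161 : Real.sqrt (256 * (r:ℝ)) = 16 * Real.sqrt r := by
      rw [show (256:ℝ) = 16 ^ 2 by norm_num, Real.sqrt_mul (by positivity),
        Real.sqrt_sq (by norm_num)]
    have h162 : Real.sqrt (2 * 16 ^ r) = Real.sqrt 2 * 4 ^ r := by
      rw [Real.sqrt_mul (by norm_num), show (16:ℝ) ^ r = (4 ^ r) ^ 2 by
        rw [← pow_mul, mul_comm r 2, pow_mul]; norm_num]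
      rw [Real.sqrt_sq (by positivity)]
    rw [h161, h162] at hsqle
    have hsr : Real.sqrt r / 4 ^ r ≤ Real.sqrt 2 / 16 := by
      rw [div_le_div_iff₀ h4r (by norm_num)]
      nlinarith
    have h22 : Real.sqrt 2 * Real.sqrt 2 = 2 := Real.mul_self_sqrt (by norm_num)
    have hqle : q ≤ Real.pi / (4 * Real.exp 1) := by
      rw [hq]
      calc 2 * Real.sqrt 2 * Real.pi / Real.exp 1 * (Real.sqrt r / 4 ^ r)
          ≤ 2 * Real.sqrt 2 * Real.pi / Real.exp 1 * (Real.sqrt 2 / 16) :=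
            mul_le_mul_of_nonneg_left hsr (by positivity)
        _ = Real.sqrt 2 * Real.sqrt 2 * Real.pi / (8 * Real.exp 1) := by ring
        _ = 2 * Real.pi / (8 * Real.exp 1) := by rw [h22]
        _ = Real.pi / (4 * Real.exp 1) := by ring
    have hnum : Real.pi / (4 * Real.exp 1) ≤ Real.log 2 := by
      rw [div_le_iff₀ (by positivity)]
      nlinarith [Real.pi_lt_d2, Real.exp_one_gt_d9, Real.log_two_gt_d9]
    linarith
  set T : ℝ := 2 * r * Real.log n / q with hT
  have hTpos : (0:ℝ) ≤ T := by positivity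
  set k := ⌊T⌋₊ with hk
  have hTval : T = Real.exp 1 / (Real.pi * Real.sqrt 2) * 4 ^ r * Real.sqrt r * Real.log n := by
    rw [hT, hq]
    set S := Real.sqrt (r:ℝ) with hS
    rw [show ((r:ℝ)) = S * S from hsqrr.symm]
    have hSne : S ≠ 0 := hsqr.ne'
    clear_value n q T k S
    field_simp
  have hqT : q * T = 2 * r * Real.log n := by
    rw [hT]; field_simp
  have hqk : 2 * r * Real.log n - q < q * k := by
    have hfloor : T - 1 < (k:ℝ) := Nat.sub_one_lt_floor T
    calc 2 * r * Real.log n - q = q * (T - 1) := by rw [← hqT]; ring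
      _ < q * k := mul_lt_mul_of_pos_left hfloor hqpos
  have hkT : (k:ℝ) ≤ T := Nat.floor_le hTpos
  clear_value T k
  have hlt : ((n:ℝ) ^ r) ^ 2 / 2 * (1 - 2 / (Nat.centralBinom r : ℝ)) ^ k < 1 := by
    have h2CB : (0:ℝ) ≤ 1 - 2 / (Nat.centralBinom r : ℝ) := by
      have : 2 / (Nat.centralBinom r : ℝ) ≤ 1 := by
        rw [div_le_one hCBpos]; exact hCB2
      linarith
    have hstep1 : (1 - 2 / (Nat.centralBinom r : ℝ)) ^ k ≤ (1 - q) ^ k :=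
      pow_le_pow_left₀ h2CB (by linarith) k
    have hq1 : (0:ℝ) ≤ 1 - q := by
      have := Real.log_two_lt_d9
      linarith
    have hexpge : 1 - q ≤ Real.exp (-q) := by
      have h := Real.add_one_le_exp (-q)
      linarith
    have hstep2 : (1 - q) ^ k ≤ Real.exp (-q) ^ k :=
      pow_le_pow_left₀ hq1 hexpge k
    have hstep3 : Real.exp (-q) ^ k = Real.exp (-(q * k)) := by
      rw [← Real.exp_nat_mul]; congr 1; ring
    have hstep4 : Real.exp (-(q * k)) < Real.exp (q - 2 * r * Real.log n) :=
      Real.exp_lt_exp.2 (by linarith)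
    have hexpq : Real.exp (q - 2 * r * Real.log n) ≤ 2 / (n:ℝ) ^ (2 * r) := by
      rw [Real.exp_sub]
      have h1 : Real.exp q ≤ 2 := by
        calc Real.exp q ≤ Real.exp (Real.log 2) := Real.exp_le_exp.2 hq_log2
          _ = 2 := Real.exp_log (by norm_num)
      have h2 : Real.exp (2 * r * Real.log n) = (n:ℝ) ^ (2*r) := by
        rw [show (2:ℝ) * r * Real.log n = ((2*r : ℕ) : ℝ) * Real.log n by push_cast; ring,
          Real.exp_nat_mul, Real.exp_log hn0]
      rw [h2]
      gcongr
    have hpow2 : ((n:ℝ) ^ r) ^ 2 = (n:ℝ) ^ (2*r) := by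
      rw [← pow_mul, mul_comm r 2]
    calc ((n:ℝ) ^ r) ^ 2 / 2 * (1 - 2 / (Nat.centralBinom r : ℝ)) ^ k
        ≤ ((n:ℝ) ^ r) ^ 2 / 2 * Real.exp (-(q * k)) := by
          apply mul_le_mul_of_nonneg_left _ (by positivity)
          exact (hstep1.trans hstep2).trans_eq hstep3
      _ < ((n:ℝ) ^ r) ^ 2 / 2 * (2 / (n:ℝ) ^ (2*r)) := by
          apply mul_lt_mul_of_pos_left (lt_of_lt_of_le hstep4 hexpq) (by positivity)
      _ = 1 := by
          rw [hpow2]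
          field_simp
  obtain ⟨F, hF⟩ := exists_good_family E r k hne hrank hlt hCB2
  have hsd : sepDimH E ≤ k := Nat.sInf_le ⟨F, hF⟩
  have hRHSval : Real.exp 1 * Real.log 2 / (Real.pi * Real.sqrt 2) * 4 ^ r * Real.sqrt r *
      Real.logb 2 n = Real.exp 1 / (Real.pi * Real.sqrt 2) * 4 ^ r * Real.sqrt r * Real.log n := by
    rw [← Real.log_div_log]
    field_simp
  rw [hRHSval, ← hTval]
  exact (Nat.cast_le.2 hsd).trans hkT
end

section
/- For two disjoint sets e, f each of size at most r, a uniformly random permutation of a ground set containing e ∪ f separates e and f with probability at least 2(r!)²/(2r)!. -/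
set_option linter.unusedSectionVars false

namespace SepAux

variable {U : Type*} [Fintype U] [DecidableEq U]

def uEq (e f : Finset U) (hef : Disjoint e f) : ↥e ⊕ ↥f ≃ ↥(e ∪ f) where
  toFun := Sum.elim (fun x => ⟨x.1, Finset.mem_union_left _ x.2⟩)
    (fun y => ⟨y.1, Finset.mem_union_right _ y.2⟩)
  invFun z := if h : (z : U) ∈ e then Sum.inl ⟨z, h⟩ else
    Sum.inr ⟨z, by rcases Finset.mem_union.mp z.2 with h' | h'; exact absurd h' h; exact h'⟩
  left_inv := by
    rintro (x | y)
    · simp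
    · have : (y : U) ∉ e := fun h => Finset.disjoint_left.mp hef h y.2
      simp [this]
  right_inv z := by
    by_cases h : (z : U) ∈ e <;> simp [h]

section Tau

variable (σ : U ≃ Fin (Fintype.card U)) {k : ℕ} {K : Finset U}

def S (K : Finset U) : Finset (Fin (Fintype.card U)) := K.image σ

lemma hS (hK : K.card = k) : (S σ K).card = k := by
  rw [S, Finset.card_image_of_injective _ σ.injective, hK]

noncomputable def oIso (hK : K.card = k) : Fin k ≃o ↥(S σ K) :=
  (S σ K).orderIsoOfFin (hS σ hK)

def dEq : ↥K ≃ ↥(S σ K) :=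
  σ.subtypeEquiv (fun u => ⟨fun h => Finset.mem_image_of_mem _ h,
    fun h => by obtain ⟨x, hx, hxe⟩ := Finset.mem_image.mp h; rwa [← σ.injective hxe]⟩)

@[simp] lemma dEq_apply (x : ↥K) : ((dEq σ x : ↥(S σ K)) : Fin (Fintype.card U)) = σ x := rfl

noncomputable def tau (hK : K.card = k) (t : Fin k ≃ ↥K) : U ≃ Fin (Fintype.card U) :=
  σ.trans (Equiv.Perm.extendDomain (((dEq σ).symm.trans t.symm).trans (oIso σ hK).toEquiv)
    (Equiv.refl ↥(S σ K)))

lemma tau_not_mem (hK : K.card = k) (t : Fin k ≃ ↥K) {u : U} (hu : u ∉ K) :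
    tau σ hK t u = σ u := by
  have : σ u ∉ S σ K := by
    simp only [S, Finset.mem_image]
    rintro ⟨x, hx, hxe⟩
    exact hu (by rwa [← σ.injective hxe])
  exact Equiv.Perm.extendDomain_apply_not_subtype _ _ this

lemma tau_t (hK : K.card = k) (t : Fin k ≃ ↥K) (i : Fin k) :
    tau σ hK t (t i) = (oIso σ hK i : Fin (Fintype.card U)) := by
  have hmem : σ (t i) ∈ S σ K := Finset.mem_image_of_mem _ (t i).2
  have : tau σ hK t (t i)
      = ((((dEq σ).symm.trans t.symm).trans (oIso σ hK).toEquiv)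
          ((Equiv.refl ↥(S σ K)).symm ⟨σ (t i), hmem⟩) : ↥(S σ K)) :=
    Equiv.Perm.extendDomain_apply_subtype _ _ hmem
  rw [this]
  have hd : (dEq σ).symm ⟨σ (t i), hmem⟩ = t i := by
    apply (dEq σ).injective
    simp only [Equiv.apply_symm_apply]
    exact Subtype.ext (by simp)
  simp [hd]

/-- value of `tau` on any element of `K`, via the symm index. -/
lemma tau_mem (hK : K.card = k) (t : Fin k ≃ ↥K) {u : U} (hu : u ∈ K) :
    tau σ hK t u = (oIso σ hK (t.symm ⟨u, hu⟩) : Fin (Fintype.card U)) := by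
  have : u = ((t (t.symm ⟨u, hu⟩)) : U) := by simp
  conv_lhs => rw [this]
  exact tau_t σ hK t _

/-- the image of `K` under `tau` is again `S`. -/
lemma image_tau (hK : K.card = k) (t : Fin k ≃ ↥K) :
    K.image (tau σ hK t) = S σ K := by
  apply Finset.eq_of_subset_of_card_le
  · intro v hv
    obtain ⟨u, hu, rfl⟩ := Finset.mem_image.mp hv
    rw [tau_mem σ hK t hu]
    exact (oIso σ hK _).2
  · rw [hS σ hK, Finset.card_image_of_injective _ (tau σ hK t).injective, hK]

/-- The recorded arrangement. -/
noncomputable def rho (hK : K.card = k) : Fin k ≃ ↥K :=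
  (oIso σ hK).toEquiv.trans (dEq σ).symm

lemma sigma_rho (hK : K.card = k) (i : Fin k) :
    σ ((rho σ hK i : ↥K) : U) = (oIso σ hK i : Fin (Fintype.card U)) := by
  have : (dEq σ) (rho σ hK i) = oIso σ hK i := by simp [rho]
  rw [← dEq_apply σ, this]

end Tau

section Main

variable {e f : Finset U} (hef : Disjoint e f)
  (πe : Fin e.card ≃ ↥e) (πf : Fin f.card ≃ ↥f)

def theT : Bool → (Fin (e.card + f.card) ≃ ↥(e ∪ f))
  | false => finSumFinEquiv.symm.trans ((πe.sumCongr πf).trans (uEq e f hef))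
  | true => (finCongr (Nat.add_comm e.card f.card)).trans
      (finSumFinEquiv.symm.trans (((πf.sumCongr πe).trans (Equiv.sumComm _ _)).trans
        (uEq e f hef)))

lemma theT_false_castAdd (j : Fin e.card) :
    ((theT hef πe πf false (Fin.castAdd f.card j) : ↥(e ∪ f)) : U) = πe j := by
  simp [theT, uEq]

lemma theT_false_natAdd (j : Fin f.card) :
    ((theT hef πe πf false (Fin.natAdd e.card j) : ↥(e ∪ f)) : U) = πf j := by
  simp [theT, uEq]

lemma theT_true_castAdd (j : Fin f.card) :
    ((theT hef πe πf true (Fin.cast (Nat.add_comm f.card e.card) (Fin.castAdd e.card j))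
      : ↥(e ∪ f)) : U) = πf j := by
  simp [theT, uEq, finCongr, Fin.cast_cast]

lemma theT_true_natAdd (j : Fin e.card) :
    ((theT hef πe πf true (Fin.cast (Nat.add_comm f.card e.card) (Fin.natAdd f.card j))
      : ↥(e ∪ f)) : U) = πe j := by
  simp [theT, uEq, finCongr, Fin.cast_cast]

lemma theT_symm_false_e (x : ↥e) :
    (theT hef πe πf false).symm ⟨x, Finset.mem_union_left _ x.2⟩
      = Fin.castAdd f.card (πe.symm x) := by
  rw [Equiv.symm_apply_eq]
  exact Subtype.ext (by rw [theT_false_castAdd]; simp)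

lemma theT_symm_false_f (y : ↥f) :
    (theT hef πe πf false).symm ⟨y, Finset.mem_union_right _ y.2⟩
      = Fin.natAdd e.card (πf.symm y) := by
  rw [Equiv.symm_apply_eq]
  exact Subtype.ext (by rw [theT_false_natAdd]; simp)

lemma theT_symm_true_f (y : ↥f) :
    (theT hef πe πf true).symm ⟨y, Finset.mem_union_right _ y.2⟩
      = Fin.cast (Nat.add_comm f.card e.card) (Fin.castAdd e.card (πf.symm y)) := by
  rw [Equiv.symm_apply_eq]
  exact Subtype.ext (by rw [theT_true_castAdd]; simp)

lemma theT_symm_true_e (x : ↥e) :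
    (theT hef πe πf true).symm ⟨x, Finset.mem_union_left _ x.2⟩
      = Fin.cast (Nat.add_comm f.card e.card) (Fin.natAdd f.card (πe.symm x)) := by
  rw [Equiv.symm_apply_eq]
  exact Subtype.ext (by rw [theT_true_natAdd]; simp)

lemma theT_symm_lt_false (x : ↥e) (y : ↥f) :
    (theT hef πe πf false).symm ⟨x, Finset.mem_union_left _ x.2⟩
      < (theT hef πe πf false).symm ⟨y, Finset.mem_union_right _ y.2⟩ := by
  rw [theT_symm_false_e, theT_symm_false_f]
  simp only [Fin.lt_def, Fin.coe_castAdd, Fin.coe_natAdd]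
  exact lt_of_lt_of_le (πe.symm x).2 (Nat.le_add_right _ _)

lemma theT_symm_lt_true (x : ↥e) (y : ↥f) :
    (theT hef πe πf true).symm ⟨y, Finset.mem_union_right _ y.2⟩
      < (theT hef πe πf true).symm ⟨x, Finset.mem_union_left _ x.2⟩ := by
  rw [theT_symm_true_e, theT_symm_true_f]
  simp only [Fin.lt_def, Fin.coe_cast, Fin.coe_castAdd, Fin.coe_natAdd]
  exact lt_of_lt_of_le (πf.symm y).2 (Nat.le_add_right _ _)

variable (hK : (e ∪ f).card = e.card + f.card)

lemma sep_tau (σ : U ≃ Fin (Fintype.card U)) (c : Bool) :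
    SepF (tau σ hK (theT hef πe πf c)) e f := by
  set t := theT hef πe πf c with ht
  have key : ∀ (u v : U) (hu : u ∈ e ∪ f) (hv : v ∈ e ∪ f),
      (tau σ hK t u < tau σ hK t v ↔ t.symm ⟨u, hu⟩ < t.symm ⟨v, hv⟩) := by
    intro u v hu hv
    rw [tau_mem σ hK t hu, tau_mem σ hK t hv, Subtype.coe_lt_coe]
    exact (oIso σ hK).lt_iff_lt
  cases c with
  | false =>
    left
    intro x hx y hy
    rw [key x y (Finset.mem_union_left _ hx) (Finset.mem_union_right _ hy)]
    exact theT_symm_lt_false hef πe πf ⟨x, hx⟩ ⟨y, hy⟩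
  | true =>
    right
    intro x hx y hy
    rw [key y x (Finset.mem_union_right _ hy) (Finset.mem_union_left _ hx)]
    exact theT_symm_lt_true hef πe πf ⟨x, hx⟩ ⟨y, hy⟩

end Main

lemma key_count (e f : Finset U) (he : e.Nonempty) (hf : f.Nonempty) (hef : Disjoint e f) :
    2 * e.card.factorial * f.card.factorial * (Fintype.card U).factorial
      ≤ Nat.card {σ : U ≃ Fin (Fintype.card U) // SepF σ e f}
          * (e.card + f.card).factorial := by
  have hK : (e ∪ f).card = e.card + f.card := Finset.card_union_of_disjoint hef
  let Φ : (U ≃ Fin (Fintype.card U)) × (Fin e.card ≃ ↥e) × (Fin f.card ≃ ↥f) × Bool →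
      {σ : U ≃ Fin (Fintype.card U) // SepF σ e f} × (Fin (e.card + f.card) ≃ ↥(e ∪ f)) :=
    fun x => (⟨tau x.1 hK (theT hef x.2.1 x.2.2.1 x.2.2.2),
      sep_tau hef x.2.1 x.2.2.1 hK x.1 x.2.2.2⟩, rho x.1 hK)
  have hinj : Function.Injective Φ := by
    rintro ⟨σ, πe, πf, c⟩ ⟨σ', πe', πf', c'⟩ hΦ
    simp only [Φ, Prod.mk.injEq, Subtype.mk.injEq] at hΦ
    obtain ⟨hτ, hρ⟩ := hΦ
    have hSS : S σ (e ∪ f) = S σ' (e ∪ f) := by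
      rw [← image_tau σ hK (theT hef πe πf c), ← image_tau σ' hK (theT hef πe' πf' c'), hτ]
    have hemb : ∀ (σ₀ : U ≃ Fin (Fintype.card U)), S σ₀ (e ∪ f) = S σ (e ∪ f) →
        (fun i => ((oIso σ₀ hK i : ↥(S σ₀ (e ∪ f))) : Fin (Fintype.card U)))
          = ⇑((S σ (e ∪ f)).orderEmbOfFin (hS σ hK)) := by
      intro σ₀ hS0
      apply Finset.orderEmbOfFin_unique (hS σ hK)
      · intro i
        rw [← hS0]
        exact (oIso σ₀ hK i).2
      · intro i j hij
        exact Subtype.coe_lt_coe.mpr ((oIso σ₀ hK).strictMono hij)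
    have hoo : ∀ i : Fin (e.card + f.card),
        ((oIso σ hK i : ↥(S σ (e ∪ f))) : Fin (Fintype.card U))
          = ((oIso σ' hK i : ↥(S σ' (e ∪ f))) : Fin (Fintype.card U)) := by
      intro i
      rw [congrFun (hemb σ rfl) i, congrFun (hemb σ' hSS.symm) i]
    have hσ : σ = σ' := by
      apply Equiv.ext; intro u
      by_cases hu : u ∈ e ∪ f
      · set i := (rho σ hK).symm ⟨u, hu⟩ with hi
        have h1 : ((rho σ hK i : ↥(e ∪ f)) : U) = u := by rw [hi]; simp
        have h2 : ((rho σ' hK i : ↥(e ∪ f)) : U) = u := by rw [← hρ]; exact h1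
        calc σ u = σ ((rho σ hK i : ↥(e ∪ f)) : U) := by rw [h1]
          _ = ((oIso σ hK i : ↥(S σ (e ∪ f))) : Fin (Fintype.card U)) := sigma_rho σ hK i
          _ = ((oIso σ' hK i : ↥(S σ' (e ∪ f))) : Fin (Fintype.card U)) := hoo i
          _ = σ' ((rho σ' hK i : ↥(e ∪ f)) : U) := (sigma_rho σ' hK i).symm
          _ = σ' u := by rw [h2]
      · calc σ u = tau σ hK (theT hef πe πf c) u := (tau_not_mem σ hK _ hu).symm
          _ = tau σ' hK (theT hef πe' πf' c') u := by rw [hτ]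
          _ = σ' u := tau_not_mem σ' hK _ hu
    subst hσ
    have htt : theT hef πe πf c = theT hef πe' πf' c' := by
      apply Equiv.ext; intro i
      apply Subtype.ext
      apply (tau σ hK (theT hef πe πf c)).injective
      rw [tau_t σ hK (theT hef πe πf c) i]
      conv_rhs => rw [hτ]
      rw [tau_t σ hK (theT hef πe' πf' c') i]
    obtain ⟨x, hx⟩ := he
    obtain ⟨y, hy⟩ := hf
    have hcc : c = c' := by
      by_contra hne
      cases c <;> cases c'
      · exact hne rfl
      · have l1 := theT_symm_lt_false hef πe πf ⟨x, hx⟩ ⟨y, hy⟩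
        have l2 := theT_symm_lt_true hef πe' πf' ⟨x, hx⟩ ⟨y, hy⟩
        rw [← htt] at l2
        exact lt_asymm l1 l2
      · have l1 := theT_symm_lt_true hef πe πf ⟨x, hx⟩ ⟨y, hy⟩
        have l2 := theT_symm_lt_false hef πe' πf' ⟨x, hx⟩ ⟨y, hy⟩
        rw [← htt] at l2
        exact lt_asymm l1 l2
      · exact hne rfl
    subst hcc
    have hπe : πe = πe' := by
      apply Equiv.ext; intro j
      apply Subtype.ext
      cases c
      · rw [← theT_false_castAdd hef πe πf j, ← theT_false_castAdd hef πe' πf' j, htt]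
      · rw [← theT_true_natAdd hef πe πf j, ← theT_true_natAdd hef πe' πf' j, htt]
    have hπf : πf = πf' := by
      apply Equiv.ext; intro j
      apply Subtype.ext
      cases c
      · rw [← theT_false_natAdd hef πe πf j, ← theT_false_natAdd hef πe' πf' j, htt]
      · rw [← theT_true_castAdd hef πe πf j, ← theT_true_castAdd hef πe' πf' j, htt]
    rw [hπe, hπf]
  have hle := Nat.card_le_card_of_injective Φ hinj
  rw [Nat.card_prod, Nat.card_prod, Nat.card_prod, Nat.card_prod] at hle
  have c1 : Nat.card (U ≃ Fin (Fintype.card U)) = (Fintype.card U).factorial := by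
    rw [Nat.card_eq_fintype_card]
    exact Fintype.card_equiv (Fintype.equivFin U)
  have c2 : Nat.card (Fin e.card ≃ ↥e) = e.card.factorial := by
    rw [Nat.card_eq_fintype_card,
      Fintype.card_equiv ((Fintype.equivFinOfCardEq (Fintype.card_coe e)).symm),
      Fintype.card_fin]
  have c3 : Nat.card (Fin f.card ≃ ↥f) = f.card.factorial := by
    rw [Nat.card_eq_fintype_card,
      Fintype.card_equiv ((Fintype.equivFinOfCardEq (Fintype.card_coe f)).symm),
      Fintype.card_fin]
  have c4 : Nat.card Bool = 2 := by simp [Nat.card_eq_fintype_card]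
  have c5 : Nat.card (Fin (e.card + f.card) ≃ ↥(e ∪ f)) = (e.card + f.card).factorial := by
    rw [Nat.card_eq_fintype_card,
      Fintype.card_equiv ((Fintype.equivFinOfCardEq (by rw [Fintype.card_coe, hK])).symm),
      Fintype.card_fin]
  rw [c1, c2, c3, c4, c5] at hle
  calc 2 * e.card.factorial * f.card.factorial * (Fintype.card U).factorial
      = (Fintype.card U).factorial * (e.card.factorial * (f.card.factorial * 2)) := by ring
    _ ≤ _ := hle

end SepAux


lemma choose_mid {r : ℕ} (hr : 0 < r) : 2 ≤ (2 * r).choose r := by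
  have h1 : (2 * r).choose 1 ≤ (2 * r).choose ((2 * r) / 2) := Nat.choose_le_middle 1 (2 * r)
  rw [Nat.choose_one_right, Nat.mul_div_cancel_left r (by norm_num)] at h1
  omega

lemma fact_ineq1 {r : ℕ} (hr : 0 < r) :
    2 * r.factorial ^ 2 ≤ (2 * r).factorial := by
  have h := Nat.choose_mul_factorial_mul_factorial (show r ≤ 2 * r by omega)
  rw [show 2 * r - r = r by omega] at h
  calc 2 * r.factorial ^ 2 = 2 * (r.factorial * r.factorial) := by ring
    _ ≤ (2 * r).choose r * (r.factorial * r.factorial) :=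
        Nat.mul_le_mul_right _ (choose_mid hr)
    _ = (2 * r).factorial := by rw [← h]; ring

lemma fact_ineq2 {r a b : ℕ} (ha : a ≤ r) (hb : b ≤ r) :
    2 * r.factorial ^ 2 * (a + b).factorial
      ≤ 2 * a.factorial * b.factorial * (2 * r).factorial := by
  have h1 : (a + b).choose a * a.factorial * b.factorial = (a + b).factorial := by
    have := Nat.choose_mul_factorial_mul_factorial (Nat.le_add_right a b)
    rwa [Nat.add_sub_cancel_left] at this
  have h2 : (2 * r).choose r * r.factorial * r.factorial = (2 * r).factorial := by
    have := Nat.choose_mul_factorial_mul_factorial (show r ≤ 2 * r by omega)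
    rwa [show 2 * r - r = r by omega] at this
  have hC : (a + b).choose a ≤ (2 * r).choose r := by
    refine le_trans (Nat.choose_le_choose a (show a + b ≤ 2 * r by omega)) ?_
    have := Nat.choose_le_middle a (2 * r)
    rwa [Nat.mul_div_cancel_left r (by norm_num)] at this
  calc 2 * r.factorial ^ 2 * (a + b).factorial
      = (a + b).choose a * (2 * (r.factorial * r.factorial) * (a.factorial * b.factorial)) := by
        rw [← h1]; ring
    _ ≤ (2 * r).choose r * (2 * (r.factorial * r.factorial) * (a.factorial * b.factorial)) :=
        Nat.mul_le_mul_right _ hC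
    _ = 2 * a.factorial * b.factorial * (2 * r).factorial := by rw [← h2]; ring

/-- For two disjoint sets `e`, `f` each of size at most `r` (`r ≥ 1`), a
uniformly random permutation of the ground set separates `e` and `f` with
probability at least `2(r!)²/(2r)!`. -/
theorem stmt6 {U : Type*} [Fintype U] [DecidableEq U] (r : ℕ) (hr : 0 < r)
    (e f : Finset U) (he : e.card ≤ r) (hf : f.card ≤ r)
    (hef : Disjoint e f) :
    (2 * (Nat.factorial r : ℝ) ^ 2 / (Nat.factorial (2 * r) : ℝ)) ≤
      (Nat.card {σ : U ≃ Fin (Fintype.card U) // SepF σ e f} : ℝ) /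
        (Nat.card (U ≃ Fin (Fintype.card U)) : ℝ) := by
  have c1 : Nat.card (U ≃ Fin (Fintype.card U)) = (Fintype.card U).factorial := by
    rw [Nat.card_eq_fintype_card]
    exact Fintype.card_equiv (Fintype.equivFin U)
  have hNpos : 0 < (Nat.card (U ≃ Fin (Fintype.card U)) : ℝ) := by
    rw [c1]
    exact_mod_cast (Fintype.card U).factorial_pos
  have h2rpos : 0 < ((2 * r).factorial : ℝ) := by exact_mod_cast (2 * r).factorial_pos
  by_cases he0 : e.Nonempty
  · by_cases hf0 : f.Nonempty
    · -- main case
      have key := SepAux.key_count e f he0 hf0 hef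
      rw [div_le_div_iff₀ h2rpos hNpos, c1]
      have main : 2 * r.factorial ^ 2 * (Fintype.card U).factorial
          ≤ Nat.card {σ : U ≃ Fin (Fintype.card U) // SepF σ e f} * (2 * r).factorial := by
        have step : (2 * r.factorial ^ 2 * (Fintype.card U).factorial)
              * (2 * e.card.factorial * f.card.factorial * (e.card + f.card).factorial)
            ≤ (Nat.card {σ : U ≃ Fin (Fintype.card U) // SepF σ e f} * (2 * r).factorial)
              * (2 * e.card.factorial * f.card.factorial * (e.card + f.card).factorial) := by
          calc (2 * r.factorial ^ 2 * (Fintype.card U).factorial)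
                * (2 * e.card.factorial * f.card.factorial * (e.card + f.card).factorial)
              = (2 * r.factorial ^ 2 * (e.card + f.card).factorial)
                * (2 * e.card.factorial * f.card.factorial * (Fintype.card U).factorial) := by
                ring
            _ ≤ (2 * e.card.factorial * f.card.factorial * (2 * r).factorial)
                * (Nat.card {σ : U ≃ Fin (Fintype.card U) // SepF σ e f}
                    * (e.card + f.card).factorial) :=
                Nat.mul_le_mul (fact_ineq2 he hf) key
            _ = _ := by ring
        refine Nat.le_of_mul_le_mul_right step ?_
        have := e.card.factorial_pos
        have := f.card.factorial_pos
        have := (e.card + f.card).factorial_pos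
        positivity
      exact_mod_cast main
    · -- f empty
      have hall : ∀ σ : U ≃ Fin (Fintype.card U), SepF σ e f := by
        intro σ
        left
        intro a ha b hb
        rw [Finset.not_nonempty_iff_eq_empty.mp hf0] at hb
        exact absurd hb (Finset.notMem_empty b)
      rw [Nat.card_congr (Equiv.subtypeUnivEquiv hall), div_self (ne_of_gt hNpos),
        div_le_one h2rpos]
      exact_mod_cast fact_ineq1 hr
  · -- e empty
    have hall : ∀ σ : U ≃ Fin (Fintype.card U), SepF σ e f := by
      intro σ
      left
      intro a ha b hb
      rw [Finset.not_nonempty_iff_eq_empty.mp he0] at ha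
      exact absurd ha (Finset.notMem_empty a)
    rw [Nat.card_congr (Equiv.subtypeUnivEquiv hall), div_self (ne_of_gt hNpos),
      div_le_one h2rpos]
    exact_mod_cast fact_ineq1 hr
end

section
/- For any graph G on n vertices, there exists a family of at most 6.84·log₂ n permutations of V(G) that is simultaneously pairwise suitable and 3-mixing for G; in particular π(G) ≤ π*(G) ≤ 6.84·log₂ n. -/
/-- A permutation `σ` separates two sets `A`, `B`: all of `A` comes before all
of `B`, or vice versa. -/
def SepPerm {V : Type*} {n : ℕ} (σ : V ≃ Fin n) (A B : Set V) : Prop :=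
  (∀ a ∈ A, ∀ b ∈ B, σ a < σ b) ∨ (∀ a ∈ A, ∀ b ∈ B, σ b < σ a)

/-- A family of permutations is pairwise suitable for a graph `G` if every
pair of disjoint edges is separated by some member of the family. -/
def PWSuitable {V : Type*} [Fintype V] (G : SimpleGraph V)
    {k : ℕ} (F : Fin k → (V ≃ Fin (Fintype.card V))) : Prop :=
  ∀ e ∈ G.edgeSet, ∀ f ∈ G.edgeSet, (∀ x, ¬(x ∈ e ∧ x ∈ f)) →
    ∃ i, SepPerm (F i) {x | x ∈ e} {x | x ∈ f}

/-- The separation dimension of a graph: the minimum size of a pairwise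
suitable family of permutations of the vertex set. -/
noncomputable def sepDim {V : Type*} [Fintype V] (G : SimpleGraph V) : ℕ :=
  sInf {k : ℕ | ∃ F : Fin k → (V ≃ Fin (Fintype.card V)), PWSuitable G F}

/-- A family of permutations is 3-mixing for `G`: for every two adjacent edges
`{a,b}`, `{a,c}`, some permutation places `a` strictly between `b` and `c`. -/
def Mixing3 {V : Type*} [Fintype V] (G : SimpleGraph V)
    {k : ℕ} (F : Fin k → (V ≃ Fin (Fintype.card V))) : Prop :=
  ∀ a b c : V, G.Adj a b → G.Adj a c → b ≠ c →
    ∃ i, ((F i) b < (F i) a ∧ (F i) a < (F i) c) ∨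
         ((F i) c < (F i) a ∧ (F i) a < (F i) b)

/-- `π*(G)`: minimum size of a family of permutations that is simultaneously
pairwise suitable and 3-mixing for `G`. -/
noncomputable def sepStarDim {V : Type*} [Fintype V] (G : SimpleGraph V) : ℕ :=
  sInf {k : ℕ | ∃ F : Fin k → (V ≃ Fin (Fintype.card V)),
    PWSuitable G F ∧ Mixing3 G F}

open Finset

section Patt
variable {m : ℕ} {α : Type*} [LinearOrder α] [DecidableEq α] [Fintype α]

noncomputable def patt (x : Fin m → α) : Equiv.Perm (Fin m) :=
  if hx : Function.Injective x then
    Equiv.ofBijective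
      (fun i => ((univ.image x).orderIsoOfFin
        (by rw [card_image_of_injective _ hx, card_univ, Fintype.card_fin])).symm
        ⟨x i, mem_image_of_mem x (mem_univ i)⟩)
      (Finite.injective_iff_bijective.mp (fun i j h => hx (by
        have := congrArg (((univ.image x).orderIsoOfFin
          (by rw [card_image_of_injective _ hx, card_univ, Fintype.card_fin]))) h
        simpa [Subtype.ext_iff] using this)))
  else 1

lemma patt_lt_iff {x : Fin m → α} (hx : Function.Injective x) (i j : Fin m) :
    patt x i < patt x j ↔ x i < x j := by
  rw [patt, dif_pos hx]
  exact (OrderIso.lt_iff_lt ((univ.image x).orderIsoOfFin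
    (by rw [card_image_of_injective _ hx, card_univ, Fintype.card_fin])).symm).trans (Subtype.mk_lt_mk (α := α))

lemma perm_eq_of_lt_iff {p q : Equiv.Perm (Fin m)}
    (h : ∀ i j, p i < p j ↔ q i < q j) : p = q := by
  have hsm : StrictMono (fun i => q (p.symm i)) := by
    intro i j hij
    rw [← h]
    simpa using hij
  have hr : Set.range (fun i => q (p.symm i)) = Set.range (id : Fin m → Fin m) := by
    rw [Set.range_id]
    exact Set.eq_univ_of_forall (fun i => ⟨p (q.symm i), by simp⟩)
  have hwf : WellFoundedLT (Fin m) := inferInstance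
  have heq := (@StrictMono.range_inj (Fin m) (Fin m) _ _ hwf _ _ hsm strictMono_id).mp hr
  ext i
  have := congrFun heq (p i)
  simp only [Equiv.symm_apply_apply, id_eq] at this
  exact Fin.val_eq_of_eq this.symm

lemma patt_comp {x : Fin m → α} (hx : Function.Injective x) (g : Equiv.Perm (Fin m)) :
    patt (x ∘ g) = patt x * g := by
  apply perm_eq_of_lt_iff
  intro i j
  rw [patt_lt_iff (hx.comp g.injective)]
  simp only [Equiv.Perm.mul_apply]
  rw [patt_lt_iff hx]
  exact Iff.rfl

end Patt

section Core
variable {V : Type*} [Fintype V] [DecidableEq V]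

lemma core_count {m : ℕ} (f : Fin m → V) (hf : Function.Injective f)
    (GS : Finset (Equiv.Perm (Fin m)))
    (P : (V ≃ Fin (Fintype.card V)) → Prop) [DecidablePred P]
    (hP : ∀ σ : V ≃ Fin (Fintype.card V), P σ ↔ patt (⇑σ ∘ f) ∈ GS) :
    Nat.factorial m * (univ.filter P).card
      = GS.card * Fintype.card (V ≃ Fin (Fintype.card V)) := by
  classical
  let A : Equiv.Perm (Fin m) → (V ≃ Fin (Fintype.card V)) → (V ≃ Fin (Fintype.card V)) :=
    fun g σ => (g.viaFintypeEmbedding ⟨f, hf⟩).trans σ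
  have hAdef : ∀ g σ, A g σ = (g.viaFintypeEmbedding ⟨f, hf⟩).trans σ := fun _ _ => rfl
  have hA : ∀ g σ i, (A g σ) (f i) = σ (f (g i)) := by
    intro g σ i
    exact congrArg σ (Equiv.Perm.viaFintypeEmbedding_apply_image g ⟨f, hf⟩ i)
  have hcomp : ∀ g σ, ⇑(A g σ) ∘ f = (⇑σ ∘ f) ∘ ⇑g := by
    intro g σ; funext i; exact hA g σ i
  have key1 : ∀ g σ, P (A g σ) ↔ (patt (⇑σ ∘ f)) * g ∈ GS := by
    intro g σ
    rw [hP, hcomp, patt_comp (σ.injective.comp hf) g]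
  have inner : ∀ σ, (univ.filter fun g => P (A g σ)).card = GS.card := by
    intro σ
    apply Finset.card_bij (fun g _ => (patt (⇑σ ∘ f)) * g)
    · intro g hg; rw [mem_filter] at hg; exact (key1 g σ).mp hg.2
    · intro g₁ h₁ g₂ h₂ h; exact mul_left_cancel h
    · intro h hh
      refine ⟨(patt (⇑σ ∘ f))⁻¹ * h, ?_, ?_⟩
      · rw [mem_filter]
        refine ⟨mem_univ _, (key1 _ σ).mpr ?_⟩
        simpa [mul_assoc] using hh
      · simp [mul_assoc]
  have outer : ∀ g, (univ.filter fun σ => P (A g σ)).card = (univ.filter P).card := by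
    intro g
    apply Finset.card_bij (fun σ _ => A g σ)
    · intro σ hσ; rw [mem_filter] at hσ; exact mem_filter.mpr ⟨mem_univ _, hσ.2⟩
    · intro σ₁ h₁ σ₂ h₂ h
      have := congrArg (fun τ => (g.viaFintypeEmbedding ⟨f, hf⟩).symm.trans τ) h
      simpa [hAdef, ← Equiv.trans_assoc] using this
    · intro τ hτ
      refine ⟨(g.viaFintypeEmbedding ⟨f, hf⟩).symm.trans τ, ?_, ?_⟩
      · rw [mem_filter]
        refine ⟨mem_univ _, ?_⟩
        have : A g ((g.viaFintypeEmbedding ⟨f, hf⟩).symm.trans τ) = τ := by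
          simp [hAdef, ← Equiv.trans_assoc]
        rw [this]; exact (mem_filter.mp hτ).2
      · simp [hAdef, ← Equiv.trans_assoc]
  have dbl : ∑ g : Equiv.Perm (Fin m), (univ.filter fun σ => P (A g σ)).card
      = ∑ σ : V ≃ Fin (Fintype.card V), (univ.filter fun g => P (A g σ)).card := by
    simp_rw [Finset.card_filter]
    exact Finset.sum_comm
  have lhs : ∑ g : Equiv.Perm (Fin m), (univ.filter fun σ => P (A g σ)).card
      = Nat.factorial m * (univ.filter P).card := by
    simp_rw [outer]
    simp [Fintype.card_perm]
  have rhs : ∑ σ : V ≃ Fin (Fintype.card V), (univ.filter fun g => P (A g σ)).card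
      = GS.card * Fintype.card (V ≃ Fin (Fintype.card V)) := by
    simp_rw [inner]
    simp [mul_comm]
  rw [← lhs, dbl, rhs]

end Core

section Events
variable {V : Type*} [Fintype V] [DecidableEq V]

lemma GS4_card : ((univ : Finset (Equiv.Perm (Fin 4))).filter (fun h =>
    (h 0 < h 2 ∧ h 0 < h 3 ∧ h 1 < h 2 ∧ h 1 < h 3) ∨
    (h 2 < h 0 ∧ h 3 < h 0 ∧ h 2 < h 1 ∧ h 3 < h 1))).card = 8 := by decide

lemma GS3_card : ((univ : Finset (Equiv.Perm (Fin 3))).filter (fun h =>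
    (h 1 < h 0 ∧ h 0 < h 2) ∨ (h 2 < h 0 ∧ h 0 < h 1))).card = 2 := by decide

lemma sep_count (a b c d : V) (hab : a ≠ b) (hcd : c ≠ d)
    (hac : a ≠ c) (had : a ≠ d) (hbc : b ≠ c) (hbd : b ≠ d)
    (P : (V ≃ Fin (Fintype.card V)) → Prop) [DecidablePred P]
    (hPdef : ∀ σ, P σ ↔ SepPerm σ {x | x ∈ s(a, b)} {x | x ∈ s(c, d)}) :
    3 * (univ.filter P).card = Fintype.card (V ≃ Fin (Fintype.card V)) := by
  classical
  have hf4 : Function.Injective (![a, b, c, d] : Fin 4 → V) := by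
    intro i j h
    fin_cases i <;> fin_cases j <;> simp_all <;> simp_all [eq_comm]
  have key := core_count (![a, b, c, d] : Fin 4 → V) hf4
    ((univ : Finset (Equiv.Perm (Fin 4))).filter (fun h =>
      (h 0 < h 2 ∧ h 0 < h 3 ∧ h 1 < h 2 ∧ h 1 < h 3) ∨
      (h 2 < h 0 ∧ h 3 < h 0 ∧ h 2 < h 1 ∧ h 3 < h 1))) P ?_
  · rw [GS4_card] at key
    have h24 : Nat.factorial 4 = 24 := by norm_num [Nat.factorial]
    rw [h24] at key
    omega
  · intro σ
    have hpl := patt_lt_iff (σ.injective.comp hf4)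
    have h0 : (![a, b, c, d] : Fin 4 → V) 0 = a := rfl
    have h1 : (![a, b, c, d] : Fin 4 → V) 1 = b := rfl
    have h2 : (![a, b, c, d] : Fin 4 → V) 2 = c := rfl
    have h3 : (![a, b, c, d] : Fin 4 → V) 3 = d := rfl
    rw [hPdef, SepPerm]
    rw [mem_filter]
    simp only [mem_univ, true_and, hpl, Function.comp_apply, h0, h1, h2, h3]
    constructor
    · rintro (h | h)
      · exact Or.inl ⟨h a (by simp) c (by simp), h a (by simp) d (by simp),
          h b (by simp [Sym2.mem_iff]) c (by simp), h b (by simp [Sym2.mem_iff]) d (by simp [Sym2.mem_iff])⟩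
      · exact Or.inr ⟨h a (by simp) c (by simp), h a (by simp) d (by simp [Sym2.mem_iff]),
          h b (by simp [Sym2.mem_iff]) c (by simp), h b (by simp [Sym2.mem_iff]) d (by simp [Sym2.mem_iff])⟩
    · rintro (⟨u1, u2, u3, u4⟩ | ⟨u1, u2, u3, u4⟩)
      · left
        intro x hx y hy
        simp only [Set.mem_setOf_eq, Sym2.mem_iff] at hx hy
        rcases hx with rfl | rfl <;> rcases hy with rfl | rfl <;> assumption
      · right
        intro x hx y hy
        simp only [Set.mem_setOf_eq, Sym2.mem_iff] at hx hy
        rcases hx with rfl | rfl <;> rcases hy with rfl | rfl <;> assumption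

lemma mix_count (a b c : V) (hab : a ≠ b) (hac : a ≠ c) (hbc : b ≠ c)
    (P : (V ≃ Fin (Fintype.card V)) → Prop) [DecidablePred P]
    (hPdef : ∀ σ, P σ ↔ ((σ b < σ a ∧ σ a < σ c) ∨ (σ c < σ a ∧ σ a < σ b))) :
    3 * (univ.filter P).card = Fintype.card (V ≃ Fin (Fintype.card V)) := by
  classical
  have hf3 : Function.Injective (![a, b, c] : Fin 3 → V) := by
    intro i j h
    fin_cases i <;> fin_cases j <;> simp_all <;> simp_all [eq_comm]
  have key := core_count (![a, b, c] : Fin 3 → V) hf3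
    ((univ : Finset (Equiv.Perm (Fin 3))).filter (fun h =>
      (h 1 < h 0 ∧ h 0 < h 2) ∨ (h 2 < h 0 ∧ h 0 < h 1))) P ?_
  · rw [GS3_card] at key
    have h6 : Nat.factorial 3 = 6 := by norm_num [Nat.factorial]
    rw [h6] at key
    omega
  · intro σ
    have hpl := patt_lt_iff (σ.injective.comp hf3)
    rw [hPdef, mem_filter]
    simp only [mem_univ, true_and, hpl, Function.comp_apply]
    rfl

end Events

lemma numeric_hlp (n E1c E2c : ℕ)
    (h1 : (E1c : ℝ) ≤ ((n : ℝ) * ((n : ℝ) - 1) / 2) ^ 2)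
    (h2 : (E2c : ℝ) ≤ (n : ℝ) * ((n : ℝ) * (n : ℝ) - (n : ℝ))) :
    (E1c + E2c) * 2 ^ (⌊(6.84 : ℝ) * Real.logb 2 (n : ℝ)⌋₊)
      < 3 ^ (⌊(6.84 : ℝ) * Real.logb 2 (n : ℝ)⌋₊) := by
  set k := ⌊(6.84 : ℝ) * Real.logb 2 (n : ℝ)⌋₊ with hk
  rcases le_or_gt n 1 with hn | hn
  · have ht1 : (n : ℝ) ≤ 1 := by exact_mod_cast hn
    have ht0 : (0 : ℝ) ≤ n := Nat.cast_nonneg n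
    have hz1 : (E1c : ℝ) ≤ 0 := h1.trans (by nlinarith)
    have hz2 : (E2c : ℝ) ≤ 0 := h2.trans (by nlinarith)
    have : E1c = 0 := by exact_mod_cast le_antisymm (by exact_mod_cast hz1) (Nat.zero_le _)
    have h2' : E2c = 0 := by exact_mod_cast le_antisymm (by exact_mod_cast hz2) (Nat.zero_le _)
    have h3 : 0 < (3:ℕ) ^ k := pow_pos (by norm_num) k
    simpa [this, h2'] using h3
  · -- n ≥ 2
    have ht : (2 : ℝ) ≤ (n : ℝ) := by exact_mod_cast hn
    set t := (n : ℝ) with htdef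
    have ht0 : (0 : ℝ) < t := by linarith
    have ht1 : (1 : ℝ) ≤ t := by linarith
    -- key log inequality
    have hlog2 : (0 : ℝ) < Real.log 2 := Real.log_pos (by norm_num)
    have hbig : (4 : ℝ) * Real.log 2 ≤ 6.84 * Real.log (3 / 2) := by
      have hp : (2 : ℝ) ^ (1084 : ℕ) ≤ 3 ^ (684 : ℕ) := by
        exact_mod_cast (show (2:ℕ) ^ 1084 ≤ 3 ^ 684 from by
          set_option maxRecDepth 100000 in exact Nat.le_of_ble_eq_true rfl)
      have hq : (2 : ℝ) ^ (400 : ℕ) ≤ (3 / 2 : ℝ) ^ (684 : ℕ) := by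
        rw [div_pow, le_div_iff₀ (by positivity)]
        calc (2:ℝ) ^ (400:ℕ) * 2 ^ (684:ℕ) = 2 ^ (1084:ℕ) := by rw [← pow_add]
          _ ≤ 3 ^ (684:ℕ) := hp
      have hl := Real.log_le_log (by positivity) hq
      rw [Real.log_pow, Real.log_pow] at hl
      push_cast at hl
      linarith
    have hlogt : (0 : ℝ) ≤ Real.log t := Real.log_nonneg ht1
    -- main chain
    have hx : (6.84 : ℝ) * Real.logb 2 t = 6.84 * (Real.log t / Real.log 2) := by
      rw [Real.logb]
    have hchain : (2 / 3 : ℝ) * t ^ (4 : ℕ) ≤ (3 / 2 : ℝ) ^ k := by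
      have hklb : (6.84 : ℝ) * Real.logb 2 t - 1 ≤ (k : ℝ) :=
        le_of_lt (Nat.sub_one_lt_floor _)
      have h32 : (1 : ℝ) < 3 / 2 := by norm_num
      have hr1 : ((3 : ℝ) / 2) ^ ((6.84 : ℝ) * Real.logb 2 t - 1)
          ≤ (3 / 2 : ℝ) ^ ((k : ℕ) : ℝ) :=
        Real.rpow_le_rpow_left_iff h32 |>.mpr hklb
      rw [Real.rpow_natCast] at hr1
      have hr2 : ((3 : ℝ) / 2) ^ ((6.84 : ℝ) * Real.logb 2 t - 1)
          = (2 / 3 : ℝ) * ((3 : ℝ) / 2) ^ ((6.84 : ℝ) * Real.logb 2 t) := by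
        rw [Real.rpow_sub (by norm_num), Real.rpow_one]
        ring
      have hr3 : t ^ (4 : ℕ) ≤ ((3 : ℝ) / 2) ^ ((6.84 : ℝ) * Real.logb 2 t) := by
        rw [Real.rpow_def_of_pos (by norm_num : (0:ℝ) < 3/2)]
        have htpow : t ^ (4 : ℕ) = Real.exp (Real.log t * 4) := by
          rw [← Real.rpow_natCast t 4, Real.rpow_def_of_pos ht0]
          norm_num
        rw [htpow]
        apply Real.exp_le_exp.mpr
        rw [hx]
        have hmul := mul_le_mul_of_nonneg_right hbig
          (div_nonneg hlogt (le_of_lt hlog2))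
        have hcancel : (4 : ℝ) * Real.log 2 * (Real.log t / Real.log 2)
            = Real.log t * 4 := by
          field_simp
        rw [hcancel] at hmul
        calc Real.log t * 4 ≤ 6.84 * Real.log (3/2) * (Real.log t / Real.log 2) := hmul
          _ = Real.log (3/2) * (6.84 * (Real.log t / Real.log 2)) := by ring
      calc (2/3 : ℝ) * t ^ (4:ℕ) ≤ (2/3 : ℝ) * ((3:ℝ)/2) ^ ((6.84:ℝ) * Real.logb 2 t) := by
            apply mul_le_mul_of_nonneg_left hr3 (by norm_num)
        _ = ((3:ℝ)/2) ^ ((6.84:ℝ) * Real.logb 2 t - 1) := hr2.symm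
        _ ≤ (3/2 : ℝ) ^ k := hr1
    have hS : (E1c : ℝ) + E2c < (2/3 : ℝ) * t ^ (4 : ℕ) := by nlinarith
    have hfin : ((E1c + E2c : ℕ) : ℝ) * 2 ^ k < 3 ^ k := by
      push_cast
      calc ((E1c : ℝ) + E2c) * 2 ^ k < ((2/3 : ℝ) * t ^ (4:ℕ)) * 2 ^ k := by
            apply mul_lt_mul_of_pos_right hS (by positivity)
        _ ≤ (3/2 : ℝ) ^ k * 2 ^ k := by
            apply mul_le_mul_of_nonneg_right hchain (by positivity)
        _ = 3 ^ k := by rw [← mul_pow]; norm_num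
    exact_mod_cast hfin

lemma card_tuple {Ω : Type*} [Fintype Ω] [DecidableEq Ω] (k : ℕ)
    (Q : Ω → Prop) [DecidablePred Q] :
    ((univ : Finset (Fin k → Ω)).filter fun F => ∀ i, Q (F i)).card
      = ((univ : Finset Ω).filter Q).card ^ k := by
  rw [← Fintype.card_piFinset_const]
  congr 1
  apply Finset.ext
  intro F
  simp [Fintype.mem_piFinset]

/-- For any graph `G` on `n` vertices there is a family of at most
`6.84·log₂ n` permutations that is both pairwise suitable and 3-mixing; in
particular `π(G) ≤ π*(G) ≤ 6.84·log₂ n`. -/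
theorem stmt7 {V : Type*} [Fintype V] [DecidableEq V] (G : SimpleGraph V) :
    (∃ (k : ℕ) (F : Fin k → (V ≃ Fin (Fintype.card V))),
      (k : ℝ) ≤ 6.84 * Real.logb 2 (Fintype.card V) ∧
      PWSuitable G F ∧ Mixing3 G F) ∧
    sepDim G ≤ sepStarDim G ∧
    (sepStarDim G : ℝ) ≤ 6.84 * Real.logb 2 (Fintype.card V) := by

  classical
  set k := ⌊(6.84 : ℝ) * Real.logb 2 ((Fintype.card V : ℕ) : ℝ)⌋₊ with hkdef
  have hΩne : Nonempty (V ≃ Fin (Fintype.card V)) := ⟨Fintype.equivFin V⟩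
  have hNpos : 0 < Fintype.card (V ≃ Fin (Fintype.card V)) := Fintype.card_pos_iff.mpr hΩne
  -- event sets
  set E1 : Finset (Sym2 V × Sym2 V) := (G.edgeFinset ×ˢ G.edgeFinset).filter
    (fun p => ∀ x, ¬(x ∈ p.1 ∧ x ∈ p.2)) with hE1
  set E2 : Finset (V × V × V) := ((univ : Finset V) ×ˢ (univ : Finset V).offDiag).filter
    (fun p => G.Adj p.1 p.2.1 ∧ G.Adj p.1 p.2.2) with hE2
  -- numeric bound
  have hnum : (E1.card + E2.card) * 2 ^ k < 3 ^ k := by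
    apply numeric_hlp (Fintype.card V)
    · calc (E1.card : ℝ) ≤ ((G.edgeFinset ×ˢ G.edgeFinset).card : ℝ) := by
            exact_mod_cast Finset.card_filter_le _ _
        _ = (G.edgeFinset.card : ℝ) ^ 2 := by
            rw [Finset.card_product]; push_cast; ring
        _ ≤ (((Fintype.card V).choose 2 : ℕ) : ℝ) ^ 2 := by
            gcongr
            exact_mod_cast G.card_edgeFinset_le_card_choose_two
        _ = ((Fintype.card V : ℝ) * ((Fintype.card V : ℝ) - 1) / 2) ^ 2 := by
            rw [Nat.cast_choose_two]
    · calc (E2.card : ℝ) ≤ (((univ : Finset V) ×ˢ (univ : Finset V).offDiag).card : ℝ) := by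
            exact_mod_cast Finset.card_filter_le _ _
        _ = (Fintype.card V : ℝ) * (((univ : Finset V).offDiag.card : ℕ) : ℝ) := by
            rw [Finset.card_product, Finset.card_univ]; push_cast; ring
        _ ≤ (Fintype.card V : ℝ) * ((Fintype.card V : ℝ) * (Fintype.card V : ℝ)
              - (Fintype.card V : ℝ)) := by
            rw [Finset.offDiag_card, Finset.card_univ]
            rcases Nat.eq_zero_or_pos (Fintype.card V) with h0 | h0
            · rw [h0]; norm_num
            · have hle : Fintype.card V ≤ Fintype.card V * Fintype.card V :=
                Nat.le_mul_of_pos_left _ h0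
              rw [Nat.cast_sub hle]
              push_cast
              apply le_refl
  -- bad-event counting
  have hbadS : ∀ p ∈ E1, 3 * ((univ : Finset (V ≃ Fin (Fintype.card V))).filter
      (fun σ => ¬ SepPerm σ {x | x ∈ p.1} {x | x ∈ p.2})).card
      ≤ 2 * Fintype.card (V ≃ Fin (Fintype.card V)) := by
    intro p hp
    rw [hE1, Finset.mem_filter, Finset.mem_product] at hp
    obtain ⟨⟨he, hf⟩, hdisj⟩ := hp
    obtain ⟨a, b, hab_eq⟩ : ∃ a b, p.1 = s(a, b) :=
      Sym2.inductionOn p.1 (fun x y => ⟨x, y, rfl⟩)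
    obtain ⟨c, d, hcd_eq⟩ : ∃ c d, p.2 = s(c, d) :=
      Sym2.inductionOn p.2 (fun x y => ⟨x, y, rfl⟩)
    rw [SimpleGraph.mem_edgeFinset, hab_eq, SimpleGraph.mem_edgeSet] at he
    rw [SimpleGraph.mem_edgeFinset, hcd_eq, SimpleGraph.mem_edgeSet] at hf
    have hdisj' : ∀ x, ¬(x ∈ s(a, b) ∧ x ∈ s(c, d)) := by
      intro x; rw [← hab_eq, ← hcd_eq]; exact hdisj x
    have hac : a ≠ c := fun h =>
      hdisj' a ⟨Sym2.mem_mk_left a b, h ▸ Sym2.mem_mk_left c d⟩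
    have had : a ≠ d := fun h =>
      hdisj' a ⟨Sym2.mem_mk_left a b, h ▸ Sym2.mem_mk_right c d⟩
    have hbc : b ≠ c := fun h =>
      hdisj' b ⟨Sym2.mem_mk_right a b, h ▸ Sym2.mem_mk_left c d⟩
    have hbd : b ≠ d := fun h =>
      hdisj' b ⟨Sym2.mem_mk_right a b, h ▸ Sym2.mem_mk_right c d⟩
    have hgood := sep_count a b c d (G.ne_of_adj he) (G.ne_of_adj hf) hac had hbc hbd
      (fun σ : V ≃ Fin (Fintype.card V) => SepPerm σ {x | x ∈ p.1} {x | x ∈ p.2})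
      (by intro σ; rw [hab_eq, hcd_eq])
    have hsplit := Finset.card_filter_add_card_filter_not
      (s := (univ : Finset (V ≃ Fin (Fintype.card V))))
      (p := fun σ => SepPerm σ {x | x ∈ p.1} {x | x ∈ p.2})
    rw [Finset.card_univ] at hsplit
    omega
  have hbadM : ∀ p ∈ E2, 3 * ((univ : Finset (V ≃ Fin (Fintype.card V))).filter
      (fun σ => ¬((σ p.2.1 < σ p.1 ∧ σ p.1 < σ p.2.2) ∨
        (σ p.2.2 < σ p.1 ∧ σ p.1 < σ p.2.1)))).card
      ≤ 2 * Fintype.card (V ≃ Fin (Fintype.card V)) := by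
    intro p hp
    rw [hE2, Finset.mem_filter, Finset.mem_product, Finset.mem_offDiag] at hp
    obtain ⟨⟨-, -, -, hbc⟩, hadj1, hadj2⟩ := hp
    have hgood := mix_count p.1 p.2.1 p.2.2 (G.ne_of_adj hadj1) (G.ne_of_adj hadj2) hbc
      (fun σ : V ≃ Fin (Fintype.card V) => (σ p.2.1 < σ p.1 ∧ σ p.1 < σ p.2.2) ∨
        (σ p.2.2 < σ p.1 ∧ σ p.1 < σ p.2.1))
      (fun σ => Iff.rfl)
    have hsplit := Finset.card_filter_add_card_filter_not
      (s := (univ : Finset (V ≃ Fin (Fintype.card V))))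
      (p := fun σ => (σ p.2.1 < σ p.1 ∧ σ p.1 < σ p.2.2) ∨
        (σ p.2.2 < σ p.1 ∧ σ p.1 < σ p.2.1))
    rw [Finset.card_univ] at hsplit
    omega
  -- existence of a good family
  have hex : ∃ F : Fin k → (V ≃ Fin (Fintype.card V)), PWSuitable G F ∧ Mixing3 G F := by
    by_contra hcon
    push_neg at hcon
    have hsub : (univ : Finset (Fin k → (V ≃ Fin (Fintype.card V)))) ⊆
        E1.biUnion (fun p => univ.filter fun F : Fin k → (V ≃ Fin (Fintype.card V)) =>
          ∀ i, ¬ SepPerm (F i) {x | x ∈ p.1} {x | x ∈ p.2})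
        ∪ E2.biUnion (fun p => univ.filter fun F : Fin k → (V ≃ Fin (Fintype.card V)) =>
          ∀ i, ¬(((F i) p.2.1 < (F i) p.1 ∧ (F i) p.1 < (F i) p.2.2) ∨
            ((F i) p.2.2 < (F i) p.1 ∧ (F i) p.1 < (F i) p.2.1))) := by
      intro F _
      by_cases hPW' : PWSuitable G F
      · have hnm : ¬ Mixing3 G F := hcon F hPW'
        rw [Mixing3] at hnm
        push_neg at hnm
        obtain ⟨a, b, c, hadj1, hadj2, hbc, hall⟩ := hnm
        apply Finset.mem_union_right
        apply Finset.mem_biUnion.mpr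
        refine ⟨(a, (b, c)), ?_, ?_⟩
        · rw [hE2, Finset.mem_filter, Finset.mem_product, Finset.mem_offDiag]
          exact ⟨⟨Finset.mem_univ _, Finset.mem_univ _, Finset.mem_univ _, hbc⟩, hadj1, hadj2⟩
        · rw [Finset.mem_filter]
          refine ⟨Finset.mem_univ _, fun i => ?_⟩
          rintro (⟨u, v⟩ | ⟨u, v⟩)
          · exact ((hall i).1 u).not_gt v
          · exact ((hall i).2 u).not_gt v
      · rw [PWSuitable] at hPW'
        push_neg at hPW'
        obtain ⟨e, he, f, hf, hd, hall⟩ := hPW'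
        apply Finset.mem_union_left
        apply Finset.mem_biUnion.mpr
        refine ⟨(e, f), ?_, ?_⟩
        · rw [hE1, Finset.mem_filter, Finset.mem_product]
          exact ⟨⟨SimpleGraph.mem_edgeFinset.mpr he, SimpleGraph.mem_edgeFinset.mpr hf⟩,
            fun x hx => hd x hx.1 hx.2⟩
        · rw [Finset.mem_filter]
          exact ⟨Finset.mem_univ _, hall⟩
    have hcard := Finset.card_le_card hsub
    rw [Finset.card_univ] at hcard
    have hcardfun : Fintype.card (Fin k → (V ≃ Fin (Fintype.card V)))
        = Fintype.card (V ≃ Fin (Fintype.card V)) ^ k := by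
      rw [Fintype.card_fun, Fintype.card_fin]
    rw [hcardfun] at hcard
    have hcard2 : Fintype.card (V ≃ Fin (Fintype.card V)) ^ k ≤
        (∑ p ∈ E1, ((univ : Finset (V ≃ Fin (Fintype.card V))).filter
          (fun σ => ¬ SepPerm σ {x | x ∈ p.1} {x | x ∈ p.2})).card ^ k)
        + (∑ p ∈ E2, ((univ : Finset (V ≃ Fin (Fintype.card V))).filter
          (fun σ => ¬((σ p.2.1 < σ p.1 ∧ σ p.1 < σ p.2.2) ∨
            (σ p.2.2 < σ p.1 ∧ σ p.1 < σ p.2.1)))).card ^ k) := by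
      refine hcard.trans ?_
      refine (Finset.card_union_le _ _).trans ?_
      apply Nat.add_le_add
      · refine (Finset.card_biUnion_le).trans ?_
        apply Finset.sum_le_sum
        intro p _
        rw [card_tuple k (fun σ : V ≃ Fin (Fintype.card V) =>
          ¬ SepPerm σ {x | x ∈ p.1} {x | x ∈ p.2})]
      · refine (Finset.card_biUnion_le).trans ?_
        apply Finset.sum_le_sum
        intro p _
        rw [card_tuple k (fun σ : V ≃ Fin (Fintype.card V) =>
          ¬((σ p.2.1 < σ p.1 ∧ σ p.1 < σ p.2.2) ∨
            (σ p.2.2 < σ p.1 ∧ σ p.1 < σ p.2.1)))]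
    have hmul : 3 ^ k * Fintype.card (V ≃ Fin (Fintype.card V)) ^ k
        ≤ (E1.card + E2.card) * (2 ^ k * Fintype.card (V ≃ Fin (Fintype.card V)) ^ k) := by
      calc 3 ^ k * Fintype.card (V ≃ Fin (Fintype.card V)) ^ k
          ≤ 3 ^ k * ((∑ p ∈ E1, ((univ : Finset (V ≃ Fin (Fintype.card V))).filter
              (fun σ => ¬ SepPerm σ {x | x ∈ p.1} {x | x ∈ p.2})).card ^ k)
            + (∑ p ∈ E2, ((univ : Finset (V ≃ Fin (Fintype.card V))).filter
              (fun σ => ¬((σ p.2.1 < σ p.1 ∧ σ p.1 < σ p.2.2) ∨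
                (σ p.2.2 < σ p.1 ∧ σ p.1 < σ p.2.1)))).card ^ k)) :=
            Nat.mul_le_mul_left _ hcard2
        _ = (∑ p ∈ E1, (3 * ((univ : Finset (V ≃ Fin (Fintype.card V))).filter
              (fun σ => ¬ SepPerm σ {x | x ∈ p.1} {x | x ∈ p.2})).card) ^ k)
            + (∑ p ∈ E2, (3 * ((univ : Finset (V ≃ Fin (Fintype.card V))).filter
              (fun σ => ¬((σ p.2.1 < σ p.1 ∧ σ p.1 < σ p.2.2) ∨
                (σ p.2.2 < σ p.1 ∧ σ p.1 < σ p.2.1)))).card) ^ k) := by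
            rw [Nat.mul_add, Finset.mul_sum, Finset.mul_sum]
            congr 1 <;> exact Finset.sum_congr rfl (fun p _ => by rw [mul_pow])
        _ ≤ (∑ _p ∈ E1, (2 * Fintype.card (V ≃ Fin (Fintype.card V))) ^ k)
            + (∑ _p ∈ E2, (2 * Fintype.card (V ≃ Fin (Fintype.card V))) ^ k) := by
            apply Nat.add_le_add
            · exact Finset.sum_le_sum (fun p hp => Nat.pow_le_pow_left (hbadS p hp) k)
            · exact Finset.sum_le_sum (fun p hp => Nat.pow_le_pow_left (hbadM p hp) k)
        _ = (E1.card + E2.card) * (2 ^ k * Fintype.card (V ≃ Fin (Fintype.card V)) ^ k) := by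
            rw [Finset.sum_const, Finset.sum_const, smul_eq_mul, smul_eq_mul, mul_pow]
            ring
    have hlt : (E1.card + E2.card) * (2 ^ k * Fintype.card (V ≃ Fin (Fintype.card V)) ^ k)
        < 3 ^ k * Fintype.card (V ≃ Fin (Fintype.card V)) ^ k := by
      have hp := (Nat.mul_lt_mul_right (Nat.pow_pos (n := k) hNpos)).mpr hnum
      calc (E1.card + E2.card) * (2 ^ k * Fintype.card (V ≃ Fin (Fintype.card V)) ^ k)
          = ((E1.card + E2.card) * 2 ^ k) * Fintype.card (V ≃ Fin (Fintype.card V)) ^ k := by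
            ring
        _ < 3 ^ k * Fintype.card (V ≃ Fin (Fintype.card V)) ^ k := hp
    exact absurd (hmul.trans_lt hlt) (lt_irrefl _)
  obtain ⟨F, hPW, hMix⟩ := hex
  -- bound on k
  have hx0 : (0 : ℝ) ≤ 6.84 * Real.logb 2 ((Fintype.card V : ℕ) : ℝ) := by
    rcases Nat.eq_zero_or_pos (Fintype.card V) with h0 | h0
    · rw [h0]; simp
    · have h1 : (1 : ℝ) ≤ ((Fintype.card V : ℕ) : ℝ) := by exact_mod_cast h0
      have := Real.logb_nonneg (by norm_num : (1:ℝ) < 2) h1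
      linarith
  have hkle : (k : ℝ) ≤ 6.84 * Real.logb 2 ((Fintype.card V : ℕ) : ℝ) := Nat.floor_le hx0
  have hmemstar : k ∈ {k : ℕ | ∃ F : Fin k → (V ≃ Fin (Fintype.card V)),
      PWSuitable G F ∧ Mixing3 G F} := ⟨F, hPW, hMix⟩
  refine ⟨⟨k, F, hkle, hPW, hMix⟩, ?_, ?_⟩
  · have hne : {k : ℕ | ∃ F : Fin k → (V ≃ Fin (Fintype.card V)),
        PWSuitable G F ∧ Mixing3 G F}.Nonempty := ⟨k, hmemstar⟩
    have hmem := Nat.sInf_mem hne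
    obtain ⟨F', hPW', -⟩ := hmem
    exact Nat.sInf_le ⟨F', hPW'⟩
  · have hle : sepStarDim G ≤ k := Nat.sInf_le hmemstar
    calc (sepStarDim G : ℝ) ≤ (k : ℝ) := by exact_mod_cast hle
      _ ≤ 6.84 * Real.logb 2 ((Fintype.card V : ℕ) : ℝ) := hkle
end

section
/- Every k-degenerate graph has star arboricity at most 2k: its edge set can be partitioned into at most 2k star forests. -/
/-- `F` is a star forest: every connected component is a star. Equivalently,
there is no walk `a-b-c-d` with `a ≠ c` and `b ≠ d` (no path on four vertices
and no triangle). -/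
def IsStarForest {V : Type*} (F : SimpleGraph V) : Prop :=
  ¬ ∃ a b c d : V, F.Adj a b ∧ F.Adj b c ∧ F.Adj c d ∧ a ≠ c ∧ b ≠ d

namespace Stmt8Helpers

variable {V : Type*}

/-- Height function with fuel: iterate the partial "parent" map `f`. -/
noncomputable def auxH (f : V → Option V) : ℕ → V → ℕ
  | 0, _ => 0
  | m+1, x => (f x).elim 0 (fun y => auxH f m y + 1)

theorem auxH_succ (f : V → Option V) (m : ℕ) (x : V) :
    auxH f (m+1) x = (f x).elim 0 (fun y => auxH f m y + 1) := rfl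

theorem auxH_stable (f : V → Option V) (ordn : V → ℕ) (n : ℕ)
    (hlt : ∀ x, ordn x < n) (hmono : ∀ x y, f x = some y → ordn x < ordn y) :
    ∀ m x, n - ordn x ≤ m → auxH f (m+1) x = auxH f m x := by
  intro m
  induction m with
  | zero => intro x hx; exact absurd hx (by have := hlt x; omega)
  | succ m ih =>
    intro x hx
    rw [auxH_succ, auxH_succ]
    cases hfx : f x with
    | none => rfl
    | some y =>
      simp only [Option.elim]
      have h1 := hmono x y hfx
      have h2 := hlt x
      rw [ih y (by omega)]

theorem auxH_step (f : V → Option V) (ordn : V → ℕ) (n : ℕ)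
    (hlt : ∀ x, ordn x < n) (hmono : ∀ x y, f x = some y → ordn x < ordn y)
    {x y : V} (hfxy : f x = some y) :
    auxH f n x = auxH f n y + 1 := by
  have hx := hlt x
  have hxy := hmono x y hfxy
  have hy := hlt y
  obtain ⟨m, rfl⟩ : ∃ m, n = m + 1 := ⟨n - 1, by omega⟩
  rw [auxH_succ, hfxy]
  simp only [Option.elim]
  rw [auxH_stable f ordn (m+1) hlt hmono m y (by omega)]

/-- The star graph of a "parent" map `f` at parity `p`: edges `x — f x` where the
parent has height of parity `p`. -/
def starGraph (f : V → Option V) (h : V → ℕ) (p : ℕ) : SimpleGraph V where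
  Adj x y := x ≠ y ∧ ((f x = some y ∧ h y % 2 = p) ∨ (f y = some x ∧ h x % 2 = p))
  symm := by
    constructor
    rintro x y ⟨hne, hor⟩
    exact ⟨hne.symm, hor.symm⟩
  loopless := by constructor; rintro x ⟨hne, -⟩; exact hne rfl

theorem starGraph_adj (f : V → Option V) (h : V → ℕ) (p : ℕ) (x y : V) :
    (starGraph f h p).Adj x y ↔
      x ≠ y ∧ ((f x = some y ∧ h y % 2 = p) ∨ (f y = some x ∧ h x % 2 = p)) := Iff.rfl

theorem isStarForest_starGraph (f : V → Option V) (h : V → ℕ) (p : ℕ)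
    (hstep : ∀ x y, f x = some y → h x = h y + 1) :
    IsStarForest (starGraph f h p) := by
  rintro ⟨a, b, c, d, ⟨hab, hab'⟩, ⟨hbc, hbc'⟩, ⟨hcd, hcd'⟩, hac, hbd⟩
  rcases hbc' with ⟨hfb, hhc⟩ | ⟨hfc, hhb⟩
  · -- f b = some c, parent c has parity p, so h b has parity ≠ p
    have hb := hstep b c hfb
    rcases hab' with ⟨hfa, hhb2⟩ | ⟨hfb2, hha⟩
    · omega
    · exact hac (Option.some.inj (hfb.symm.trans hfb2)).symm
  · -- f c = some b, parent b has parity p, so h c has parity ≠ p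
    have hc := hstep c b hfc
    rcases hcd' with ⟨hfc2, hhd⟩ | ⟨hfd, hhc2⟩
    · exact hbd (Option.some.inj (hfc.symm.trans hfc2))
    · omega

end Stmt8Helpers

open Stmt8Helpers in
/-- Every `k`-degenerate graph has star arboricity at most `2k`: its edge set
can be partitioned into at most `2k` star forests. -/
theorem stmt8 {V : Type*} [Fintype V] [DecidableEq V] (G : SimpleGraph V)
    (k : ℕ)
    (hdeg : ∃ ord : V ≃ Fin (Fintype.card V),
      ∀ v : V, {u : V | G.Adj v u ∧ ord v < ord u}.ncard ≤ k) :
    ∃ F : Fin (2 * k) → SimpleGraph V,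
      (∀ i, IsStarForest (F i) ∧ F i ≤ G) ∧
      (∀ i j, i ≠ j → Disjoint (F i).edgeSet (F j).edgeSet) ∧
      (∀ e ∈ G.edgeSet, ∃ i, e ∈ (F i).edgeSet) := by
  classical
  obtain ⟨ord, hk⟩ := hdeg
  set ordn : V → ℕ := fun v => (ord v : ℕ) with hordn
  have hlt : ∀ v, ordn v < Fintype.card V := fun v => (ord v).isLt
  have hordinj : ∀ v u, ordn v = ordn u → v = u := by
    intro v u hvu
    exact ord.injective (Fin.val_injective hvu)
  have hk' : ∀ v, {u : V | G.Adj v u ∧ ordn v < ordn u}.ncard ≤ k := hk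
  -- injective index functions on the up-neighbourhoods
  have hidxex : ∀ v : V, ∃ g : V → ℕ,
      Set.InjOn g {u | G.Adj v u ∧ ordn v < ordn u} ∧
      (∀ u, G.Adj v u → ordn v < ordn u → g u < k) := by
    intro v
    have hfin : {u : V | G.Adj v u ∧ ordn v < ordn u}.Finite := Set.toFinite _
    have hcard : hfin.toFinset.card ≤ k := by
      rw [← Set.ncard_eq_toFinset_card _ hfin]
      exact hk' v
    refine ⟨fun u => if h : u ∈ hfin.toFinset then (hfin.toFinset.equivFin ⟨u, h⟩ : ℕ) else 0,
      ?_, ?_⟩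
    · intro a ha b hb hab
      have ha' : a ∈ hfin.toFinset := hfin.mem_toFinset.2 ha
      have hb' : b ∈ hfin.toFinset := hfin.mem_toFinset.2 hb
      simp only [dif_pos ha', dif_pos hb'] at hab
      have := hfin.toFinset.equivFin.injective (Fin.val_injective hab)
      exact congrArg Subtype.val this
    · intro u h1 h2
      have hu : u ∈ hfin.toFinset := hfin.mem_toFinset.2 ⟨h1, h2⟩
      simp only [dif_pos hu]
      exact lt_of_lt_of_le (hfin.toFinset.equivFin ⟨u, hu⟩).isLt hcard
  choose idx hidxinj hidxlt using hidxex
  -- partial parent maps, one per colour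
  have hfex : ∀ (c : Fin k) (x : V), ∃ o : Option V,
      ∀ y, o = some y ↔ (G.Adj x y ∧ ordn x < ordn y ∧ idx x y = (c : ℕ)) := by
    intro c x
    by_cases hex : ∃ y, G.Adj x y ∧ ordn x < ordn y ∧ idx x y = (c : ℕ)
    · obtain ⟨y, hy⟩ := hex
      refine ⟨some y, fun z => ⟨fun hz => ?_, fun hz => ?_⟩⟩
      · obtain rfl := Option.some.inj hz
        exact hy
      · have : y = z := hidxinj x ⟨hy.1, hy.2.1⟩ ⟨hz.1, hz.2.1⟩ (by rw [hy.2.2, hz.2.2])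
        rw [this]
    · exact ⟨none, fun z => ⟨fun h => by simp at h, fun hz => absurd ⟨z, hz⟩ hex⟩⟩
  choose f hf using hfex
  have hmono : ∀ (c : Fin k) (x y : V), f c x = some y → ordn x < ordn y :=
    fun c x y hxy => ((hf c x y).1 hxy).2.1
  have hadjf : ∀ (c : Fin k) (x y : V), f c x = some y → G.Adj x y :=
    fun c x y hxy => ((hf c x y).1 hxy).1
  have hidxf : ∀ (c : Fin k) (x y : V), f c x = some y → idx x y = (c : ℕ) :=
    fun c x y hxy => ((hf c x y).1 hxy).2.2
  have hfof : ∀ (c : Fin k) (x y : V), G.Adj x y → ordn x < ordn y →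
      idx x y = (c : ℕ) → f c x = some y :=
    fun c x y h1 h2 h3 => (hf c x y).2 ⟨h1, h2, h3⟩
  set ht : Fin k → V → ℕ := fun c => auxH (f c) (Fintype.card V) with hht
  have hstep : ∀ (c : Fin k) (x y : V), f c x = some y → ht c x = ht c y + 1 :=
    fun c x y hxy => auxH_step (f c) ordn (Fintype.card V) hlt (hmono c) hxy
  set e : Fin (2*k) ≃ Fin k × Fin 2 :=
    (finCongr (Nat.mul_comm 2 k)).trans finProdFinEquiv.symm with he
  refine ⟨fun i => starGraph (f (e i).1) (ht (e i).1) ((e i).2 : ℕ), ?_, ?_, ?_⟩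
  · intro i
    constructor
    · exact isStarForest_starGraph _ _ _ (hstep (e i).1)
    · intro x y hxy
      rw [starGraph_adj] at hxy
      rcases hxy.2 with ⟨h1, -⟩ | ⟨h1, -⟩
      · exact hadjf _ _ _ h1
      · exact (hadjf _ _ _ h1).symm
  · intro i j hij
    rw [Set.disjoint_left]
    intro ed h1 h2
    induction ed using Sym2.ind with
    | _ x y =>
      rw [SimpleGraph.mem_edgeSet, starGraph_adj] at h1 h2
      apply hij
      apply e.injective
      obtain ⟨hne, h1'⟩ := h1
      obtain ⟨-, h2'⟩ := h2
      have key : (e i).1 = (e j).1 ∧ ((e i).2 : ℕ) = ((e j).2 : ℕ) := by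
        rcases h1' with ⟨ha, hp⟩ | ⟨ha, hp⟩ <;> rcases h2' with ⟨hb, hq⟩ | ⟨hb, hq⟩
        · have hc : (e i).1 = (e j).1 :=
            Fin.val_injective ((hidxf _ _ _ ha).symm.trans (hidxf _ _ _ hb))
          refine ⟨hc, ?_⟩
          rw [hc] at hp
          exact hp.symm.trans hq
        · have := hmono _ _ _ ha
          have := hmono _ _ _ hb
          omega
        · have := hmono _ _ _ ha
          have := hmono _ _ _ hb
          omega
        · have hc : (e i).1 = (e j).1 :=
            Fin.val_injective ((hidxf _ _ _ ha).symm.trans (hidxf _ _ _ hb))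
          refine ⟨hc, ?_⟩
          rw [hc] at hp
          exact hp.symm.trans hq
      exact Prod.ext key.1 (Fin.val_injective key.2)
  · intro ed hed
    induction ed using Sym2.ind with
    | _ x y =>
      rw [SimpleGraph.mem_edgeSet] at hed
      have hmain : ∀ x y : V, G.Adj x y → ordn x < ordn y →
          ∃ i, s(x, y) ∈
            (starGraph (f (e i).1) (ht (e i).1) ((e i).2 : ℕ)).edgeSet := by
        intro x y hxy hord
        have hklt : idx x y < k := hidxlt x y hxy hord
        have hfc : f ⟨idx x y, hklt⟩ x = some y := hfof _ x y hxy hord rfl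
        refine ⟨e.symm (⟨idx x y, hklt⟩, ⟨ht ⟨idx x y, hklt⟩ y % 2, Nat.mod_lt _ (by norm_num)⟩),
          ?_⟩
        rw [SimpleGraph.mem_edgeSet]
        have heq := e.apply_symm_apply
          (⟨idx x y, hklt⟩, (⟨ht ⟨idx x y, hklt⟩ y % 2, Nat.mod_lt _ (by norm_num)⟩ : Fin 2))
        rw [heq, starGraph_adj]
        refine ⟨fun hxyeq => ?_, Or.inl ⟨hfc, rfl⟩⟩
        · subst hxyeq; omega
      have hne : ordn x ≠ ordn y := fun hh => (G.ne_of_adj hed) (hordinj x y hh)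
      rcases lt_or_gt_of_ne hne with hlt' | hlt'
      · exact hmain x y hed hlt'
      · obtain ⟨i, hi⟩ := hmain y x hed.symm hlt'
        exact ⟨i, by rw [Sym2.eq_swap]; exact hi⟩
end

section
/- Let G be a graph with vertex partition V(G) = V₁ ⊎ ⋯ ⊎ V_r, and let π̂ = max over i,j of π(G[Vᵢ ∪ Vⱼ]). Then π(G) ≤ 13.68·log₂ r + π̂·r. -/
/-- From an injective key into a linear order, get an order-respecting enumeration. -/
lemma exists_equiv_of_key {V : Type*} [Fintype V] {κ : Type*} [LinearOrder κ]
    (key : V → κ) (hinj : Function.Injective key) :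
    ∃ σ : V ≃ Fin (Fintype.card V), ∀ v w, σ v < σ w ↔ key v < key w := by
  letI : LinearOrder V := LinearOrder.lift' key hinj
  let e := monoEquivOfFin V rfl
  refine ⟨e.symm.toEquiv, fun v w => ?_⟩
  have h1 : e.symm v < e.symm w ↔ v < w := e.symm.lt_iff_lt
  have h2 : v < w ↔ key v < key w := by
    rw [lt_iff_le_not_ge, lt_iff_le_not_ge]
    exact Iff.rfl
  exact h1.trans h2

/-- Helper: SepPerm from explicit inequalities on the four endpoints. -/
lemma sepPerm_pair {V : Type*} {n : ℕ} {σ : V ≃ Fin n} {x y z w : V}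
    (h : (σ x < σ z ∧ σ x < σ w ∧ σ y < σ z ∧ σ y < σ w) ∨
         (σ z < σ x ∧ σ w < σ x ∧ σ z < σ y ∧ σ w < σ y)) :
    SepPerm σ {v | v ∈ s(x, y)} {v | v ∈ s(z, w)} := by
  rcases h with ⟨h1, h2, h3, h4⟩ | ⟨h1, h2, h3, h4⟩
  · left
    intro a ha b hb
    simp only [Set.mem_setOf_eq, Sym2.mem_iff] at ha hb
    rcases ha with rfl | rfl <;> rcases hb with rfl | rfl <;> assumption
  · right
    intro a ha b hb
    simp only [Set.mem_setOf_eq, Sym2.mem_iff] at ha hb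
    rcases ha with rfl | rfl <;> rcases hb with rfl | rfl <;> assumption

lemma sepPerm_comm {V : Type*} {n : ℕ} {σ : V ≃ Fin n} {A B : Set V}
    (h : SepPerm σ A B) : SepPerm σ B A := by
  rcases h with h | h
  · right; intro a ha b hb; exact h b hb a ha
  · left; intro a ha b hb; exact h b hb a ha

/-- The defining set of `sepDim` is always nonempty. -/
lemma sep_set_nonempty {W : Type*} [Fintype W] [DecidableEq W] (G : SimpleGraph W) :
    {k : ℕ | ∃ F : Fin k → (W ≃ Fin (Fintype.card W)), PWSuitable G F}.Nonempty := by
  classical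
  set k := Fintype.card (Sym2 W) with hk
  have hkey : ∀ e : Sym2 W, ∃ σ : W ≃ Fin (Fintype.card W),
      ∀ v w, σ v < σ w ↔
        (toLex ((if v ∈ e then 0 else 1 : ℕ), ((Fintype.equivFin W) v).val) <
         toLex ((if w ∈ e then 0 else 1 : ℕ), ((Fintype.equivFin W) w).val)) := by
    intro e
    apply exists_equiv_of_key
    intro v w hvw
    have h2 := congrArg (fun p : Lex (ℕ × ℕ) => (ofLex p).2) hvw
    simp only at h2
    exact (Fintype.equivFin W).injective (Fin.ext h2)
  choose σ hσ using hkey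
  refine ⟨k, fun i => σ ((Fintype.equivFin (Sym2 W)).symm i), ?_⟩
  intro e he f hf hdisj
  refine ⟨Fintype.equivFin (Sym2 W) e, ?_⟩
  simp only [Equiv.symm_apply_apply]
  left
  intro a ha b hb
  rw [hσ e]
  have hae : a ∈ e := ha
  have hbe : b ∉ e := fun hbe => hdisj b ⟨hbe, hb⟩
  rw [Prod.Lex.lt_iff]
  left
  simp [hae, hbe]

/-- Pad a suitable family to any larger size. -/
lemma exists_fam {W : Type*} [Fintype W] [DecidableEq W] (G : SimpleGraph W) {m : ℕ}
    (h : sepDim G ≤ m) :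
    ∃ F : Fin m → (W ≃ Fin (Fintype.card W)), PWSuitable G F := by
  have hne := sep_set_nonempty G
  have hmem := Nat.sInf_mem hne
  obtain ⟨F, hF⟩ := hmem
  have hd : sepDim G ≤ m := h
  refine ⟨fun i => if hi : (i : ℕ) < sepDim G then F ⟨i, hi⟩ else Fintype.equivFin W, ?_⟩
  intro e he f hf hdisj
  obtain ⟨j, hj⟩ := hF e he f hf hdisj
  have hjm : (j : ℕ) < m := lt_of_lt_of_le j.2 hd
  refine ⟨⟨j, hjm⟩, ?_⟩
  have hj2 : (j : ℕ) < sepDim G := j.2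
  simpa [hj2] using hj


/-- If for each event an auto-bijection `g` exists such that every `g`-orbit of
length 3 meets the good set, and there are few events, a tuple good for all
events exists. -/
lemma exists_good_tuple {S ι : Type*} [Fintype S] [DecidableEq S] [Nonempty S]
    (E : Finset ι) (Good : ι → S → Prop) (g : ι → S ≃ S)
    (horb : ∀ e ∈ E, ∀ σ : S, Good e σ ∨ Good e (g e σ) ∨ Good e (g e (g e σ)))
    (k : ℕ) (hk : E.card * 2 ^ k < 3 ^ k) :
    ∃ F : Fin k → S, ∀ e ∈ E, ∃ i, Good e (F i) := by
  classical
  set bad : ι → Finset S := fun e => Finset.univ.filter (fun σ => ¬ Good e σ) with hbad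
  -- Step 1 : 3 * (bad e).card ≤ 2 * card S
  have hstep1 : ∀ e ∈ E, 3 * (bad e).card ≤ 2 * Fintype.card S := by
    intro e he
    set f : S → S := fun σ => if Good e (g e σ) then g e σ else g e (g e σ) with hf
    have himg : ∀ σ ∈ bad e, Good e (f σ) := by
      intro σ hσ
      simp only [hbad, Finset.mem_filter] at hσ
      by_cases h1 : Good e (g e σ)
      · simpa [hf, h1] using h1
      · rcases horb e he σ with h | h | h
        · exact absurd h hσ.2
        · exact absurd h h1
        · simpa [hf, h1] using h
    have hcard : (bad e).card ≤ 2 * ((bad e).image f).card := by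
      apply Finset.card_le_mul_card_image
      intro b _
      have hsub : (bad e).filter (fun a => f a = b) ⊆ {(g e).symm b, (g e).symm ((g e).symm b)} := by
        intro σ hσ
        simp only [Finset.mem_filter] at hσ
        simp only [Finset.mem_insert, Finset.mem_singleton]
        by_cases h1 : Good e (g e σ)
        · left; rw [← hσ.2]; simp [hf, h1]
        · right; rw [← hσ.2]; simp [hf, h1]
      calc ((bad e).filter (fun a => f a = b)).card ≤ _ := Finset.card_le_card hsub
        _ ≤ 2 := Finset.card_insert_le _ _ |>.trans (by simp)
    have himg2 : (bad e).image f ⊆ Finset.univ.filter (Good e) := by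
      intro b hb
      obtain ⟨σ, hσ, rfl⟩ := Finset.mem_image.1 hb
      exact Finset.mem_filter.2 ⟨Finset.mem_univ _, himg σ hσ⟩
    have h3 : (bad e).card ≤ 2 * (Finset.univ.filter (Good e)).card :=
      hcard.trans (Nat.mul_le_mul_left 2 (Finset.card_le_card himg2))
    have h4 : (Finset.univ.filter (Good e)).card + (bad e).card = Fintype.card S := by
      rw [hbad]
      simpa using Finset.card_filter_add_card_filter_not (s := Finset.univ) (Good e)
    omega
  -- Step 2 : union bound
  by_contra hcon
  push_neg at hcon
  have hsub : (Finset.univ : Finset (Fin k → S)) ⊆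
      E.biUnion (fun e => Fintype.piFinset (fun _ : Fin k => bad e)) := by
    intro F _
    obtain ⟨e, he, hFe⟩ := hcon F
    apply Finset.mem_biUnion.2 ⟨e, he, ?_⟩
    rw [Fintype.mem_piFinset]
    intro i
    simp only [hbad, Finset.mem_filter, Finset.mem_univ, true_and]
    exact hFe i
  have hcards : Fintype.card S ^ k ≤ ∑ e ∈ E, (bad e).card ^ k := by
    calc Fintype.card S ^ k = (Finset.univ : Finset (Fin k → S)).card := by
          simp [Fintype.card_fun]
      _ ≤ (E.biUnion (fun e => Fintype.piFinset (fun _ : Fin k => bad e))).card :=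
          Finset.card_le_card hsub
      _ ≤ ∑ e ∈ E, (Fintype.piFinset (fun _ : Fin k => bad e)).card :=
          Finset.card_biUnion_le
      _ = ∑ e ∈ E, (bad e).card ^ k := by
          refine Finset.sum_congr rfl (fun e _ => ?_)
          rw [Fintype.card_piFinset]
          simp
  have hfinal : 3 ^ k * Fintype.card S ^ k < 3 ^ k * Fintype.card S ^ k := by
    calc 3 ^ k * Fintype.card S ^ k
        ≤ 3 ^ k * ∑ e ∈ E, (bad e).card ^ k := Nat.mul_le_mul_left _ hcards
      _ = ∑ e ∈ E, (3 * (bad e).card) ^ k := by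
          rw [Finset.mul_sum]
          refine Finset.sum_congr rfl (fun e _ => ?_)
          rw [mul_pow]
      _ ≤ ∑ e ∈ E, (2 * Fintype.card S) ^ k :=
          Finset.sum_le_sum (fun e he => Nat.pow_le_pow_left (hstep1 e he) k)
      _ = E.card * (2 ^ k * Fintype.card S ^ k) := by
          rw [Finset.sum_const, smul_eq_mul, mul_pow]
      _ = (E.card * 2 ^ k) * Fintype.card S ^ k := by ring
      _ < 3 ^ k * Fintype.card S ^ k := by
          exact Nat.mul_lt_mul_of_lt_of_le hk (le_refl _) (pow_pos Fintype.card_pos k)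
  exact lt_irrefl _ hfinal



lemma sep_pairing (A B C D : ℕ) (h1 : A ≠ B) (h2 : A ≠ C) (h3 : A ≠ D) (h4 : B ≠ C)
    (h5 : B ≠ D) (h6 : C ≠ D) :
    ((A < C ∧ A < D ∧ B < C ∧ B < D) ∨ (C < A ∧ D < A ∧ C < B ∧ D < B)) ∨
    (((A < D ∧ A < B ∧ C < D ∧ C < B) ∨ (D < A ∧ B < A ∧ D < C ∧ B < C)) ∨
     ((A < B ∧ A < C ∧ D < B ∧ D < C) ∨ (B < A ∧ C < A ∧ B < D ∧ C < D))) := by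
  rcases lt_or_gt_of_ne h1 with hab | hab <;>
  rcases lt_or_gt_of_ne h2 with hac | hac <;>
  rcases lt_or_gt_of_ne h3 with had | had
  -- A min : split on min of B, C, D
  · rcases lt_or_gt_of_ne h4 with hbc | hbc
    · rcases lt_or_gt_of_ne h5 with hbd | hbd
      · exact Or.inl (Or.inl ⟨hac, had, hbc, hbd⟩)
      · refine Or.inr (Or.inr (Or.inl ⟨hab, hac, ?_, ?_⟩)) <;> omega
    · rcases lt_or_gt_of_ne h6 with hcd | hcd
      · exact Or.inr (Or.inl (Or.inl ⟨had, hab, hcd, hbc⟩))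
      · refine Or.inr (Or.inr (Or.inl ⟨hab, hac, ?_, ?_⟩)) <;> omega
  · exact Or.inr (Or.inr (Or.inl ⟨hab, hac, by omega, by omega⟩))
  · exact Or.inr (Or.inl (Or.inl ⟨had, hab, by omega, by omega⟩))
  · exact Or.inl (Or.inr ⟨hac, had, by omega, by omega⟩)
  · exact Or.inl (Or.inl ⟨hac, had, by omega, by omega⟩)
  · exact Or.inr (Or.inl (Or.inr ⟨had, hab, by omega, by omega⟩))
  · exact Or.inr (Or.inr (Or.inr ⟨hab, hac, by omega, by omega⟩))
  -- A max : split on max of B, C, D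
  · rcases lt_or_gt_of_ne h4 with hbc | hbc
    · rcases lt_or_gt_of_ne h6 with hcd | hcd
      · exact Or.inr (Or.inr (Or.inr ⟨hab, hac, by omega, by omega⟩))
      · exact Or.inr (Or.inl (Or.inr ⟨had, hab, by omega, hbc⟩))
    · rcases lt_or_gt_of_ne h5 with hbd | hbd
      · exact Or.inr (Or.inr (Or.inr ⟨hab, hac, by omega, by omega⟩))
      · exact Or.inl (Or.inr ⟨hac, had, by omega, by omega⟩)

lemma mix_pairing (A B C : ℕ) (h1 : A ≠ B) (h2 : B ≠ C) (h3 : A ≠ C) :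
    ((A < B ∧ B < C) ∨ (C < B ∧ B < A)) ∨
    (((B < C ∧ C < A) ∨ (A < C ∧ C < B)) ∨ ((C < A ∧ A < B) ∨ (B < A ∧ A < C))) := by
  rcases lt_or_gt_of_ne h1 with hab | hab <;> rcases lt_or_gt_of_ne h2 with hbc | hbc
  · exact Or.inl (Or.inl ⟨hab, hbc⟩)
  · rcases lt_or_gt_of_ne h3 with hac | hac
    · exact Or.inr (Or.inl (Or.inr ⟨hac, hbc⟩))
    · exact Or.inr (Or.inr (Or.inl ⟨hac, hab⟩))
  · rcases lt_or_gt_of_ne h3 with hac | hac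
    · exact Or.inr (Or.inr (Or.inr ⟨hab, hac⟩))
    · exact Or.inr (Or.inl (Or.inl ⟨hbc, hac⟩))
  · exact Or.inl (Or.inr ⟨hbc, hab⟩)

variable {r : ℕ}

def GoodSep (a b c d : Fin r) (σ : Equiv.Perm (Fin r)) : Prop :=
  (σ a < σ c ∧ σ a < σ d ∧ σ b < σ c ∧ σ b < σ d) ∨
  (σ c < σ a ∧ σ d < σ a ∧ σ c < σ b ∧ σ d < σ b)

def GoodMix (a b c : Fin r) (σ : Equiv.Perm (Fin r)) : Prop :=
  (σ a < σ b ∧ σ b < σ c) ∨ (σ c < σ b ∧ σ b < σ a)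

lemma goodSep_orbit (a b c d : Fin r) (hab : a ≠ b) (hac : a ≠ c) (had : a ≠ d)
    (hbc : b ≠ c) (hbd : b ≠ d) (hcd : c ≠ d) (σ : Equiv.Perm (Fin r)) :
    GoodSep a b c d σ ∨ GoodSep a b c d (σ * (Equiv.swap b c * Equiv.swap c d)) ∨
      GoodSep a b c d (σ * (Equiv.swap b c * Equiv.swap c d) * (Equiv.swap b c * Equiv.swap c d)) := by
  set π : Equiv.Perm (Fin r) := Equiv.swap b c * Equiv.swap c d with hπ
  have hπa : π a = a := by
    rw [hπ, Equiv.Perm.mul_apply, Equiv.swap_apply_of_ne_of_ne hac had,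
      Equiv.swap_apply_of_ne_of_ne hab hac]
  have hπb : π b = c := by
    rw [hπ, Equiv.Perm.mul_apply, Equiv.swap_apply_of_ne_of_ne hbc hbd, Equiv.swap_apply_left]
  have hπc : π c = d := by
    rw [hπ, Equiv.Perm.mul_apply, Equiv.swap_apply_left,
      Equiv.swap_apply_of_ne_of_ne hbd.symm hcd.symm]
  have hπd : π d = b := by
    rw [hπ, Equiv.Perm.mul_apply, Equiv.swap_apply_right, Equiv.swap_apply_right]
  have hinj : ∀ x y : Fin r, x ≠ y → (σ x).val ≠ (σ y).val := by
    intro x y hxy h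
    exact hxy (σ.injective (Fin.ext h))
  have h1 := hinj a b hab
  have h2 := hinj a c hac
  have h3 := hinj a d had
  have h4 := hinj b c hbc
  have h5 := hinj b d hbd
  have h6 := hinj c d hcd
  simp only [GoodSep, Equiv.Perm.mul_apply, hπa, hπb, hπc, hπd, Fin.lt_iff_val_lt_val]
  exact sep_pairing _ _ _ _ h1 h2 h3 h4 h5 h6

lemma goodMix_orbit (a b c : Fin r) (hab : a ≠ b) (hbc : b ≠ c) (hac : a ≠ c)
    (σ : Equiv.Perm (Fin r)) :
    GoodMix a b c σ ∨ GoodMix a b c (σ * (Equiv.swap a b * Equiv.swap b c)) ∨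
      GoodMix a b c (σ * (Equiv.swap a b * Equiv.swap b c) * (Equiv.swap a b * Equiv.swap b c)) := by
  set π : Equiv.Perm (Fin r) := Equiv.swap a b * Equiv.swap b c with hπ
  have hπa : π a = b := by
    rw [hπ, Equiv.Perm.mul_apply, Equiv.swap_apply_of_ne_of_ne hab hac, Equiv.swap_apply_left]
  have hπb : π b = c := by
    rw [hπ, Equiv.Perm.mul_apply, Equiv.swap_apply_left,
      Equiv.swap_apply_of_ne_of_ne hac.symm hbc.symm]
  have hπc : π c = a := by
    rw [hπ, Equiv.Perm.mul_apply, Equiv.swap_apply_right, Equiv.swap_apply_right]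
  have hinj : ∀ x y : Fin r, x ≠ y → (σ x).val ≠ (σ y).val := by
    intro x y hxy h
    exact hxy (σ.injective (Fin.ext h))
  have h1 := hinj a b hab
  have h2 := hinj b c hbc
  have h3 := hinj a c hac
  simp only [GoodMix, Equiv.Perm.mul_apply, hπa, hπb, hπc, Fin.lt_iff_val_lt_val]
  exact mix_pairing _ _ _ h1 h2 h3

lemma numeric_core (r N1 N2 Pc : ℕ) (hP : 2 * Pc ≤ r * r) (h1 : N1 ≤ Pc * Pc)
    (h2 : N2 ≤ r * Pc) :
    (N1 + N2) * 2 ^ (⌊6.84 * Real.logb 2 r⌋₊) < 3 ^ (⌊6.84 * Real.logb 2 r⌋₊) := by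
  set k := ⌊6.84 * Real.logb 2 r⌋₊ with hk
  rcases le_or_gt r 1 with hr | hr
  · -- Pc = 0, so N1 = N2 = 0
    have hrr : r * r ≤ 1 := Nat.mul_le_mul hr hr
    have hPc : Pc = 0 := by omega
    rw [hPc] at h1 h2
    simp only [Nat.mul_zero, Nat.le_zero] at h1 h2
    rw [h1, h2]
    simpa using pow_pos (by norm_num : (0:ℕ) < 3) k
  · have hr2 : (2:ℝ) ≤ (r:ℝ) := by exact_mod_cast hr
    set L := Real.logb 2 r with hL
    have hL0 : 0 ≤ L := Real.logb_nonneg one_lt_two (by linarith)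
    set c := Real.logb 2 (3/2) with hc
    have hc1 : (100:ℝ)/171 ≤ c := by
      rw [hc, Real.le_logb_iff_rpow_le one_lt_two (by norm_num)]
      have key : ((2:ℝ) ^ ((100:ℝ)/171)) ^ (171:ℕ) ≤ ((3:ℝ)/2) ^ (171:ℕ) := by
        rw [← Real.rpow_natCast ((2:ℝ) ^ ((100:ℝ)/171)) 171, ← Real.rpow_mul (by norm_num)]
        have e : ((100:ℝ)/171) * ((171:ℕ):ℝ) = ((100:ℕ):ℝ) := by norm_num
        rw [e, Real.rpow_natCast]
        rw [div_pow, le_div_iff₀ (by positivity)]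
        norm_num
      exact (pow_le_pow_iff_left₀ (by positivity) (by norm_num) (by norm_num)).1 key
    have hc2 : c < 1 := by
      have h := Real.logb_lt_logb (b := 2) one_lt_two (by norm_num : (0:ℝ) < 3/2)
        (by norm_num : (3:ℝ)/2 < 2)
      simpa using h
    have hkL : 6.84 * L - 1 < (k:ℝ) := by
      have := Nat.lt_floor_add_one (6.84 * L)
      rw [← hk] at this
      linarith
    have hck : 4 * L - 1 < c * (k:ℝ) := by
      have hcpos : 0 < c := lt_of_lt_of_le (by norm_num) hc1
      have e0 : c * (6.84 * L - 1) < c * (k:ℝ) := by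
        exact mul_lt_mul_of_pos_left hkL hcpos
      have e1 : 4 * L ≤ 6.84 * L * c := by
        have := mul_le_mul_of_nonneg_left hc1 (by positivity : (0:ℝ) ≤ 6.84 * L)
        calc 4 * L = 6.84 * L * ((100:ℝ)/171) := by ring
          _ ≤ 6.84 * L * c := this
      nlinarith
    have h2c : (2:ℝ) ^ c = 3/2 := Real.rpow_logb (by norm_num) (by norm_num) (by norm_num)
    have h32 : ((3:ℝ)/2) ^ (k:ℕ) = (2:ℝ) ^ (c * (k:ℝ)) := by
      rw [← h2c, ← Real.rpow_natCast ((2:ℝ) ^ c) k, ← Real.rpow_mul (by norm_num)]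
    have hr4 : (r:ℝ) ^ (4:ℕ) / 2 = (2:ℝ) ^ (4 * L - 1) := by
      rw [Real.rpow_sub (by norm_num), Real.rpow_one]
      congr 1
      rw [show (4:ℝ) * L = L * 4 by ring, Real.rpow_mul (by norm_num),
        Real.rpow_logb (by norm_num) (by norm_num) (by linarith : (0:ℝ) < r)]
      rw [← Real.rpow_natCast (r:ℝ) 4]
      norm_num
    have hpow : (r:ℝ) ^ (4:ℕ) / 2 < ((3:ℝ)/2) ^ (k:ℕ) := by
      rw [h32, hr4]
      exact Real.rpow_lt_rpow_left_iff (by norm_num : (1:ℝ) < 2) |>.2 hck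
    -- bound N
    have hPcR : (Pc:ℝ) ≤ (r:ℝ) * r / 2 := by
      have : (2:ℝ) * Pc ≤ (r:ℝ) * r := by exact_mod_cast hP
      linarith
    have hPc0 : (0:ℝ) ≤ (Pc:ℝ) := by positivity
    have hN : ((N1:ℝ) + (N2:ℝ)) ≤ (r:ℝ) ^ (4:ℕ) / 2 := by
      have b1 : (N1:ℝ) ≤ (Pc:ℝ) * Pc := by exact_mod_cast h1
      have b2 : (N2:ℝ) ≤ (r:ℝ) * Pc := by exact_mod_cast h2
      have b3 : (Pc:ℝ) * Pc ≤ ((r:ℝ) * r / 2) * ((r:ℝ) * r / 2) :=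
        mul_le_mul hPcR hPcR hPc0 (by positivity)
      have b4 : (r:ℝ) * Pc ≤ (r:ℝ) * ((r:ℝ) * r / 2) :=
        mul_le_mul_of_nonneg_left hPcR (by positivity)
      have : ((r:ℝ) * r / 2) * ((r:ℝ) * r / 2) + (r:ℝ) * ((r:ℝ) * r / 2)
          ≤ (r:ℝ) ^ (4:ℕ) / 2 := by nlinarith [sq_nonneg ((r:ℝ) - 2)]
      linarith
    -- conclude
    have hfin : ((N1:ℝ) + N2) * 2 ^ (k:ℕ) < 3 ^ (k:ℕ) := by
      have h2k : (0:ℝ) < 2 ^ (k:ℕ) := by positivity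
      have := mul_lt_mul_of_pos_right (lt_of_le_of_lt hN hpow) h2k
      calc ((N1:ℝ) + N2) * 2 ^ (k:ℕ) < ((3:ℝ)/2) ^ (k:ℕ) * 2 ^ (k:ℕ) := this
        _ = 3 ^ (k:ℕ) := by rw [← mul_pow]; norm_num
    exact_mod_cast (by push_cast; exact hfin :
      (((N1 + N2) * 2 ^ k : ℕ) : ℝ) < ((3 ^ k : ℕ) : ℝ))



variable {r : ℕ}

lemma goodSep_comm₁ (a b c d : Fin r) (σ) : GoodSep a b c d σ ↔ GoodSep b a c d σ := by
  unfold GoodSep; tauto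

lemma goodSep_comm₂ (a b c d : Fin r) (σ) : GoodSep a b c d σ ↔ GoodSep a b d c σ := by
  unfold GoodSep; tauto

lemma goodMix_comm (a b c : Fin r) (σ) : GoodMix a b c σ ↔ GoodMix c b a σ := by
  unfold GoodMix; tauto

lemma exists_mixing_family (r : ℕ) :
    ∃ F : Fin (⌊6.84 * Real.logb 2 (r : ℝ)⌋₊) → Equiv.Perm (Fin r),
      (∀ a b c d : Fin r, a ≠ b → a ≠ c → a ≠ d → b ≠ c → b ≠ d → c ≠ d →
        ∃ i, GoodSep a b c d (F i)) ∧
      (∀ a b c : Fin r, a ≠ b → b ≠ c → a ≠ c → ∃ i, GoodMix a b c (F i)) := by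
  classical
  set k := ⌊6.84 * Real.logb 2 (r : ℝ)⌋₊ with hk
  set P : Finset (Fin r × Fin r) :=
    Finset.univ.filter (fun p : Fin r × Fin r => p.1 < p.2) with hPdef
  have hP : 2 * P.card ≤ r * r := by
    have himg : (P.image Prod.swap).card = P.card :=
      Finset.card_image_of_injective _ Prod.swap_injective
    have hdisj : Disjoint P (P.image Prod.swap) := by
      rw [Finset.disjoint_left]
      intro q hq hq'
      obtain ⟨p, hp, rfl⟩ := Finset.mem_image.1 hq'
      simp only [hPdef, Finset.mem_filter, Finset.mem_univ, true_and] at hq hp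
      simp only [Prod.fst_swap, Prod.snd_swap] at hq
      exact lt_asymm hq hp
    have hcard : (P ∪ P.image Prod.swap).card = 2 * P.card := by
      rw [Finset.card_union_of_disjoint hdisj, himg]; ring
    calc 2 * P.card = (P ∪ P.image Prod.swap).card := hcard.symm
      _ ≤ (Finset.univ : Finset (Fin r × Fin r)).card := Finset.card_le_univ _
      _ = r * r := by simp
  set T1 : Finset ((Fin r × Fin r) × (Fin r × Fin r)) :=
    (P ×ˢ P).filter (fun q => q.1.1 ≠ q.2.1 ∧ q.1.1 ≠ q.2.2 ∧ q.1.2 ≠ q.2.1 ∧ q.1.2 ≠ q.2.2)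
    with hT1def
  set T2 : Finset (Fin r × Fin r × Fin r) :=
    Finset.univ.filter (fun q : Fin r × Fin r × Fin r =>
      q.1 < q.2.2 ∧ q.2.1 ≠ q.1 ∧ q.2.1 ≠ q.2.2) with hT2def
  have hT1 : T1.card ≤ P.card * P.card := by
    calc T1.card ≤ (P ×ˢ P).card := Finset.card_filter_le _ _
      _ = P.card * P.card := Finset.card_product _ _
  have hT2 : T2.card ≤ r * P.card := by
    have : T2.card ≤ ((Finset.univ : Finset (Fin r)) ×ˢ P).card := by
      apply Finset.card_le_card_of_injOn (fun q => (q.2.1, (q.1, q.2.2)))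
      · intro q hq
        simp only [Finset.mem_coe, hT2def, Finset.mem_filter, Finset.mem_univ, true_and] at hq
        simp only [Finset.mem_coe, Finset.mem_product, Finset.mem_univ, true_and, hPdef, Finset.mem_filter]
        exact hq.1
      · intro q1 h1 q2 h2 heq
        simp only [Prod.mk.injEq] at heq
        obtain ⟨e1, e2, e3⟩ := heq
        exact Prod.ext e2 (Prod.ext e1 e3)
    calc T2.card ≤ _ := this
      _ = r * P.card := by rw [Finset.card_product]; simp
  -- events
  set E := T1.disjSum T2 with hE
  set Good : ((Fin r × Fin r) × (Fin r × Fin r)) ⊕ (Fin r × Fin r × Fin r) →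
      Equiv.Perm (Fin r) → Prop := fun e σ =>
    match e with
    | .inl q => GoodSep q.1.1 q.1.2 q.2.1 q.2.2 σ
    | .inr q => GoodMix q.1 q.2.1 q.2.2 σ
    with hGood
  set g : ((Fin r × Fin r) × (Fin r × Fin r)) ⊕ (Fin r × Fin r × Fin r) →
      Equiv.Perm (Fin r) ≃ Equiv.Perm (Fin r) := fun e =>
    match e with
    | .inl q => Equiv.mulRight (Equiv.swap q.1.2 q.2.1 * Equiv.swap q.2.1 q.2.2)
    | .inr q => Equiv.mulRight (Equiv.swap q.1 q.2.1 * Equiv.swap q.2.1 q.2.2)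
    with hg
  have horb : ∀ e ∈ E, ∀ σ : Equiv.Perm (Fin r),
      Good e σ ∨ Good e (g e σ) ∨ Good e (g e (g e σ)) := by
    rintro (q | q) he σ
    · rw [hE, Finset.inl_mem_disjSum, hT1def, Finset.mem_filter, Finset.mem_product] at he
      obtain ⟨⟨hp1, hp2⟩, h1, h2, h3, h4⟩ := he
      simp only [hPdef, Finset.mem_filter, Finset.mem_univ, true_and] at hp1 hp2
      exact goodSep_orbit q.1.1 q.1.2 q.2.1 q.2.2 (ne_of_lt hp1) h1 h2 h3 h4
        (ne_of_lt hp2) σ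
    · rw [hE, Finset.inr_mem_disjSum, hT2def, Finset.mem_filter] at he
      obtain ⟨-, h1, h2, h3⟩ := he
      exact goodMix_orbit q.1 q.2.1 q.2.2 h2.symm h3 (ne_of_lt h1) σ
  have hcount : E.card * 2 ^ k < 3 ^ k := by
    rw [hE, Finset.card_disjSum]
    exact numeric_core r T1.card T2.card P.card hP hT1 hT2
  obtain ⟨F, hF⟩ := exists_good_tuple E Good g horb k hcount
  refine ⟨F, ?_, ?_⟩
  · intro a b c d hab hac had hbc hbd hcd
    have hmem : ∀ a' b' c' d' : Fin r, a' < b' → c' < d' → a' ≠ c' → a' ≠ d' → b' ≠ c' →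
        b' ≠ d' → ∃ i, GoodSep a' b' c' d' (F i) := by
      intro a' b' c' d' h1 h2 h3 h4 h5 h6
      have : Sum.inl ((a', b'), (c', d')) ∈ E := by
        rw [hE, Finset.inl_mem_disjSum, hT1def, Finset.mem_filter, Finset.mem_product]
        refine ⟨⟨?_, ?_⟩, h3, h4, h5, h6⟩ <;>
          simp only [hPdef, Finset.mem_filter, Finset.mem_univ, true_and]
        · exact h1
        · exact h2
      obtain ⟨i, hi⟩ := hF _ this
      exact ⟨i, hi⟩
    rcases lt_or_gt_of_ne hab with h | h <;> rcases lt_or_gt_of_ne hcd with h' | h'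
    · exact hmem a b c d h h' hac had hbc hbd
    · obtain ⟨i, hi⟩ := hmem a b d c h h' had hac hbd hbc
      exact ⟨i, (goodSep_comm₂ a b c d _).2 hi⟩
    · obtain ⟨i, hi⟩ := hmem b a c d h h' hbc hbd hac had
      exact ⟨i, (goodSep_comm₁ a b c d _).2 hi⟩
    · obtain ⟨i, hi⟩ := hmem b a d c h h' hbd hbc had hac
      exact ⟨i, (goodSep_comm₁ a b c d _).2 ((goodSep_comm₂ b a c d _).2 hi)⟩
  · intro a b c hab hbc hac
    have hmem : ∀ a' b' c' : Fin r, a' < c' → b' ≠ a' → b' ≠ c' →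
        ∃ i, GoodMix a' b' c' (F i) := by
      intro a' b' c' h1 h2 h3
      have : Sum.inr (a', b', c') ∈ E := by
        rw [hE, Finset.inr_mem_disjSum, hT2def, Finset.mem_filter]
        exact ⟨Finset.mem_univ _, h1, h2, h3⟩
      obtain ⟨i, hi⟩ := hF _ this
      exact ⟨i, hi⟩
    rcases lt_or_gt_of_ne hac with h | h
    · exact hmem a b c h hab.symm hbc
    · obtain ⟨i, hi⟩ := hmem c b a h hbc hab.symm
      exact ⟨i, (goodMix_comm a b c _).2 hi⟩


section KeyA
variable {V : Type*} [Fintype V] [DecidableEq V] {r m : ℕ} [NeZero r] (P : V → Fin r)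

def blkP (t : Fin r) (v : V) : Fin r := min (P v) (t - P v)

lemma blkP_mem (t : Fin r) (v : V) : P v = blkP P t v ∨ P v = t - blkP P t v := by
  unfold blkP
  rcases min_cases (P v) (t - P v) with ⟨h, -⟩ | ⟨h, -⟩
  · exact Or.inl h.symm
  · right
    rw [h, sub_sub_cancel]

variable (Gf : ∀ i j : Fin r, Fin m →
  (↥{v : V | P v = i ∨ P v = j} ≃ Fin (Fintype.card ↥{v : V | P v = i ∨ P v = j})))

def posA (s : Fin m) (t : Fin r) (v : V) : ℕ :=
  (Gf (blkP P t v) (t - blkP P t v) s ⟨v, blkP_mem P t v⟩).val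

def keyA (s : Fin m) (t : Fin r) (v : V) : Lex (ℕ × ℕ) :=
  toLex ((blkP P t v).val, posA P Gf s t v)

lemma posA_spec (s : Fin m) (t : Fin r) (v : V) (a : Fin r) (h : blkP P t v = a)
    (hp : P v = a ∨ P v = t - a) :
    posA P Gf s t v = (Gf a (t - a) s ⟨v, hp⟩).val := by
  subst h; rfl

lemma keyA_inj (s : Fin m) (t : Fin r) : Function.Injective (keyA P Gf s t) := by
  intro v w h
  unfold keyA at h
  have h' : ((blkP P t v).val, posA P Gf s t v) = ((blkP P t w).val, posA P Gf s t w) :=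
    congrArg ofLex h
  have h1 : blkP P t v = blkP P t w := Fin.ext (congrArg Prod.fst h')
  have h2 : posA P Gf s t v = posA P Gf s t w := congrArg Prod.snd h'
  rw [posA_spec P Gf s t v (blkP P t w) h1 (h1 ▸ blkP_mem P t v)] at h2
  unfold posA at h2
  have h3 := (Gf (blkP P t w) (t - blkP P t w) s).injective (Fin.ext h2)
  exact congrArg Subtype.val h3

end KeyA

/-- Partition lemma: if `V(G)` is partitioned into `r` parts by `P` and the
separation dimension of the subgraph induced on any two parts is at most `m`,
then `π(G) ≤ 13.68·log₂ r + m·r`. -/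
theorem stmt11 {V : Type*} [Fintype V] [DecidableEq V] (G : SimpleGraph V)
    (r : ℕ) (P : V → Fin r) (m : ℕ)
    (hm : ∀ i j : Fin r, sepDim (G.induce {v : V | P v = i ∨ P v = j}) ≤ m) :
    (sepDim G : ℝ) ≤ 13.68 * Real.logb 2 r + m * r := by
  classical
  rcases Nat.eq_zero_or_pos r with hr0 | hrpos
  · subst hr0
    have hempty : IsEmpty V := ⟨fun v => Fin.elim0 (P v)⟩
    have h0 : sepDim G ≤ 0 := by
      apply Nat.sInf_le
      refine ⟨fun i => Fin.elim0 i, ?_⟩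
      intro e he
      obtain ⟨x, y, rfl⟩ : ∃ x y, e = s(x, y) :=
        Sym2.ind (f := fun e => ∃ x y, e = s(x, y)) (fun x y => ⟨x, y, rfl⟩) e
      exact (hempty.false x).elim
    rw [Nat.le_zero.1 h0]
    simp
  · haveI : NeZero r := ⟨hrpos.ne'⟩
    set n := Fintype.card V with hn
    set k := ⌊6.84 * Real.logb 2 (r : ℝ)⌋₊ with hkdef
    have hGfe : ∀ i j : Fin r, ∃ F : Fin m →
        (↥{v : V | P v = i ∨ P v = j} ≃ Fin (Fintype.card ↥{v : V | P v = i ∨ P v = j})),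
        PWSuitable (G.induce {v : V | P v = i ∨ P v = j}) F :=
      fun i j => exists_fam _ (hm i j)
    choose Gf hGfs using hGfe
    obtain ⟨Pi, hS1, hS2⟩ := exists_mixing_family r
    set w0 := Fintype.equivFin V with hw0
    have hAe : ∀ p : Fin m × Fin r, ∃ σ : V ≃ Fin n, ∀ v w,
        σ v < σ w ↔ keyA P Gf p.1 p.2 v < keyA P Gf p.1 p.2 w :=
      fun p => exists_equiv_of_key _ (keyA_inj P Gf p.1 p.2)
    choose σA hσA using hAe
    have hBe : ∀ q : Fin k × Bool, ∃ σ : V ≃ Fin n, ∀ v w, σ v < σ w ↔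
        (toLex ((Pi q.1 (P v)).val, if q.2 then n - 1 - (w0 v).val else (w0 v).val) <
         toLex ((Pi q.1 (P w)).val, if q.2 then n - 1 - (w0 w).val else (w0 w).val)) := by
      rintro ⟨qi, qd⟩
      apply exists_equiv_of_key
      intro v w h
      have h2 : (if qd then n - 1 - (w0 v).val else (w0 v).val) =
          (if qd then n - 1 - (w0 w).val else (w0 w).val) :=
        congrArg (fun p : Lex (ℕ × ℕ) => (ofLex p).2) h
      have hv : (w0 v).val < n := (w0 v).isLt
      have hw : (w0 w).val < n := (w0 w).isLt
      apply w0.injective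
      apply Fin.ext
      cases qd <;> simp only [Bool.false_eq_true, if_false, if_true] at h2 <;> omega
    choose σB hσB using hBe
    set K := m * r + (k + k) with hK
    set Fbig : (Fin (m * r) ⊕ (Fin k ⊕ Fin k)) → (V ≃ Fin n) := fun j =>
      match j with
      | .inl q => σA (finProdFinEquiv.symm q)
      | .inr (.inl i) => σB (i, false)
      | .inr (.inr i) => σB (i, true)
      with hFbig
    set eqK : (Fin (m * r) ⊕ (Fin k ⊕ Fin k)) ≃ Fin K :=
      (Equiv.sumCongr (Equiv.refl _) finSumFinEquiv).trans finSumFinEquiv with heqK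
    have hKmem : K ∈ {k' : ℕ | ∃ F : Fin k' → (V ≃ Fin (Fintype.card V)), PWSuitable G F} := by
      refine ⟨fun i => Fbig (eqK.symm i), ?_⟩
      intro e he f hf hdisj
      obtain ⟨x, y, rfl⟩ : ∃ x y, e = s(x, y) :=
        Sym2.ind (f := fun e => ∃ x y, e = s(x, y)) (fun x y => ⟨x, y, rfl⟩) e
      obtain ⟨z, w, rfl⟩ : ∃ z w, f = s(z, w) :=
        Sym2.ind (f := fun f => ∃ z w, f = s(z, w)) (fun z w => ⟨z, w, rfl⟩) f
      rw [SimpleGraph.mem_edgeSet] at he hf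
      have hxy : x ≠ y := he.ne
      have hzw : z ≠ w := hf.ne
      have hxz : x ≠ z := fun h => hdisj x ⟨Sym2.mem_mk_left x y, h ▸ Sym2.mem_mk_left z w⟩
      have hxw : x ≠ w := fun h => hdisj x ⟨Sym2.mem_mk_left x y, h ▸ Sym2.mem_mk_right z w⟩
      have hyz : y ≠ z := fun h => hdisj y ⟨Sym2.mem_mk_right x y, h ▸ Sym2.mem_mk_left z w⟩
      have hyw : y ≠ w := fun h => hdisj y ⟨Sym2.mem_mk_right x y, h ▸ Sym2.mem_mk_right z w⟩
      suffices hsuf : ∃ j, SepPerm (Fbig j) {v | v ∈ s(x, y)} {v | v ∈ s(z, w)} by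
        obtain ⟨j, hj⟩ := hsuf
        exact ⟨eqK j, by simpa using hj⟩
      -- comparison helpers for type-B permutations
      have hlt1 : ∀ (i : Fin k) (dir : Bool) (u u' : V), Pi i (P u) < Pi i (P u') →
          σB (i, dir) u < σB (i, dir) u' := by
        intro i dir u u' hu
        rw [hσB (i, dir)]
        rw [Prod.Lex.lt_iff]
        left
        exact hu
      have hlt2 : ∀ (i : Fin k) (dir : Bool) (u u' : V), P u = P u' →
          (if dir then n - 1 - (w0 u).val else (w0 u).val) <
            (if dir then n - 1 - (w0 u').val else (w0 u').val) →
          σB (i, dir) u < σB (i, dir) u' := by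
        intro i dir u u' hp hlt
        rw [hσB (i, dir)]
        rw [Prod.Lex.lt_iff]
        right
        exact ⟨by rw [hp]; rfl, hlt⟩
      -- Case A helper
      have caseA : ∀ p q : Fin r, (P x = p ∨ P x = q) → (P y = p ∨ P y = q) →
          (P z = p ∨ P z = q) → (P w = p ∨ P w = q) →
          ∃ j, SepPerm (Fbig j) {v | v ∈ s(x, y)} {v | v ∈ s(z, w)} := by
        intro p q hxp hyp hzp hwp
        set t : Fin r := p + q with ht
        set a : Fin r := min p q with ha
        have hbmax : t - a = max p q := by
          rcases le_total p q with h | h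
          · rw [ha, min_eq_left h, ht, add_sub_cancel_left, max_eq_right h]
          · rw [ha, min_eq_right h, ht, add_sub_cancel_right, max_eq_left h]
        have hmem4 : ∀ v : V, (P v = p ∨ P v = q) → (P v = a ∨ P v = t - a) := by
          intro v hv
          rcases le_total p q with h | h
          · rcases hv with hv | hv
            · left; rw [hv, ha, min_eq_left h]
            · right; rw [hv, hbmax, max_eq_right h]
          · rcases hv with hv | hv
            · right; rw [hv, hbmax, max_eq_left h]
            · left; rw [hv, ha, min_eq_right h]
        have hamin : a ≤ t - a := by
          rw [ha, hbmax]; exact min_le_max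
        have hblk : ∀ v : V, (P v = a ∨ P v = t - a) → blkP P t v = a := by
          intro v hv
          rcases hv with hv | hv
          · show min (P v) (t - P v) = a
            rw [hv]
            exact min_eq_left hamin
          · show min (P v) (t - P v) = a
            rw [hv, sub_sub_cancel]
            exact min_eq_right hamin
        have hx' := hmem4 x hxp
        have hy' := hmem4 y hyp
        have hz' := hmem4 z hzp
        have hw' := hmem4 w hwp
        have he' : s((⟨x, hx'⟩ : ↥{v : V | P v = a ∨ P v = t - a}), ⟨y, hy'⟩) ∈
            (G.induce {v : V | P v = a ∨ P v = t - a}).edgeSet := by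
          rw [SimpleGraph.mem_edgeSet]
          exact he
        have hf' : s((⟨z, hz'⟩ : ↥{v : V | P v = a ∨ P v = t - a}), ⟨w, hw'⟩) ∈
            (G.induce {v : V | P v = a ∨ P v = t - a}).edgeSet := by
          rw [SimpleGraph.mem_edgeSet]
          exact hf
        have hdisj' : ∀ u, ¬(u ∈ s((⟨x, hx'⟩ : ↥{v : V | P v = a ∨ P v = t - a}), ⟨y, hy'⟩) ∧
            u ∈ s((⟨z, hz'⟩ : ↥{v : V | P v = a ∨ P v = t - a}), ⟨w, hw'⟩)) := by
          rintro u ⟨h1, h2⟩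
          rw [Sym2.mem_iff] at h1 h2
          rcases h1 with rfl | rfl <;> rcases h2 with h | h <;>
            simp only [Subtype.mk.injEq] at h
          · exact hxz h
          · exact hxw h
          · exact hyz h
          · exact hyw h
        obtain ⟨s, hs⟩ := hGfs a (t - a) _ he' _ hf' hdisj'
        refine ⟨Sum.inl (finProdFinEquiv (s, t)), ?_⟩
        have hFb : Fbig (Sum.inl (finProdFinEquiv (s, t))) = σA (s, t) := by
          show σA (finProdFinEquiv.symm (finProdFinEquiv (s, t))) = _
          rw [Equiv.symm_apply_apply]
        rw [hFb]
        have hkey : ∀ (u u' : V) (hu : P u = a ∨ P u = t - a)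
            (hu' : P u' = a ∨ P u' = t - a),
            Gf a (t - a) s ⟨u, hu⟩ < Gf a (t - a) s ⟨u', hu'⟩ →
            σA (s, t) u < σA (s, t) u' := by
          intro u u' hu hu' hlt
          rw [hσA (s, t)]
          show toLex ((blkP P t u).val, posA P Gf s t u) <
            toLex ((blkP P t u').val, posA P Gf s t u')
          rw [Prod.Lex.lt_iff]
          right
          constructor
          · rw [hblk u hu, hblk u' hu']; rfl
          · rw [posA_spec P Gf s t u a (hblk u hu) hu,
              posA_spec P Gf s t u' a (hblk u' hu') hu']
            exact hlt
        have mx : (⟨x, hx'⟩ : ↥{v : V | P v = a ∨ P v = t - a}) ∈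
            {u | u ∈ s((⟨x, hx'⟩ : ↥{v : V | P v = a ∨ P v = t - a}), ⟨y, hy'⟩)} :=
          Sym2.mem_mk_left _ _
        have my : (⟨y, hy'⟩ : ↥{v : V | P v = a ∨ P v = t - a}) ∈
            {u | u ∈ s((⟨x, hx'⟩ : ↥{v : V | P v = a ∨ P v = t - a}), ⟨y, hy'⟩)} :=
          Sym2.mem_mk_right _ _
        have mz : (⟨z, hz'⟩ : ↥{v : V | P v = a ∨ P v = t - a}) ∈
            {u | u ∈ s((⟨z, hz'⟩ : ↥{v : V | P v = a ∨ P v = t - a}), ⟨w, hw'⟩)} :=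
          Sym2.mem_mk_left _ _
        have mw : (⟨w, hw'⟩ : ↥{v : V | P v = a ∨ P v = t - a}) ∈
            {u | u ∈ s((⟨z, hz'⟩ : ↥{v : V | P v = a ∨ P v = t - a}), ⟨w, hw'⟩)} :=
          Sym2.mem_mk_right _ _
        apply sepPerm_pair
        rcases hs with hcase | hcase
        · exact Or.inl ⟨hkey x z hx' hz' (hcase _ mx _ mz),
            hkey x w hx' hw' (hcase _ mx _ mw),
            hkey y z hy' hz' (hcase _ my _ mz),
            hkey y w hy' hw' (hcase _ my _ mw)⟩
        · exact Or.inr ⟨hkey z x hz' hx' (hcase _ mx _ mz),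
            hkey w x hw' hx' (hcase _ mx _ mw),
            hkey z y hz' hy' (hcase _ my _ mz),
            hkey w y hw' hy' (hcase _ my _ mw)⟩
      -- generic keyB-based helpers
      have caseB1 : P x ≠ P y → P z ≠ P w → P x ≠ P z → P x ≠ P w → P y ≠ P z → P y ≠ P w →
          ∃ j, SepPerm (Fbig j) {v | v ∈ s(x, y)} {v | v ∈ s(z, w)} := by
        intro hexy hezw h1 h2 h3 h4
        obtain ⟨i, hi⟩ := hS1 (P x) (P y) (P z) (P w) hexy h1 h2 h3 h4 hezw
        refine ⟨Sum.inr (Sum.inl i), ?_⟩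
        show SepPerm (σB (i, false)) _ _
        apply sepPerm_pair
        rcases hi with ⟨ha, hb, hc, hd⟩ | ⟨ha, hb, hc, hd⟩
        · exact Or.inl ⟨hlt1 i false x z ha, hlt1 i false x w hb,
            hlt1 i false y z hc, hlt1 i false y w hd⟩
        · exact Or.inr ⟨hlt1 i false z x ha, hlt1 i false w x hb,
            hlt1 i false z y hc, hlt1 i false w y hd⟩
      have caseB2 : ∀ x' y' z' w' : V, P x' = P y' → P z' ≠ P w' → P x' ≠ P z' →
          P x' ≠ P w' →
          ∃ j, SepPerm (Fbig j) {v | v ∈ s(x', y')} {v | v ∈ s(z', w')} := by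
        intro x' y' z' w' hxy' hzw' h1 h2
        obtain ⟨i, hi⟩ := hS2 (P x') (P z') (P w') h1 hzw' h2
        refine ⟨Sum.inr (Sum.inl i), ?_⟩
        show SepPerm (σB (i, false)) _ _
        apply sepPerm_pair
        rcases hi with ⟨ha, hb⟩ | ⟨ha, hb⟩
        · exact Or.inl ⟨hlt1 i false x' z' ha, hlt1 i false x' w' (ha.trans hb),
            hlt1 i false y' z' (hxy' ▸ ha), hlt1 i false y' w' (hxy' ▸ (ha.trans hb))⟩
        · exact Or.inr ⟨hlt1 i false z' x' hb, hlt1 i false w' x' (ha.trans hb),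
            hlt1 i false z' y' (hxy' ▸ hb), hlt1 i false w' y' (hxy' ▸ (ha.trans hb))⟩
      have caseSh : ∀ x' y' z' w' : V, x' ≠ z' → P x' = P z' → P x' ≠ P y' → P x' ≠ P w' →
          P y' ≠ P w' →
          ∃ j, SepPerm (Fbig j) {v | v ∈ s(x', y')} {v | v ∈ s(z', w')} := by
        intro x' y' z' w' hne hPxz hPxy hPxw hPyw
        obtain ⟨i, hi⟩ := hS2 (P y') (P x') (P w') (Ne.symm hPxy) hPxw hPyw
        have hval : (w0 x').val ≠ (w0 z').val :=
          fun h => hne (w0.injective (Fin.ext h))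
        have hvx := (w0 x').isLt
        have hvz := (w0 z').isLt
        rcases hi with ⟨ha, hb⟩ | ⟨ha, hb⟩
        · -- e before f
          by_cases hd : (w0 x').val < (w0 z').val
          · refine ⟨Sum.inr (Sum.inl i), ?_⟩
            show SepPerm (σB (i, false)) _ _
            apply sepPerm_pair
            exact Or.inl ⟨hlt2 i false x' z' hPxz (by simpa using hd),
              hlt1 i false x' w' hb, hlt1 i false y' z' (hPxz ▸ ha),
              hlt1 i false y' w' (ha.trans hb)⟩
          · refine ⟨Sum.inr (Sum.inr i), ?_⟩
            show SepPerm (σB (i, true)) _ _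
            apply sepPerm_pair
            refine Or.inl ⟨hlt2 i true x' z' hPxz ?_, hlt1 i true x' w' hb,
              hlt1 i true y' z' (hPxz ▸ ha), hlt1 i true y' w' (ha.trans hb)⟩
            simp only [if_true]
            omega
        · -- f before e
          by_cases hd : (w0 z').val < (w0 x').val
          · refine ⟨Sum.inr (Sum.inl i), ?_⟩
            show SepPerm (σB (i, false)) _ _
            apply sepPerm_pair
            exact Or.inr ⟨hlt2 i false z' x' hPxz.symm (by simpa using hd),
              hlt1 i false w' x' ha, hlt1 i false z' y' (hPxz ▸ hb),
              hlt1 i false w' y' (ha.trans hb)⟩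
          · refine ⟨Sum.inr (Sum.inr i), ?_⟩
            show SepPerm (σB (i, true)) _ _
            apply sepPerm_pair
            refine Or.inr ⟨hlt2 i true z' x' hPxz.symm ?_, hlt1 i true w' x' ha,
              hlt1 i true z' y' (hPxz ▸ hb), hlt1 i true w' y' (ha.trans hb)⟩
            simp only [if_true]
            omega
      -- main case split
      by_cases hxyP : P x = P y
      · by_cases hzwP : P z = P w
        · exact caseA (P x) (P z) (Or.inl rfl) (Or.inl hxyP.symm) (Or.inr rfl)
            (Or.inr hzwP.symm)
        · by_cases h1 : P x = P z
          · exact caseA (P x) (P w) (Or.inl rfl) (Or.inl hxyP.symm) (Or.inl h1.symm)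
              (Or.inr rfl)
          · by_cases h2 : P x = P w
            · exact caseA (P x) (P z) (Or.inl rfl) (Or.inl hxyP.symm) (Or.inr rfl)
                (Or.inl h2.symm)
            · exact caseB2 x y z w hxyP hzwP h1 h2
      · by_cases hzwP : P z = P w
        · by_cases h1 : P z = P x
          · exact caseA (P x) (P y) (Or.inl rfl) (Or.inr rfl) (Or.inl h1)
              (Or.inl (hzwP.symm.trans h1))
          · by_cases h2 : P z = P y
            · exact caseA (P x) (P y) (Or.inl rfl) (Or.inr rfl) (Or.inr h2)
                (Or.inr (hzwP.symm.trans h2))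
            · obtain ⟨j, hj⟩ := caseB2 z w x y hzwP hxyP h1 h2
              exact ⟨j, sepPerm_comm hj⟩
        · by_cases s11 : P x = P z
          · by_cases s22 : P y = P w
            · exact caseA (P x) (P y) (Or.inl rfl) (Or.inr rfl) (Or.inl s11.symm)
                (Or.inr s22.symm)
            · exact caseSh x y z w hxz s11 hxyP (fun h => hzwP (s11.symm.trans h)) s22
          · by_cases s12 : P x = P w
            · by_cases s21 : P y = P z
              · exact caseA (P x) (P y) (Or.inl rfl) (Or.inr rfl) (Or.inr s21.symm)
                  (Or.inl s12.symm)
              · -- x shares with w : flip f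
                rw [Sym2.eq_swap (a := z) (b := w)]
                exact caseSh x y w z hxw s12 hxyP s11 s21
            · by_cases s21 : P y = P z
              · -- y shares with z : flip e
                rw [Sym2.eq_swap (a := x) (b := y)]
                exact caseSh y x z w hyz s21 (Ne.symm hxyP)
                  (fun h => hzwP (s21.symm.trans h)) s12
              · by_cases s22 : P y = P w
                · rw [Sym2.eq_swap (a := x) (b := y), Sym2.eq_swap (a := z) (b := w)]
                  exact caseSh y x w z hyw s22 (Ne.symm hxyP) s21 s11
                · exact caseB1 hxyP hzwP s11 s12 s21 s22
    have hle : sepDim G ≤ K := Nat.sInf_le hKmem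
    have hL0 : 0 ≤ Real.logb 2 r := Real.logb_nonneg one_lt_two (by exact_mod_cast hrpos)
    have hkreal : (k : ℝ) ≤ 6.84 * Real.logb 2 r :=
      hkdef ▸ Nat.floor_le (by positivity)
    have hcast : (sepDim G : ℝ) ≤ (K : ℝ) := Nat.cast_le.2 hle
    rw [hK] at hcast
    push_cast at hcast
    nlinarith [hcast, hkreal]
end

section
/- Let G be a graph and V₁, V₂ disjoint subsets of V(G). If for every s₁-subset S₁ ⊆ V₁ and every s₂-subset S₂ ⊆ V₂ there is an edge of G between S₁ and S₂, then π(G) ≥ min(log₂(|V₁|/s₁), log₂(|V₂|/s₂)). -/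
set_option linter.unusedSectionVars false

open Finset

section Aux

variable {V : Type*} [Fintype V] [DecidableEq V]

def low {n : ℕ} (σ : V ≃ Fin n) (S : Finset V) (t : ℕ) : Finset V :=
  S.filter (fun x => (σ x : ℕ) < t)

lemma halve_aux {n : ℕ} (σ : V ≃ Fin n) (A B : Finset V) (t : ℕ)
    (hA : A.card ≤ 2 * (low σ A t).card) (hB : 2 * (low σ B t).card < B.card) :
    ∃ A' B', A' ⊆ A ∧ B' ⊆ B ∧ A.card ≤ 2 * A'.card ∧ B.card ≤ 2 * B'.card ∧
      ∀ a ∈ A', ∀ b ∈ B', σ a < σ b := by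
  refine ⟨low σ A t, B.filter (fun x => ¬ (σ x : ℕ) < t), filter_subset _ _,
    filter_subset _ _, hA, ?_, ?_⟩
  · have := Finset.card_filter_add_card_filter_not
      (s := B) (p := fun x => (σ x : ℕ) < t)
    simp only [low] at hB
    omega
  · intro a ha b hb
    simp only [low, mem_filter] at ha hb
    rw [Fin.lt_def]
    omega

lemma low_growth {n : ℕ} (σ : V ≃ Fin n) (S : Finset V) (t : ℕ) (ht : 0 < t)
    (h1 : ¬ S.card ≤ 2 * (low σ S (t - 1)).card)
    (h2 : S.card ≤ 2 * (low σ S t).card) :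
    ∃ x ∈ S, (σ x : ℕ) = t - 1 := by
  by_contra hc
  push_neg at hc
  have : low σ S t = low σ S (t - 1) := by
    apply Finset.filter_congr
    intro x hx
    have := hc x hx
    constructor <;> intro <;> omega
  rw [this] at h2
  exact h1 h2

lemma halve {n : ℕ} (σ : V ≃ Fin n) (A B : Finset V) (hd : Disjoint A B) :
    ∃ A' B', A' ⊆ A ∧ B' ⊆ B ∧ A.card ≤ 2 * A'.card ∧ B.card ≤ 2 * B'.card ∧
      ((∀ a ∈ A', ∀ b ∈ B', σ a < σ b) ∨ (∀ a ∈ A', ∀ b ∈ B', σ b < σ a)) := by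
  rcases A.eq_empty_or_nonempty with rfl | hAne
  · exact ⟨∅, B, subset_rfl, subset_rfl, by simp, by omega, Or.inl (by simp)⟩
  rcases B.eq_empty_or_nonempty with rfl | hBne
  · exact ⟨A, ∅, subset_rfl, subset_rfl, by omega, by simp, Or.inl (by simp)⟩
  have hfull : ∀ S : Finset V, low σ S n = S := by
    intro S
    apply Finset.filter_true_of_mem
    intro x _
    exact (σ x).isLt
  have hAex : ∃ t, A.card ≤ 2 * (low σ A t).card := ⟨n, by rw [hfull]; omega⟩
  have hBex : ∃ t, B.card ≤ 2 * (low σ B t).card := ⟨n, by rw [hfull]; omega⟩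
  have hAspec : A.card ≤ 2 * (low σ A (Nat.find hAex)).card := Nat.find_spec hAex
  have hBspec : B.card ≤ 2 * (low σ B (Nat.find hBex)).card := Nat.find_spec hBex
  have htApos : 0 < Nat.find hAex := by
    by_contra h0
    push_neg at h0
    interval_cases h : Nat.find hAex
    have hz : (low σ A 0).card = 0 := by simp [low]
    have := hAne.card_pos
    omega
  have htBpos : 0 < Nat.find hBex := by
    by_contra h0
    push_neg at h0
    interval_cases h : Nat.find hBex
    have hz : (low σ B 0).card = 0 := by simp [low]
    have := hBne.card_pos
    omega
  have hne : Nat.find hAex ≠ Nat.find hBex := by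
    intro heq
    obtain ⟨a, ha, hva⟩ := low_growth σ A (Nat.find hAex) htApos
      (Nat.find_min hAex (by omega)) hAspec
    obtain ⟨b, hb, hvb⟩ := low_growth σ B (Nat.find hBex) htBpos
      (Nat.find_min hBex (by omega)) hBspec
    have : a = b := by
      apply σ.injective
      apply Fin.ext
      omega
    exact Finset.disjoint_left.mp hd ha (this ▸ hb)
  rcases lt_or_gt_of_ne hne with hlt | hlt
  · have hBlt : 2 * (low σ B (Nat.find hAex)).card < B.card := by
      have h2 : ¬ B.card ≤ 2 * (low σ B (Nat.find hAex)).card := Nat.find_min hBex hlt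
      omega
    obtain ⟨A', B', h1, h2, h3, h4, h5⟩ := halve_aux σ A B (Nat.find hAex) hAspec hBlt
    exact ⟨A', B', h1, h2, h3, h4, Or.inl h5⟩
  · have hAlt : 2 * (low σ A (Nat.find hBex)).card < A.card := by
      have h2 : ¬ A.card ≤ 2 * (low σ A (Nat.find hBex)).card := Nat.find_min hAex hlt
      omega
    obtain ⟨B', A', h1, h2, h3, h4, h5⟩ := halve_aux σ B A (Nat.find hBex) hBspec hAlt
    exact ⟨A', B', h2, h1, h4, h3, Or.inr (fun a ha b hb => h5 b hb a ha)⟩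

lemma main_ind {n : ℕ} (k : ℕ) (F : Fin k → (V ≃ Fin n)) (V₁ V₂ : Finset V)
    (hd : Disjoint V₁ V₂) :
    ∃ A B, A ⊆ V₁ ∧ B ⊆ V₂ ∧ V₁.card ≤ 2 ^ k * A.card ∧ V₂.card ≤ 2 ^ k * B.card ∧
      ∀ i, (∀ a ∈ A, ∀ b ∈ B, F i a < F i b) ∨ (∀ a ∈ A, ∀ b ∈ B, F i b < F i a) := by
  induction k with
  | zero => exact ⟨V₁, V₂, subset_rfl, subset_rfl, by simp, by simp, fun i => i.elim0⟩
  | succ k ih =>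
    obtain ⟨A, B, hA, hB, hcA, hcB, hsep⟩ := ih (fun i => F i.castSucc)
    obtain ⟨A', B', hA', hB', hcA', hcB', hsep'⟩ :=
      halve (F (Fin.last k)) A B (hd.mono hA hB)
    refine ⟨A', B', hA'.trans hA, hB'.trans hB, ?_, ?_, ?_⟩
    · calc V₁.card ≤ 2 ^ k * A.card := hcA
        _ ≤ 2 ^ k * (2 * A'.card) := Nat.mul_le_mul_left _ hcA'
        _ = 2 ^ (k + 1) * A'.card := by ring
    · calc V₂.card ≤ 2 ^ k * B.card := hcB
        _ ≤ 2 ^ k * (2 * B'.card) := Nat.mul_le_mul_left _ hcB'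
        _ = 2 ^ (k + 1) * B'.card := by ring
    · intro i
      refine Fin.lastCases ?_ ?_ i
      · exact hsep'
      · intro j
        rcases hsep j with hl | hr
        · exact Or.inl fun a ha b hb => hl a (hA' ha) b (hB' hb)
        · exact Or.inr fun a ha b hb => hr a (hA' ha) b (hB' hb)

lemma exists_first_two (a b : V) (hab : a ≠ b) :
    ∃ σ : V ≃ Fin (Fintype.card V), ∀ x, x ≠ a → x ≠ b → σ a < σ x ∧ σ b < σ x := by
  have h2 : 1 < Fintype.card V := Fintype.one_lt_card_iff_nontrivial.mpr ⟨⟨a, b, hab⟩⟩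
  set n := Fintype.card V
  let e₀ : V ≃ Fin n := Fintype.equivFin V
  let σ₁ : V ≃ Fin n := e₀.trans (Equiv.swap (e₀ a) ⟨0, by omega⟩)
  have hσ₁a : σ₁ a = ⟨0, by omega⟩ := by simp [σ₁]
  let σ₂ : V ≃ Fin n := σ₁.trans (Equiv.swap (σ₁ b) ⟨1, by omega⟩)
  have hσ₁b : σ₁ b ≠ ⟨0, by omega⟩ := by
    rw [← hσ₁a]
    exact fun hh => hab (σ₁.injective hh).symm
  have hσ₂b : σ₂ b = ⟨1, by omega⟩ := by simp [σ₂]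
  have hσ₂a : σ₂ a = ⟨0, by omega⟩ := by
    show Equiv.swap (σ₁ b) ⟨1, by omega⟩ (σ₁ a) = _
    rw [hσ₁a, Equiv.swap_apply_of_ne_of_ne (Ne.symm hσ₁b) (by simp [Fin.ext_iff])]
  refine ⟨σ₂, fun x hxa hxb => ?_⟩
  have h0 : σ₂ x ≠ σ₂ a := fun hh => hxa (σ₂.injective hh)
  have h1 : σ₂ x ≠ σ₂ b := fun hh => hxb (σ₂.injective hh)
  rw [hσ₂a] at h0
  rw [hσ₂b] at h1
  rw [hσ₂a, hσ₂b]
  rw [Fin.ne_iff_vne] at h0 h1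
  simp only [Fin.lt_def]
  simp at h0 h1 ⊢
  omega

lemma exists_suitable (G : SimpleGraph V) :
    ∃ k : ℕ, ∃ F : Fin k → (V ≃ Fin (Fintype.card V)), PWSuitable G F := by
  classical
  let g : V × V → (V ≃ Fin (Fintype.card V)) := fun p =>
    if h : p.1 = p.2 then Fintype.equivFin V
    else Classical.choose (exists_first_two p.1 p.2 h)
  refine ⟨Fintype.card (V × V), fun i => g ((Fintype.equivFin (V × V)).symm i), ?_⟩
  intro e he f hf hdisj
  induction e with
  | _ a b =>
    have hab : a ≠ b := (G.mem_edgeSet.mp he).ne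
    refine ⟨Fintype.equivFin (V × V) (a, b), ?_⟩
    simp only [Equiv.symm_apply_apply]
    have hg : g (a, b) = Classical.choose (exists_first_two a b hab) := dif_neg hab
    rw [hg]
    have hspec := Classical.choose_spec (exists_first_two a b hab)
    left
    intro u hu v hv
    have hua : u ∈ s(a, b) := hu
    have hva : v ∉ s(a, b) := fun hvm => hdisj v ⟨hvm, hv⟩
    rw [Sym2.mem_iff] at hua hva
    push_neg at hva
    rcases hua with rfl | rfl
    · exact (hspec v hva.1 hva.2).1
    · exact (hspec v hva.1 hva.2).2

lemma real_card_bound (k : ℕ) (W : Finset V) (s : ℕ)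
    (hlt : (k : ℝ) < Real.logb 2 ((W.card : ℝ) / (s : ℝ))) :
    s * 2 ^ k < W.card := by
  set x : ℝ := (W.card : ℝ) / (s : ℝ) with hx
  have hx0 : 0 ≤ x := div_nonneg (by positivity) (by positivity)
  have hxpos : 0 < x := by
    rcases eq_or_lt_of_le hx0 with heq | hpos
    · rw [← heq, Real.logb_zero] at hlt
      exact absurd hlt (Nat.cast_nonneg k).not_gt
    · exact hpos
  have hs : 0 < s := by
    by_contra hs0
    push_neg at hs0
    interval_cases s
    simp [hx] at hxpos
  have h2 : (2 : ℝ) ^ (k : ℝ) < x :=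
    (Real.lt_logb_iff_rpow_lt (by norm_num) hxpos).mp hlt
  rw [Real.rpow_natCast] at h2
  have hsR : (0 : ℝ) < (s : ℝ) := by exact_mod_cast hs
  have h3 : (2 : ℝ) ^ k * (s : ℝ) < (W.card : ℝ) := (lt_div_iff₀ hsR).mp h2
  have h4 : ((s * 2 ^ k : ℕ) : ℝ) < ((W.card : ℕ) : ℝ) := by push_cast; linarith
  exact_mod_cast h4

end Aux

/-- Bipartition lower bound: if `V₁`, `V₂` are disjoint vertex subsets such
that there is an edge between every `s₁`-subset of `V₁` and every `s₂`-subset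
of `V₂`, then `π(G) ≥ min (log₂(|V₁|/s₁)) (log₂(|V₂|/s₂))`. -/
theorem stmt14 {V : Type*} [Fintype V] [DecidableEq V] (G : SimpleGraph V)
    (V₁ V₂ : Finset V) (hd : Disjoint V₁ V₂) (s₁ s₂ : ℕ)
    (h : ∀ S₁ ⊆ V₁, S₁.card = s₁ → ∀ S₂ ⊆ V₂, S₂.card = s₂ →
      ∃ a ∈ S₁, ∃ b ∈ S₂, G.Adj a b) :
    min (Real.logb 2 ((V₁.card : ℝ) / (s₁ : ℝ)))
        (Real.logb 2 ((V₂.card : ℝ) / (s₂ : ℝ))) ≤ (sepDim G : ℝ) := by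
  by_contra hcon
  push_neg at hcon
  set k := sepDim G with hk
  have h1 := real_card_bound k V₁ s₁ (lt_of_lt_of_le hcon (min_le_left _ _))
  have h2 := real_card_bound k V₂ s₂ (lt_of_lt_of_le hcon (min_le_right _ _))
  have hne : {k' : ℕ | ∃ F : Fin k' → (V ≃ Fin (Fintype.card V)), PWSuitable G F}.Nonempty := by
    obtain ⟨k', F, hF⟩ := exists_suitable G
    exact ⟨k', F, hF⟩
  obtain ⟨F, hF⟩ := Nat.sInf_mem hne
  obtain ⟨A, B, hAsub, hBsub, hcA, hcB, hinv⟩ := main_ind k F V₁ V₂ hd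
  have hp : 0 < 2 ^ k := Nat.two_pow_pos k
  have hsA : s₁ < A.card := by
    have : 2 ^ k * s₁ < 2 ^ k * A.card := by
      calc 2 ^ k * s₁ = s₁ * 2 ^ k := by ring
        _ < V₁.card := h1
        _ ≤ 2 ^ k * A.card := hcA
    exact Nat.lt_of_mul_lt_mul_left this
  have hsB : s₂ < B.card := by
    have : 2 ^ k * s₂ < 2 ^ k * B.card := by
      calc 2 ^ k * s₂ = s₂ * 2 ^ k := by ring
        _ < V₂.card := h2
        _ ≤ 2 ^ k * B.card := hcB
    exact Nat.lt_of_mul_lt_mul_left this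
  obtain ⟨S₁, hS₁sub, hS₁card⟩ := Finset.exists_subset_card_eq hsA.le
  obtain ⟨S₂, hS₂sub, hS₂card⟩ := Finset.exists_subset_card_eq hsB.le
  obtain ⟨a, haS₁, b, hbS₂, hadj⟩ :=
    h S₁ (hS₁sub.trans hAsub) hS₁card S₂ (hS₂sub.trans hBsub) hS₂card
  have haA : a ∈ A := hS₁sub haS₁
  have hbB : b ∈ B := hS₂sub hbS₂
  have heA : s₁ ≤ (A.erase a).card := by
    rw [Finset.card_erase_of_mem haA]
    omega
  have heB : s₂ ≤ (B.erase b).card := by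
    rw [Finset.card_erase_of_mem hbB]
    omega
  obtain ⟨S₁', hS₁'sub, hS₁'card⟩ := Finset.exists_subset_card_eq heA
  obtain ⟨S₂', hS₂'sub, hS₂'card⟩ := Finset.exists_subset_card_eq heB
  obtain ⟨a', ha'S₁, b', hb'S₂, hadj'⟩ :=
    h S₁' ((hS₁'sub.trans (Finset.erase_subset _ _)).trans hAsub) hS₁'card
      S₂' ((hS₂'sub.trans (Finset.erase_subset _ _)).trans hBsub) hS₂'card
  have ha'A : a' ∈ A := (hS₁'sub.trans (Finset.erase_subset _ _)) ha'S₁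
  have hb'B : b' ∈ B := (hS₂'sub.trans (Finset.erase_subset _ _)) hb'S₂
  have haa' : a ≠ a' := fun hh => Finset.ne_of_mem_erase (hS₁'sub ha'S₁) hh.symm
  have hbb' : b ≠ b' := fun hh => Finset.ne_of_mem_erase (hS₂'sub hb'S₂) hh.symm
  have hab' : a ≠ b' := fun hh =>
    Finset.disjoint_left.mp hd (hAsub haA) (hh ▸ hBsub hb'B)
  have hba' : b ≠ a' := fun hh =>
    Finset.disjoint_left.mp hd (hAsub ha'A) ((hh.symm ▸ hBsub hbB))
  have he : s(a, b) ∈ G.edgeSet := G.mem_edgeSet.mpr hadj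
  have hf : s(a', b') ∈ G.edgeSet := G.mem_edgeSet.mpr hadj'
  have hdisj : ∀ x, ¬(x ∈ s(a, b) ∧ x ∈ s(a', b')) := by
    rintro x ⟨hx1, hx2⟩
    rw [Sym2.mem_iff] at hx1 hx2
    rcases hx1 with rfl | rfl <;> rcases hx2 with hh | hh <;> tauto
  obtain ⟨i, hsep⟩ := hF _ he _ hf hdisj
  have hmb : b ∈ {x | x ∈ s(a, b)} := by simp
  have hma : a ∈ {x | x ∈ s(a, b)} := by simp
  have hma' : a' ∈ {x | x ∈ s(a', b')} := by simp
  have hmb' : b' ∈ {x | x ∈ s(a', b')} := by simp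
  rcases hinv i with hAB | hBA
  · rcases hsep with hef | hfe
    · exact absurd (hef b hmb a' hma') (asymm (hAB a' ha'A b hbB))
    · exact absurd (hfe a hma b' hmb') (asymm (hAB a haA b' hb'B))
  · rcases hsep with hef | hfe
    · exact absurd (hef a hma b' hmb') (asymm (hBA a haA b' hb'B))
    · exact absurd (hfe b hmb a' hma') (asymm (hBA a' ha'A b hbB))
end

section
/- For the complete bipartite graph K_{m,n} with m ≤ n, π(K_{m,n}) ≥ log₂ m. -/
/-- For any four distinct elements of a fintype, there is an equiv to `Fin card`
placing `a, b` before `c, d`. -/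
lemma exists_equiv_sep {V : Type*} [Fintype V] [DecidableEq V] (a b c d : V)
    (hab : a ≠ b) (hac : a ≠ c) (had : a ≠ d) (hbc : b ≠ c) (hbd : b ≠ d) (hcd : c ≠ d) :
    ∃ σ : V ≃ Fin (Fintype.card V),
      σ a < σ c ∧ σ a < σ d ∧ σ b < σ c ∧ σ b < σ d := by
  set N := Fintype.card V with hN
  have h4 : 4 ≤ N := by
    have hcard : ({a, b, c, d} : Finset V).card = 4 := by
      rw [Finset.card_insert_of_notMem (by simp [hab, hac, had]),
        Finset.card_insert_of_notMem (by simp [hbc, hbd]),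
        Finset.card_insert_of_notMem (by simp [hcd]), Finset.card_singleton]
    calc 4 = ({a, b, c, d} : Finset V).card := hcard.symm
      _ ≤ N := Finset.card_le_univ _
  let f : V → Fin N := fun x =>
    if x = a then ⟨0, by omega⟩ else if x = b then ⟨1, by omega⟩
    else if x = c then ⟨2, by omega⟩ else ⟨3, by omega⟩
  have hαt : Fintype.card V = (Finset.univ : Finset (Fin N)).card := by
    simp [hN]
  have hfst : Finset.image f ({a, b, c, d} : Finset V) ⊆ Finset.univ := by
    simp
  have hfs : Set.InjOn f ({a, b, c, d} : Finset V) := by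
    intro x hx y hy hxy
    simp only [Finset.coe_insert, Set.mem_insert_iff, Finset.coe_singleton,
      Set.mem_singleton_iff] at hx hy
    rcases hx with rfl | rfl | rfl | rfl <;> rcases hy with rfl | rfl | rfl | rfl <;>
      simp [f, hab, hac, had, hbc, hbd, hcd, Ne.symm hab, Ne.symm hac, Ne.symm had,
        Ne.symm hbc, Ne.symm hbd, Ne.symm hcd, Fin.mk.injEq] at hxy ⊢
  obtain ⟨g, hg⟩ := Finset.exists_equiv_extend_of_card_eq hαt hfst hfs
  refine ⟨g.trans (Equiv.subtypeUnivEquiv fun x => Finset.mem_univ x), ?_, ?_, ?_, ?_⟩ <;>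
  · show ((g _ : Fin N)) < ((g _ : Fin N))
    rw [hg _ (by simp), hg _ (by simp)]
    simp [f, hab, hac, had, hbc, hbd, hcd, Ne.symm hab, Ne.symm hac, Ne.symm had,
      Ne.symm hbc, Ne.symm hbd, Ne.symm hcd, Fin.mk_lt_mk]

lemma sepSet_nonempty {V : Type*} [Fintype V] [DecidableEq V] (G : SimpleGraph V) :
    {k : ℕ | ∃ F : Fin k → (V ≃ Fin (Fintype.card V)), PWSuitable G F}.Nonempty := by
  classical
  refine ⟨Fintype.card (V ≃ Fin (Fintype.card V)),
    fun i => (Fintype.equivFin (V ≃ Fin (Fintype.card V))).symm i, ?_⟩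
  intro e he f hf hdisj
  induction e with
  | h a b =>
  induction f with
  | h c d =>
  rw [SimpleGraph.mem_edgeSet] at he hf
  have hab : a ≠ b := he.ne
  have hcd : c ≠ d := hf.ne
  have hmem : ∀ x y : V, x ∈ s(a, b) → y ∈ s(c, d) → x ≠ y := by
    intro x y hx hy hxy
    subst hxy
    exact hdisj x ⟨hx, hy⟩
  have hac : a ≠ c := hmem a c (by simp) (by simp)
  have had : a ≠ d := hmem a d (by simp) (by simp)
  have hbc : b ≠ c := hmem b c (by simp) (by simp)
  have hbd : b ≠ d := hmem b d (by simp) (by simp)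
  obtain ⟨σ, h1, h2, h3, h4⟩ := exists_equiv_sep a b c d hab hac had hbc hbd hcd
  refine ⟨Fintype.equivFin _ σ, Or.inl ?_⟩
  intro x hx y hy
  simp only [Equiv.symm_apply_apply]
  simp only [Set.mem_setOf_eq, Sym2.mem_iff] at hx hy
  rcases hx with rfl | rfl <;> rcases hy with rfl | rfl <;> assumption

/-- For the complete bipartite graph `K_{m,n}` with `m ≤ n`,
`π(K_{m,n}) ≥ log₂ m`. -/
theorem stmt15 (m n : ℕ) (h : m ≤ n) :
    Real.logb 2 m ≤ (sepDim (completeBipartiteGraph (Fin m) (Fin n)) : ℝ) := by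
  classical
  set G := completeBipartiteGraph (Fin m) (Fin n) with hG
  set k := sepDim G with hk
  rcases Nat.eq_zero_or_pos m with rfl | hm
  · simp [Real.logb]
  obtain ⟨F, hF⟩ : ∃ F : Fin k → (Fin m ⊕ Fin n ≃ Fin (Fintype.card (Fin m ⊕ Fin n))),
      PWSuitable G F := Nat.sInf_mem (sepSet_nonempty G)
  -- injective coding
  have hinj : Function.Injective
      (fun (a : Fin m) (i : Fin k) =>
        decide ((F i) (Sum.inl a) < (F i) (Sum.inr (Fin.castLE h a)))) := by
    intro a a' hEq
    by_contra hne
    set e : Sym2 (Fin m ⊕ Fin n) := s(Sum.inl a, Sum.inr (Fin.castLE h a')) with he'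
    set f : Sym2 (Fin m ⊕ Fin n) := s(Sum.inl a', Sum.inr (Fin.castLE h a)) with hf'
    have he : e ∈ G.edgeSet := by simp [he', hG, completeBipartiteGraph]
    have hf : f ∈ G.edgeSet := by simp [hf', hG, completeBipartiteGraph]
    have hdisj : ∀ x, ¬(x ∈ e ∧ x ∈ f) := by
      rintro x ⟨hx1, hx2⟩
      simp only [he', hf', Sym2.mem_iff] at hx1 hx2
      rcases hx1 with rfl | rfl <;> rcases hx2 with h' | h' <;>
        simp_all [Fin.castLE_inj, hne, Ne.symm hne]
    obtain ⟨i, hsep⟩ := hF e he f hf hdisj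
    have hm1 : Sum.inl a ∈ {x | x ∈ e} := by simp [he']
    have hm2 : Sum.inr (Fin.castLE h a') ∈ {x | x ∈ e} := by simp [he']
    have hm3 : Sum.inl a' ∈ {x | x ∈ f} := by simp [hf']
    have hm4 : Sum.inr (Fin.castLE h a) ∈ {x | x ∈ f} := by simp [hf']
    have hEqi := congrFun hEq i
    simp only [decide_eq_decide] at hEqi
    rcases hsep with hs | hs
    · have p1 : (F i) (Sum.inl a) < (F i) (Sum.inr (Fin.castLE h a)) := hs _ hm1 _ hm4
      have p2 : (F i) (Sum.inr (Fin.castLE h a')) < (F i) (Sum.inl a') := hs _ hm2 _ hm3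
      exact absurd (hEqi.mp p1) (lt_asymm p2)
    · have p1 : (F i) (Sum.inr (Fin.castLE h a)) < (F i) (Sum.inl a) := hs _ hm1 _ hm4
      have p2 : (F i) (Sum.inl a') < (F i) (Sum.inr (Fin.castLE h a')) := hs _ hm2 _ hm3
      exact absurd (hEqi.mpr p2) (lt_asymm p1)
  have hcard : m ≤ 2 ^ k := by
    have := Fintype.card_le_of_injective _ hinj
    simpa [Fintype.card_fun] using this
  calc Real.logb 2 m ≤ Real.logb 2 ((2 : ℝ) ^ k) := by
        apply Real.logb_le_logb_of_le (by norm_num) (by exact_mod_cast hm)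
        exact_mod_cast hcard
    _ = k := by
        rw [Real.logb_pow, Real.logb_self_eq_one (by norm_num : (1:ℝ) < 2)]
        ring
end
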